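/- arXiv:1009.1022 — 4 statements merged into one kernel-verified Lean document; each statement's English description precedes it below -/
import Mathlib

section
/- Let (X, 𝓘) be a Polish ideal space with 𝓘 c.c.c. and Y a Polish space. Let F : X → Set(Y) be a multifunction such that: (i) {x ∈ X : F(x) ∩ U ≠ ∅} belongs to the 𝓘-completion B̄(X) for every open U ⊆ Y; (ii) F(x) is finite and nonempty for every x ∈ X; (iii) {x ∈ X : y ∈ F(x)} ∈ 𝓘 for every y ∈ Y. Then there exists a set T ⊆ Y such that F⁻¹(T) = {x ∈ X : F(x) ∩ T ≠ ∅} is completely 𝓘-nonmeasurable. -/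
set_option linter.unusedSectionVars false

open Set MeasureTheory Cardinal Topology

namespace Stmt9

variable {X : Type} [TopologicalSpace X] [PolishSpace X] [MeasurableSpace X] [BorelSpace X]
variable {Y : Type} [TopologicalSpace Y] [PolishSpace Y] [MeasurableSpace Y] [BorelSpace Y]

/-- bundled σ-ideal hypotheses -/
structure Idl (I : Set (Set X)) : Prop where
  down : ∀ A B : Set X, A ⊆ B → B ∈ I → A ∈ I
  iunion : ∀ f : ℕ → Set X, (∀ n, f n ∈ I) → (⋃ n, f n) ∈ I
  sing : ∀ x : X, ({x} : Set X) ∈ I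
  base : ∀ A ∈ I, ∃ B : Set X, A ⊆ B ∧ MeasurableSet B ∧ B ∈ I

/-- hull-smallness: contained in a measurable member of the ideal -/
def sml (I : Set (Set X)) (A : Set X) : Prop := ∃ N, MeasurableSet N ∧ N ∈ I ∧ A ⊆ N

theorem sml_mono {I : Set (Set X)} {A A' : Set X} (h : sml I A') (hs : A ⊆ A') : sml I A := by
  obtain ⟨N, h1, h2, h3⟩ := h; exact ⟨N, h1, h2, hs.trans h3⟩

theorem Idl.sml_of_mem {I : Set (Set X)} (hI : Idl I) {A : Set X} (h : A ∈ I) : sml I A := by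
  obtain ⟨N, h1, h2, h3⟩ := hI.base A h; exact ⟨N, h2, h3, h1⟩

theorem Idl.empty_mem {I : Set (Set X)} [Nonempty X] (hI : Idl I) : (∅ : Set X) ∈ I := by
  obtain ⟨x⟩ := ‹Nonempty X›
  exact hI.down ∅ {x} (empty_subset _) (hI.sing x)

theorem Idl.sml_empty {I : Set (Set X)} [Nonempty X] (hI : Idl I) : sml I (∅ : Set X) :=
  hI.sml_of_mem hI.empty_mem

theorem Idl.sml_iUnion_nat {I : Set (Set X)} (hI : Idl I) {f : ℕ → Set X}
    (h : ∀ n, sml I (f n)) : sml I (⋃ n, f n) := by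
  choose N h1 h2 h3 using h
  exact ⟨⋃ n, N n, MeasurableSet.iUnion h1, hI.iunion N h2, iUnion_mono h3⟩

theorem Idl.sml_iUnion {I : Set (Set X)} [Nonempty X] (hI : Idl I) {ι : Type*} [Countable ι]
    {f : ι → Set X} (h : ∀ i, sml I (f i)) : sml I (⋃ i, f i) := by
  cases isEmpty_or_nonempty ι with
  | inl hemp => simp only [iUnion_of_empty]; exact hI.sml_empty
  | inr hne =>
    obtain ⟨g, hg⟩ := exists_surjective_nat ι
    have : (⋃ i, f i) = ⋃ n, f (g n) := by
      apply subset_antisymm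
      · intro x hx; obtain ⟨i, hi⟩ := mem_iUnion.1 hx
        obtain ⟨n, rfl⟩ := hg i; exact mem_iUnion.2 ⟨n, hi⟩
      · exact iUnion_mono' fun n => ⟨g n, subset_rfl⟩
    rw [this]; exact hI.sml_iUnion_nat fun n => h (g n)

theorem Idl.sml_union {I : Set (Set X)} [Nonempty X] (hI : Idl I) {A B : Set X}
    (hA : sml I A) (hB : sml I B) : sml I (A ∪ B) := by
  rw [union_eq_iUnion]; exact hI.sml_iUnion (by rintro (_|_) <;> simpa)

/-- from a countable cover mod nothing, extract a positive piece -/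
theorem pos_iUnion {I : Set (Set X)} [Nonempty X] (hI : Idl I) {ι : Type*} [Countable ι]
    {f : ι → Set X} {P : Set X} (hP : ¬ sml I P) (hc : P ⊆ ⋃ i, f i) :
    ∃ i, ¬ sml I (P ∩ f i) := by
  by_contra h
  push_neg at h
  refine hP (sml_mono (hI.sml_iUnion h) ?_)
  intro x hx
  obtain ⟨i, hi⟩ := mem_iUnion.1 (hc hx)
  exact mem_iUnion.2 ⟨i, hx, hi⟩

/-- the completion σ-algebra -/
def BB (I : Set (Set X)) : MeasurableSpace X :=
  MeasurableSpace.generateFrom ({s : Set X | MeasurableSet s} ∪ I)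

/-- every set in the completion is a measurable set modulo the ideal -/
theorem Idl.bbar_rep {I : Set (Set X)} [Nonempty X] (hI : Idl I) {A : Set X}
    (hA : MeasurableSet[BB I] A) :
    ∃ A', MeasurableSet A' ∧ sml I (A \ A') ∧ sml I (A' \ A) := by
  refine MeasurableSpace.generateFrom_induction _
    (fun s _ => ∃ A', MeasurableSet A' ∧ sml I (s \ A') ∧ sml I (A' \ s)) ?_ ?_ ?_ ?_ A hA
  · rintro t (ht | ht) -
    · exact ⟨t, ht, by simpa using hI.sml_empty, by simpa using hI.sml_empty⟩
    · refine ⟨∅, MeasurableSet.empty, ?_, by simpa using hI.sml_empty⟩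
      exact sml_mono (hI.sml_of_mem ht) diff_subset
  · exact ⟨∅, MeasurableSet.empty, by simpa using hI.sml_empty, by simpa using hI.sml_empty⟩
  · rintro s - ⟨A', h1, h2, h3⟩
    refine ⟨A'ᶜ, h1.compl, ?_, ?_⟩
    · have : sᶜ \ A'ᶜ = A' \ s := by ext x; simp [mem_diff]; tauto
      rwa [this]
    · have : A'ᶜ \ sᶜ = s \ A' := by ext x; simp [mem_diff]; tauto
      rwa [this]
  · intro f _ hf
    choose A' h1 h2 h3 using hf
    refine ⟨⋃ n, A' n, MeasurableSet.iUnion h1, ?_, ?_⟩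
    · refine sml_mono (hI.sml_iUnion_nat h2) ?_
      intro x ⟨hx1, hx2⟩
      obtain ⟨n, hn⟩ := mem_iUnion.1 hx1
      exact mem_iUnion.2 ⟨n, hn, fun h => hx2 (mem_iUnion.2 ⟨n, h⟩)⟩
    · refine sml_mono (hI.sml_iUnion_nat h3) ?_
      intro x ⟨hx1, hx2⟩
      obtain ⟨n, hn⟩ := mem_iUnion.1 hx1
      exact mem_iUnion.2 ⟨n, hn, fun h => hx2 (mem_iUnion.2 ⟨n, h⟩)⟩


/-- cardinality of the family of open sets -/
theorem card_opens_le : #{s : Set X | IsOpen s} ≤ 𝔠 := by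
  obtain ⟨b, hbc, -, hb⟩ := TopologicalSpace.exists_countable_basis X
  have hinj : Function.Injective (fun U : {s : Set X | IsOpen s} => {t : ↥b | (t : Set X) ⊆ U.1}) := by
    intro U V h
    have key : {s : Set X | s ∈ b ∧ s ⊆ U.1} = {s : Set X | s ∈ b ∧ s ⊆ V.1} := by
      ext s
      constructor
      all_goals
        have h' : {t : ↥b | (t : Set X) ⊆ U.1} = {t : ↥b | (t : Set X) ⊆ V.1} := h
      · rintro ⟨h1, h2⟩
        have h3 : (⟨s, h1⟩ : ↥b) ∈ {t : ↥b | (t : Set X) ⊆ U.1} := h2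
        rw [h'] at h3
        exact ⟨h1, h3⟩
      · rintro ⟨h1, h2⟩
        have h3 : (⟨s, h1⟩ : ↥b) ∈ {t : ↥b | (t : Set X) ⊆ V.1} := h2
        rw [← h'] at h3
        exact ⟨h1, h3⟩
    apply Subtype.ext
    rw [hb.open_eq_sUnion' U.2, hb.open_eq_sUnion' V.2]
    rw [show {s | s ∈ b ∧ s ⊆ U.1} = {s | s ∈ b ∧ s ⊆ V.1} from key]
  calc #{s : Set X | IsOpen s} ≤ #(Set ↥b) := Cardinal.mk_le_of_injective hinj
    _ = 2 ^ #↥b := Cardinal.mk_set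
    _ ≤ 2 ^ (ℵ₀ : Cardinal) := by
        apply Cardinal.power_le_power_left (by norm_num)
        exact Cardinal.mk_le_aleph0_iff.2 hbc.to_subtype
    _ = 𝔠 := rfl

/-- cardinality of the Borel σ-algebra -/
theorem card_meas_le : #{s : Set X | MeasurableSet s} ≤ 𝔠 := by
  borelize X
  exact MeasurableSpace.cardinal_measurableSet_le_continuum card_opens_le

/-- a well-order whose initial segments are small -/
theorem exists_good_wo {α : Type} (h : #α ≤ 𝔠) :
    ∃ r : α → α → Prop, WellFounded r ∧ (∀ a b : α, r a b ∨ a = b ∨ r b a) ∧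
      ∀ a : α, #{b : α // r b a} < 𝔠 := by
  obtain ⟨φ⟩ : Nonempty (α ↪ (Cardinal.ord 𝔠).ToType) := by
    rw [← Cardinal.le_def, Cardinal.mk_toType, Cardinal.card_ord]
    exact h
  refine ⟨fun a b => φ a < φ b, ?_, ?_, ?_⟩
  · exact InvImage.wf φ IsWellFounded.wf
  · intro a b
    rcases lt_trichotomy (φ a) (φ b) with h | h | h
    · exact Or.inl h
    · exact Or.inr (Or.inl (φ.injective h))
    · exact Or.inr (Or.inr h)
  · intro a
    have : Function.Injective (fun p : {b : α // φ b < φ a} => (⟨φ p.1, p.2⟩ : Iio (φ a))) := by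
      intro p q hpq
      have hpq' : (⟨φ p.1, p.2⟩ : Iio (φ a)) = ⟨φ q.1, q.2⟩ := hpq
      have h2 : φ p.1 = φ q.1 := congrArg (fun z : Iio (φ a) => z.1) hpq' 
      exact Subtype.ext (φ.injective h2)
    exact lt_of_le_of_lt (Cardinal.mk_le_of_injective this) (Cardinal.mk_Iio_ord_toType _)

/-- meets-sets for closed sets are in the completion -/
theorem mts_closed {I : Set (Set X)} (F : X → Set Y)
    (hm : ∀ U : Set Y, IsOpen U → MeasurableSet[BB I] {x : X | (F x ∩ U).Nonempty})
    (hfin : ∀ x : X, (F x).Finite)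
    {C : Set Y} (hC : IsClosed C) :
    MeasurableSet[BB I] {x : X | (F x ∩ C).Nonempty} := by
  letI := TopologicalSpace.upgradeIsCompletelyMetrizable Y
  have key : {x : X | (F x ∩ C).Nonempty}
      = ⋂ n : ℕ, {x : X | (F x ∩ Metric.thickening ((n + 1 : ℝ)⁻¹) C).Nonempty} := by
    apply subset_antisymm
    · intro x ⟨y, hy1, hy2⟩
      apply mem_iInter.2
      intro n
      exact ⟨y, hy1, Metric.self_subset_thickening (by positivity) C hy2⟩
    · intro x hx
      choose yy hy1 hy2 using fun n => mem_iInter.1 hx n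
      haveI : Finite ↥(F x) := (hfin x).to_subtype
      obtain ⟨⟨y, hyF⟩, hfib⟩ := Finite.exists_infinite_fiber (fun n => (⟨yy n, (hy1 n)⟩ : ↥(F x)))
      refine ⟨y, hyF, ?_⟩
      have hyth : ∀ n : ℕ, y ∈ Metric.thickening ((n + 1 : ℝ)⁻¹) C := by
        intro n
        obtain ⟨m, hm1, hm2⟩ := (Set.infinite_coe_iff.1 hfib).exists_gt n
        have : yy m = y := congrArg Subtype.val hm1
        rw [← this]
        refine Metric.thickening_mono ?_ C (hy2 m)
        apply inv_anti₀ (by positivity)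
        have : (n : ℝ) ≤ m := by exact_mod_cast hm2.le
        linarith
      have hycl : y ∈ closure C := by
        rw [Metric.closure_eq_iInter_thickening C]
        refine mem_iInter.2 fun δ => mem_iInter.2 fun hδ => ?_
        obtain ⟨n, hn⟩ := exists_nat_gt δ⁻¹
        refine Metric.thickening_mono ?_ C (hyth n)
        rw [inv_le_comm₀ (by positivity) hδ]
        linarith
      rwa [hC.closure_eq] at hycl
  rw [key]
  exact MeasurableSet.iInter fun n => hm _ Metric.isOpen_thickening

/-- subset-sets for open sets are in the completion -/
theorem sbs_meas {I : Set (Set X)} (F : X → Set Y)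
    (hm : ∀ U : Set Y, IsOpen U → MeasurableSet[BB I] {x : X | (F x ∩ U).Nonempty})
    (hfin : ∀ x : X, (F x).Finite)
    {V : Set Y} (hV : IsOpen V) :
    MeasurableSet[BB I] {x : X | F x ⊆ V} := by
  have key : {x : X | F x ⊆ V} = {x : X | (F x ∩ Vᶜ).Nonempty}ᶜ := by
    ext x
    simp only [mem_setOf_eq, mem_compl_iff, Set.Nonempty]
    constructor
    · rintro h ⟨y, hy1, hy2⟩
      exact hy2 (h hy1)
    · intro h y hy
      by_contra hc
      exact h ⟨y, hy, hc⟩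
  rw [key]
  exact (mts_closed F hm hfin hV.isClosed_compl).compl

/-- core frame lemma on a Polish space (single coherent topology) -/
theorem frame_core {Z : Type} [TopologicalSpace Z] [PolishSpace Z] [Nonempty Z]
    (D : ℕ → Set Z) (hD : ∀ n, IsClosed (D n)) :
    ∃ N : ℕ → ℕ → Set Z,
      (∀ k i, IsClosed (N k i)) ∧ (∀ k, (⋃ i, N k i) = Set.univ) ∧
      (∀ A : ℕ → Set Z, (∀ n, IsClosed (A n)) → (∀ n, A (n + 1) ⊆ A n) →
        (∀ n, (A n).Nonempty) → (∀ n, ∃ i, A n ⊆ N n i) → (⋂ n, A n).Nonempty) := by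
  letI := TopologicalSpace.upgradeIsCompletelyMetrizable Z
  obtain ⟨u, hu⟩ := TopologicalSpace.exists_dense_seq Z
  refine ⟨fun k i => Metric.closedBall (u i) ((1/2)^k), fun k i => Metric.isClosed_closedBall,
    ?_, ?_⟩
  · intro k
    apply eq_univ_of_forall
    intro x
    obtain ⟨i, hi⟩ := hu.exists_dist_lt x (show (0:ℝ) < (1/2)^k by positivity)
    refine mem_iUnion.2 ⟨i, ?_⟩
    simp only [Metric.mem_closedBall]
    exact hi.le
  · intro A hAcl hAdec hAne hAN
    choose p hp using hAne
    choose i hi using hAN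
    have hmono : ∀ a b : ℕ, a ≤ b → A b ⊆ A a := by
      intro a b hab
      induction hab with
      | refl => exact subset_rfl
      | step _ ih => exact (hAdec _).trans ih
    have hcau : CauchySeq p := by
      rw [Metric.cauchySeq_iff]
      intro ε hε
      obtain ⟨N, hN⟩ : ∃ N : ℕ, ((1/2 : ℝ))^N < ε / 2 :=
        exists_pow_lt_of_lt_one (by linarith) (by norm_num)
      refine ⟨N, fun a ha b hb => ?_⟩
      have h3 := hi N (hmono N a ha (hp a))
      have h4 := hi N (hmono N b hb (hp b))
      simp only [Metric.mem_closedBall] at h3 h4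
      calc dist (p a) (p b) ≤ dist (p a) (u (i N)) + dist (u (i N)) (p b) := dist_triangle _ _ _
        _ ≤ (1/2)^N + (1/2)^N := by rw [dist_comm (u (i N)) (p b)]; exact add_le_add h3 h4
        _ < ε/2 + ε/2 := by linarith
        _ = ε := by ring
    obtain ⟨x, hx⟩ := cauchySeq_tendsto_of_complete hcau
    refine ⟨x, mem_iInter.2 fun n => ?_⟩
    refine (hAcl n).mem_of_tendsto hx ?_
    exact Filter.eventually_atTop.2 ⟨n, fun j hj => hmono n j hj (hp j)⟩

/-- the frame: an abstract closedness predicate together with countable "small" covers,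
so that decreasing chains of nonempty closed controlled sets have nonempty intersection. -/
theorem frame [Nonempty X] (C : ℕ → Set X) (hC : ∀ n, MeasurableSet (C n)) :
    ∃ (Cl : Set X → Prop) (N : ℕ → ℕ → Set X),
      (∀ n, Cl (C n)) ∧ (∀ s t, Cl s → Cl t → Cl (s ∩ t)) ∧
      (∀ k i, Cl (N k i)) ∧ (∀ k, (⋃ i, N k i) = Set.univ) ∧
      (∀ A : ℕ → Set X, (∀ n, Cl (A n)) → (∀ n, A (n + 1) ⊆ A n) →
        (∀ n, (A n).Nonempty) → (∀ n, ∃ i, A n ⊆ N n i) → (⋂ n, A n).Nonempty) := by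
  choose t ht hpol hcl _ using fun n => (isClopenable_iff_measurableSet.2 (hC n) :
    PolishSpace.IsClopenable (C n))
  obtain ⟨t', ht'le, ht'top, ht'pol⟩ := PolishSpace.exists_polishSpace_forall_le t ht hpol
  have hcl' : ∀ n, IsClosed[t'] (C n) := fun n => IsClosed.mono (hcl n) (ht'le n)
  obtain ⟨N, h1, h2, h3⟩ := @frame_core X t' ht'pol ‹Nonempty X› C hcl'
  exact ⟨fun s => IsClosed[t'] s, N, hcl',
    fun s₁ s₂ hs₁ hs₂ => IsClosed.inter hs₁ hs₂, h1, h2, h3⟩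


/-- dependent choice helper -/
theorem dchoice {α : Type*} (P : ℕ → α → Prop) (R : ℕ → α → α → Prop) (a0 : α) (h0 : P 0 a0)
    (hstep : ∀ n a, P n a → ∃ b, P (n + 1) b ∧ R n a b) :
    ∃ f : ℕ → α, f 0 = a0 ∧ (∀ n, P n (f n)) ∧ ∀ n, R n (f n) (f (n + 1)) := by
  let g : ∀ n : ℕ, { a : α // P n a } := fun n =>
    Nat.rec ⟨a0, h0⟩ (fun n p => ⟨Classical.choose (hstep n p.1 p.2),
      (Classical.choose_spec (hstep n p.1 p.2)).1⟩) n
  refine ⟨fun n => (g n).1, rfl, fun n => (g n).2, fun n => ?_⟩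
  exact (Classical.choose_spec (hstep n (g n).1 (g n).2)).2

/-- existence of a support point: a point near which the value traces stay positive -/
theorem supp_one {I : Set (Set X)} [Nonempty X] (hI : Idl I) {Y' : Type} [MetricSpace Y']
    [CompleteSpace Y'] (F : X → Set Y') {u : ℕ → Y'} (hu : DenseRange u)
    {R : Set X} {V : Set Y'} (hR : ¬ sml I R)
    (hpres : ∀ x ∈ R, (F x ∩ V).Nonempty) :
    ∃ y : Y', ∀ ε : ℝ, 0 < ε → ¬ sml I {x ∈ R | (F x ∩ V ∩ Metric.ball y ε).Nonempty} := by
  classical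
  -- dependent choice producing shrinking positive traces
  have hbase : ∃ a : Y' × Set X, ¬ sml I a.2 ∧ a.2 ⊆ R ∧
      ∀ x ∈ a.2, (F x ∩ V ∩ Metric.ball a.1 ((1/2 : ℝ)^(0:ℕ))).Nonempty := by
    have hcov : R ⊆ ⋃ m : ℕ, {x ∈ R | (F x ∩ V ∩ Metric.ball (u m) ((1/2 : ℝ)^(0:ℕ))).Nonempty} := by
      intro x hx
      obtain ⟨y, hy⟩ := hpres x hx
      obtain ⟨m, hm⟩ := hu.exists_dist_lt y (show (0:ℝ) < (1/2)^(0:ℕ) by norm_num)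
      refine mem_iUnion.2 ⟨m, hx, y, hy, ?_⟩
      rw [Metric.mem_ball]
      exact hm
    obtain ⟨m, hm⟩ := pos_iUnion hI hR hcov
    refine ⟨(u m, R ∩ {x ∈ R | (F x ∩ V ∩ Metric.ball (u m) ((1/2:ℝ)^(0:ℕ))).Nonempty}), hm,
      inter_subset_left, ?_⟩
    rintro x ⟨-, -, hx⟩
    exact hx
  obtain ⟨a0, ha0⟩ := hbase
  have hstep : ∀ (n : ℕ) (a : Y' × Set X),
      (¬ sml I a.2 ∧ a.2 ⊆ R ∧ ∀ x ∈ a.2, (F x ∩ V ∩ Metric.ball a.1 ((1/2:ℝ)^n)).Nonempty) →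
      ∃ b : Y' × Set X,
        (¬ sml I b.2 ∧ b.2 ⊆ R ∧ ∀ x ∈ b.2, (F x ∩ V ∩ Metric.ball b.1 ((1/2:ℝ)^(n+1))).Nonempty)
        ∧ dist a.1 b.1 ≤ (1/2:ℝ)^n + (1/2:ℝ)^(n+1) := by
    rintro n ⟨c, S⟩ ⟨hpos, hsub, hval⟩
    have hcov : S ⊆ ⋃ m : ℕ, {x ∈ S |
        (F x ∩ V ∩ Metric.ball c ((1/2:ℝ)^n) ∩ Metric.ball (u m) ((1/2:ℝ)^(n+1))).Nonempty} := by
      intro x hx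
      obtain ⟨y, hy⟩ := hval x hx
      obtain ⟨m, hm⟩ := hu.exists_dist_lt y (show (0:ℝ) < (1/2)^(n+1) by positivity)
      refine mem_iUnion.2 ⟨m, hx, y, hy, ?_⟩
      rw [Metric.mem_ball]
      exact hm
    obtain ⟨m, hm⟩ := pos_iUnion hI hpos hcov
    have hne : (S ∩ {x ∈ S |
        (F x ∩ V ∩ Metric.ball c ((1/2:ℝ)^n) ∩ Metric.ball (u m) ((1/2:ℝ)^(n+1))).Nonempty}).Nonempty := by
      by_contra hc
      rw [not_nonempty_iff_eq_empty] at hc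
      exact hm (hc ▸ hI.sml_empty)
    obtain ⟨x₁, -, -, y₁, hy₁⟩ := hne
    refine ⟨(u m, S ∩ {x ∈ S | (F x ∩ V ∩ Metric.ball c ((1/2:ℝ)^n)
        ∩ Metric.ball (u m) ((1/2:ℝ)^(n+1))).Nonempty}), ⟨hm, inter_subset_left.trans hsub, ?_⟩, ?_⟩
    · rintro x ⟨-, -, y, hy⟩
      exact ⟨y, ⟨hy.1.1.1, hy.1.1.2⟩, hy.2⟩
    · have h1 : dist c y₁ < (1/2:ℝ)^n := by
        have := hy₁.1.2
        rwa [Metric.mem_ball, dist_comm] at this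
      have h2 : dist y₁ (u m) < (1/2:ℝ)^(n+1) := hy₁.2
      calc dist c (u m) ≤ dist c y₁ + dist y₁ (u m) := dist_triangle _ _ _
        _ ≤ (1/2:ℝ)^n + (1/2:ℝ)^(n+1) := by linarith
  obtain ⟨f, hf0, hfP, hfR⟩ := dchoice
    (fun n (a : Y' × Set X) => ¬ sml I a.2 ∧ a.2 ⊆ R ∧
      ∀ x ∈ a.2, (F x ∩ V ∩ Metric.ball a.1 ((1/2:ℝ)^n)).Nonempty)
    (fun n a b => dist a.1 b.1 ≤ (1/2:ℝ)^n + (1/2:ℝ)^(n+1)) a0 ha0 hstep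
  -- the centers converge
  have hcau : CauchySeq (fun n => (f n).1) := by
    apply cauchySeq_of_le_geometric (r := (1/2 : ℝ)) (C := 3/2) (by norm_num)
    intro n
    calc dist (f n).1 (f (n+1)).1 ≤ (1/2:ℝ)^n + (1/2:ℝ)^(n+1) := hfR n
      _ = 3/2 * (1/2:ℝ)^n := by ring
  obtain ⟨y, hy⟩ := cauchySeq_tendsto_of_complete hcau
  refine ⟨y, fun ε hε => ?_⟩
  obtain ⟨N₁, hN₁⟩ := Metric.tendsto_atTop.1 hy (ε/2) (by linarith)
  obtain ⟨N₂, hN₂⟩ : ∃ N : ℕ, ((1/2 : ℝ))^N < ε / 2 :=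
    exists_pow_lt_of_lt_one (by linarith) (by norm_num)
  set n := max N₁ N₂
  have hd : dist (f n).1 y < ε/2 := hN₁ n (le_max_left _ _)
  have hr : ((1/2:ℝ))^n ≤ (1/2:ℝ)^N₂ :=
    pow_le_pow_of_le_one (by norm_num) (by norm_num) (le_max_right _ _)
  intro hsml
  apply (hfP n).1
  refine sml_mono hsml ?_
  intro x hx
  obtain ⟨y', hy'1, hy'2⟩ := (hfP n).2.2 x hx
  refine ⟨(hfP n).2.1 hx, y', hy'1, ?_⟩
  rw [Metric.mem_ball] at hy'2 ⊢
  have ht := dist_triangle y' (f n).1 y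
  have h5 := hr.trans_lt hN₂
  linarith

/-- two distinct support points -/
theorem supp_two {I : Set (Set X)} [Nonempty X] (hI : Idl I) {Y' : Type} [MetricSpace Y']
    [CompleteSpace Y'] (F : X → Set Y') {u : ℕ → Y'} (hu : DenseRange u)
    (hfib : ∀ y : Y', {x : X | y ∈ F x} ∈ I)
    {R : Set X} {V : Set Y'} (hR : ¬ sml I R)
    (hpres : ∀ x ∈ R, (F x ∩ V).Nonempty) :
    ∃ y₀ y₁ : Y', y₀ ≠ y₁ ∧
      (∀ ε : ℝ, 0 < ε → ¬ sml I {x ∈ R | (F x ∩ V ∩ Metric.ball y₀ ε).Nonempty}) ∧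
      (∀ ε : ℝ, 0 < ε → ¬ sml I {x ∈ R | (F x ∩ V ∩ Metric.ball y₁ ε).Nonempty}) := by
  classical
  obtain ⟨y₀, hy₀⟩ := supp_one hI F hu hR hpres
  by_cases hfar : ∃ q : ℕ, ¬ sml I {x ∈ R | (F x ∩ (V \ Metric.ball y₀ ((q+1:ℝ)⁻¹))).Nonempty}
  · obtain ⟨q, hq⟩ := hfar
    set Rf := {x ∈ R | (F x ∩ (V \ Metric.ball y₀ ((q+1:ℝ)⁻¹))).Nonempty} with hRfdef
    have hpres' : ∀ x ∈ Rf, (F x ∩ (V \ Metric.ball y₀ ((q+1:ℝ)⁻¹))).Nonempty := fun x hx => hx.2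
    obtain ⟨y₁, hy₁⟩ := supp_one hI F hu hq hpres'
    have htr : ∀ ε : ℝ, 0 < ε → ¬ sml I {x ∈ R | (F x ∩ V ∩ Metric.ball y₁ ε).Nonempty} := by
      intro ε hε hsml
      apply hy₁ ε hε
      refine sml_mono hsml ?_
      rintro x ⟨hx1, y, hy1, hy2⟩
      exact ⟨hx1.1, y, ⟨hy1.1, hy1.2.1⟩, hy2⟩
    have hne : y₀ ≠ y₁ := by
      have hq2 : (0:ℝ) < (q+1:ℝ)⁻¹ / 2 := by positivity
      have h := hy₁ _ hq2
      have hnon : {x ∈ Rf | (F x ∩ (V \ Metric.ball y₀ ((q+1:ℝ)⁻¹)) ∩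
          Metric.ball y₁ ((q+1:ℝ)⁻¹/2)).Nonempty}.Nonempty := by
        by_contra hc
        rw [not_nonempty_iff_eq_empty] at hc
        exact h (hc ▸ hI.sml_empty)
      obtain ⟨x, -, y, hy1, hy2⟩ := hnon
      intro hcon
      rw [Metric.mem_ball] at hy2
      have h1 : ¬ dist y y₀ < (q+1:ℝ)⁻¹ := by
        intro hcon2
        exact hy1.2.2 (Metric.mem_ball.2 hcon2)
      rw [← hcon] at hy2
      push_neg at h1
      linarith [hy2, h1]
    exact ⟨y₀, y₁, hne, hy₀, htr⟩
  · exfalso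
    push_neg at hfar
    apply hR
    have hcov : R ⊆ {x : X | y₀ ∈ F x} ∪
        ⋃ q : ℕ, {x ∈ R | (F x ∩ (V \ Metric.ball y₀ ((q+1:ℝ)⁻¹))).Nonempty} := by
      intro x hx
      by_cases hmem : ∃ q : ℕ, (F x ∩ (V \ Metric.ball y₀ ((q+1:ℝ)⁻¹))).Nonempty
      · obtain ⟨q, hq⟩ := hmem
        exact Or.inr (mem_iUnion.2 ⟨q, hx, hq⟩)
      · have hmem' : ∀ q : ℕ, ¬ (F x ∩ (V \ Metric.ball y₀ ((q+1:ℝ)⁻¹))).Nonempty :=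
          fun q hq => hmem ⟨q, hq⟩
        obtain ⟨y, hy1, hy2⟩ := hpres x hx
        left
        have hyy : y = y₀ := by
          by_contra hne
          have hd : 0 < dist y y₀ := dist_pos.2 hne
          obtain ⟨q, hq⟩ := exists_nat_gt (dist y y₀)⁻¹
          refine hmem' q ⟨y, hy1, hy2, ?_⟩
          rw [Metric.mem_ball]
          push_neg
          rw [← inv_inv (dist y y₀)]
          apply inv_anti₀ (by positivity)
          linarith
        rw [← hyy]
        exact hy1
    refine sml_mono (hI.sml_union (hI.sml_of_mem (hfib y₀)) (hI.sml_iUnion hfar)) hcov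

/-- binary tree choice helper -/
theorem tchoice {α : Type*} (P : ℕ → α → Prop) (C : ℕ → α → α → α → Prop) (a0 : α) (h0 : P 0 a0)
    (hstep : ∀ n a, P n a → ∃ p : α × α, P (n + 1) p.1 ∧ P (n + 1) p.2 ∧ C n a p.1 p.2) :
    ∃ f : List Bool → α, f [] = a0 ∧ (∀ s, P s.length (f s)) ∧
      ∀ s : List Bool, C s.length (f s) (f (false :: s)) (f (true :: s)) := by
  classical
  let g : (s : List Bool) → {a : α // P s.length a} :=
    List.rec ⟨a0, h0⟩ (fun bit s ih =>
      if bit then ⟨(Classical.choose (hstep s.length ih.1 ih.2)).2,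
          (Classical.choose_spec (hstep s.length ih.1 ih.2)).2.1⟩
        else ⟨(Classical.choose (hstep s.length ih.1 ih.2)).1,
          (Classical.choose_spec (hstep s.length ih.1 ih.2)).1⟩)
  have hgf : ∀ s : List Bool, g (false :: s) =
      ⟨(Classical.choose (hstep s.length (g s).1 (g s).2)).1,
        (Classical.choose_spec (hstep s.length (g s).1 (g s).2)).1⟩ := fun s => rfl
  have hgt : ∀ s : List Bool, g (true :: s) =
      ⟨(Classical.choose (hstep s.length (g s).1 (g s).2)).2,
        (Classical.choose_spec (hstep s.length (g s).1 (g s).2)).2.1⟩ := fun s => rfl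
  refine ⟨fun s => (g s).1, rfl, fun s => (g s).2, fun s => ?_⟩
  have h1 : (g (false :: s)).1 = (Classical.choose (hstep s.length (g s).1 (g s).2)).1 :=
    Subtype.ext_iff.1 (hgf s)
  have h2 : (g (true :: s)).1 = (Classical.choose (hstep s.length (g s).1 (g s).2)).2 :=
    Subtype.ext_iff.1 (hgt s)
  show C s.length (g s).1 (g (false :: s)).1 (g (true :: s)).1
  rw [h1, h2]
  exact (Classical.choose_spec (hstep s.length (g s).1 (g s).2)).2.2

/-- THE CORE LEMMA: in a positive measurable set, there is a point whose (finite) value set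
avoids any given set of size less than continuum. -/
theorem FL {I : Set (Set X)} [Nonempty X] [Nonempty Y] (hI : Idl I)
    (F : X → Set Y)
    (hmeas : ∀ U : Set Y, IsOpen U → MeasurableSet[BB I] {x : X | (F x ∩ U).Nonempty})
    (hfin : ∀ x : X, (F x).Finite ∧ (F x).Nonempty)
    (hfib : ∀ y : Y, {x : X | y ∈ F x} ∈ I)
    {B : Set X} (hBm : MeasurableSet B) (hB : ¬ sml I B)
    {R : Set Y} (hR : #R < 𝔠) :
    ∃ x ∈ B, ∀ y ∈ F x, y ∉ R := by
  classical
  letI := TopologicalSpace.upgradeIsCompletelyMetrizable Y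
  obtain ⟨u, hu⟩ := TopologicalSpace.exists_dense_seq Y
  have hposne : ∀ S : Set X, ¬ sml I S → S.Nonempty := by
    intro S h
    by_contra hc
    rw [not_nonempty_iff_eq_empty] at hc
    exact h (hc ▸ hI.sml_empty)
  -- rational balls
  set bll : ℕ × ℚ → Set Y := fun p => Metric.ball (u p.1) (p.2 : ℝ) with hbll
  set ibl : List (ℕ × ℚ) → Set Y := fun l => l.foldr (fun p s => bll p ∩ s) Set.univ with hiblD
  have ibl_cons : ∀ p l, ibl (p :: l) = bll p ∩ ibl l := fun p l => rfl
  have ibl_open : ∀ l, IsOpen (ibl l) := by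
    intro l
    induction l with
    | nil => exact isOpen_univ
    | cons p l ih => exact Metric.isOpen_ball.inter ih
  -- localization: every point has a pattern
  have hloc : ∀ x : X, ∃ τ : List (ℕ × ℚ), (F x ⊆ ⋃ p ∈ τ, bll p) ∧
      ∀ p ∈ τ, (F x ∩ bll p).Subsingleton := by
    intro x
    have hcode : ∀ y ∈ F x, ∃ p : ℕ × ℚ, y ∈ bll p ∧ ∀ y' ∈ F x, y' ∈ bll p → y' = y := by
      intro y hy
      have hsep : ∃ d : ℝ, 0 < d ∧ ∀ y' ∈ F x, y' ≠ y → d ≤ dist y y' := by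
        by_cases hone : ({y' ∈ F x | y' ≠ y}).Nonempty
        · haveI hfin2 : Finite ↥{y' ∈ F x | y' ≠ y} :=
            ((hfin x).1.subset (sep_subset _ _)).to_subtype
          haveI hne2 : Nonempty ↥{y' ∈ F x | y' ≠ y} := hone.to_subtype
          obtain ⟨⟨y₀, hy₀⟩, hmin⟩ :=
            Finite.exists_min (fun y' : ↥{y' ∈ F x | y' ≠ y} => dist y y'.1)
          exact ⟨dist y y₀, dist_pos.2 (fun h => hy₀.2 h.symm), fun y' h1 h2 => hmin ⟨y', h1, h2⟩⟩
        · exact ⟨1, one_pos, fun y' h1 h2 => absurd ⟨h1, h2⟩ (fun hh => hone ⟨y', hh⟩)⟩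
      obtain ⟨d, hd, hdmin⟩ := hsep
      obtain ⟨m, hm⟩ := hu.exists_dist_lt y (show (0:ℝ) < d/8 by linarith)
      obtain ⟨q, hq1, hq2⟩ := exists_rat_btwn hm
      refine ⟨(m, q), Metric.mem_ball.2 hq1, ?_⟩
      intro y' h1 h2
      by_contra hne
      have h3 : d ≤ dist y y' := hdmin y' h1 hne
      have h2' : dist y' (u m) < (q : ℝ) := Metric.mem_ball.1 h2
      have h4 : dist y y' ≤ dist y (u m) + dist (u m) y' := dist_triangle _ _ _
      rw [dist_comm (u m) y'] at h4
      have hq3 : (q : ℝ) < d/8 := hq2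
      linarith
    choose! pc hpc1 hpc2 using hcode
    refine ⟨((hfin x).1.toFinset.toList).map pc, ?_, ?_⟩
    · intro y hy
      have hyl : y ∈ (hfin x).1.toFinset.toList := by
        rw [Finset.mem_toList, Set.Finite.mem_toFinset]
        exact hy
      exact mem_iUnion₂.2 ⟨pc y, List.mem_map_of_mem (f := pc) hyl, hpc1 y hy⟩
    · intro p hp
      obtain ⟨y₀, hy₀l, rfl⟩ := List.mem_map.1 hp
      have hy₀ : y₀ ∈ F x := by
        rw [Finset.mem_toList, Set.Finite.mem_toFinset] at hy₀l
        exact hy₀l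
      intro a ha b hb
      rw [hpc2 y₀ hy₀ a ha.1 ha.2, hpc2 y₀ hy₀ b hb.1 hb.2]
  -- choose the pattern
  have hcov : B ⊆ ⋃ τ : List (ℕ × ℚ), {x | (F x ⊆ ⋃ p ∈ τ, bll p) ∧
      ∀ p ∈ τ, (F x ∩ bll p).Subsingleton} := by
    intro x _
    obtain ⟨τ, hτ⟩ := hloc x
    exact mem_iUnion.2 ⟨τ, hτ⟩
  obtain ⟨τ, hτpos⟩ := pos_iUnion hI hB hcov
  set P1 : Set X := B ∩ {x | (F x ⊆ ⋃ p ∈ τ, bll p) ∧ ∀ p ∈ τ, (F x ∩ bll p).Subsingleton}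
    with hP1def
  set k := τ.length with hkdef
  -- codes and their unions
  set obl : Option (List (ℕ × ℚ)) → Set Y := fun o => o.elim ∅ ibl with hoblD
  have obl_none : obl none = ∅ := rfl
  have obl_some : ∀ l, obl (some l) = ibl l := fun l => rfl
  set usk : (Fin k → Option (List (ℕ × ℚ))) → Set Y := fun L => ⋃ j, obl (L j) with huskD
  have husk_open : ∀ L, IsOpen (usk L) := by
    intro L
    apply isOpen_iUnion
    intro j
    cases hL : L j with
    | none => exact isOpen_empty
    | some l => exact ibl_open l
  -- Borel versions
  have hSmeas : ∀ L, MeasurableSet[BB I] {x | F x ⊆ usk L} :=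
    fun L => sbs_meas F hmeas (fun x => (hfin x).1) (husk_open L)
  choose Ver hVm hVs1 hVs2 using fun L => hI.bbar_rep (hSmeas L)
  obtain ⟨Nstar, hNm, hNI, hNsub⟩ := hI.sml_iUnion
    (f := fun L => ({x | F x ⊆ usk L} \ Ver L) ∪ (Ver L \ {x | F x ⊆ usk L}))
    (fun L => hI.sml_union (hVs1 L) (hVs2 L))
  set Xd : Set X := Nstarᶜ with hXdD
  have hXdm : MeasurableSet Xd := hNm.compl
  have hVerTrue : ∀ L, ∀ x ∈ Xd, (x ∈ Ver L ↔ F x ⊆ usk L) := by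
    intro L x hx
    constructor
    · intro hv
      by_contra hc
      exact hx (hNsub (mem_iUnion.2 ⟨L, Or.inr ⟨hv, hc⟩⟩))
    · intro hs
      by_contra hc
      exact hx (hNsub (mem_iUnion.2 ⟨L, Or.inl ⟨hs, hc⟩⟩))
  -- the frame
  obtain ⟨dec, hdec⟩ := exists_surjective_nat (Fin k → Option (List (ℕ × ℚ)))
  set fam : ℕ → Set X := fun n => if n = 0 then B else if n = 1 then Xd else Ver (dec (n - 2))
    with hfamD
  have hfam : ∀ n, MeasurableSet (fam n) := by
    intro n
    simp only [hfamD]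
    split
    · exact hBm
    · split
      · exact hXdm
      · exact hVm _
  obtain ⟨Cl, NN, hClfam, hClint, hClN, hNcov, hlim⟩ := frame fam hfam
  have hClB : Cl B := by have := hClfam 0; simpa [hfamD] using this
  have hClXd : Cl Xd := by have := hClfam 1; simpa [hfamD] using this
  have hClVer : ∀ L, Cl (Ver L) := by
    intro L
    obtain ⟨n, hn⟩ := hdec L
    have := hClfam (n + 2)
    simpa [hfamD, hn] using this
  -- the root node
  set L0 : Fin k → Option (List (ℕ × ℚ)) := fun j => some [τ.get j] with hL0D
  have hroot7 : ∀ x ∈ P1, F x ⊆ usk L0 := by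
    intro x hx y hy
    obtain ⟨p, hp1, hp2⟩ := mem_iUnion₂.1 (hx.2.1 hy)
    obtain ⟨j, hj⟩ := List.mem_iff_get.1 hp1
    refine mem_iUnion.2 ⟨j, ?_⟩
    show y ∈ bll (τ.get j) ∩ Set.univ
    rw [hj]
    exact ⟨hp2, trivial⟩
  -- positivity of P1 ∩ Xd and net choice
  have hP1Xdpos : ¬ sml I (P1 ∩ Xd) := by
    intro hc
    apply hτpos
    have : P1 ⊆ (P1 ∩ Xd) ∪ Nstar := by
      intro x hx
      by_cases hm : x ∈ Nstar
      · exact Or.inr hm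
      · exact Or.inl ⟨hx, hm⟩
    exact sml_mono (hI.sml_union hc ⟨Nstar, hNm, hNI, subset_rfl⟩) this
  have hcovN0 : (P1 ∩ Xd) ⊆ ⋃ i, NN 0 i := by
    rw [hNcov 0]
    exact subset_univ _
  obtain ⟨i0, hi0⟩ := pos_iUnion hI hP1Xdpos hcovN0
  -- node data and invariants
  set Inv : ℕ → (Set X × (Fin k → Option (List (ℕ × ℚ))) × Set X) → Prop := fun n d =>
    (¬ sml I d.1) ∧ d.1 ⊆ d.2.2 ∧ Cl d.2.2 ∧ d.2.2 ⊆ B ∧ d.2.2 ⊆ Xd ∧ d.2.2 ⊆ Ver d.2.1 ∧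
    (∃ i, d.2.2 ⊆ NN n i) ∧ (∀ x ∈ d.1, F x ⊆ usk d.2.1) ∧
    (∀ x ∈ d.1, ∀ (j : Fin k) (l : List (ℕ × ℚ)), d.2.1 j = some l →
      (F x ∩ ibl l).Subsingleton) with hInvD
  set Crel : ℕ → (Set X × (Fin k → Option (List (ℕ × ℚ))) × Set X) →
      (Set X × (Fin k → Option (List (ℕ × ℚ))) × Set X) →
      (Set X × (Fin k → Option (List (ℕ × ℚ))) × Set X) → Prop := fun _ d d₀ d₁ =>
    (d₀.2.2 ⊆ d.2.2 ∧ d₁.2.2 ⊆ d.2.2) ∧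
    (∀ j, obl (d₀.2.1 j) ⊆ obl (d.2.1 j) ∧ obl (d₁.2.1 j) ⊆ obl (d.2.1 j)) ∧
    (∀ j, obl (d₀.2.1 j) ∩ obl (d₁.2.1 j) = ∅) with hCrelD
  set droot : Set X × (Fin k → Option (List (ℕ × ℚ))) × Set X :=
    ((P1 ∩ Xd) ∩ NN 0 i0, L0, (B ∩ Xd ∩ Ver L0) ∩ NN 0 i0) with hdrootD
  have hInv0 : Inv 0 droot := by
    refine ⟨hi0, ?_, ?_, ?_, ?_, ?_, ⟨i0, ?_⟩, ?_, ?_⟩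
    · rintro x ⟨⟨hx1, hx2⟩, hx3⟩
      refine ⟨⟨⟨hx1.1, hx2⟩, ?_⟩, hx3⟩
      exact (hVerTrue L0 x hx2).2 (hroot7 x hx1)
    · exact hClint _ _ (hClint _ _ (hClint _ _ hClB hClXd) (hClVer L0)) (hClN 0 i0)
    · rintro x ⟨⟨⟨hx1, -⟩, -⟩, -⟩; exact hx1
    · rintro x ⟨⟨⟨-, hx2⟩, -⟩, -⟩; exact hx2
    · rintro x ⟨⟨-, hx3⟩, -⟩; exact hx3
    · rintro x ⟨-, hx4⟩; exact hx4
    · rintro x ⟨⟨hx1, -⟩, -⟩; exact hroot7 x hx1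
    · rintro x ⟨⟨hx1, -⟩, -⟩ j l hl
      have hl' : some [τ.get j] = some l := hl
      have hll : l = [τ.get j] := (Option.some_injective _ hl').symm
      subst hll
      have hss := hx1.2.2 (τ.get j) (List.get_mem τ j)
      intro a ha b hb
      have ha' : a ∈ F x ∩ (bll (τ.get j) ∩ Set.univ) := ha
      have hb' : b ∈ F x ∩ (bll (τ.get j) ∩ Set.univ) := hb
      exact hss ⟨ha'.1, ha'.2.1⟩ ⟨hb'.1, hb'.2.1⟩
  -- the inductive step
  have hstep : ∀ n d, Inv n d → ∃ p : (Set X × (Fin k → Option (List (ℕ × ℚ))) × Set X) ×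
      (Set X × (Fin k → Option (List (ℕ × ℚ))) × Set X),
      Inv (n + 1) p.1 ∧ Inv (n + 1) p.2 ∧ Crel n d p.1 p.2 := by
    rintro n ⟨P, L, K⟩ ⟨h1, h2, h3, h4, h5, h6, h7, h8, h9⟩
    have loop : ∀ m : ℕ, m ≤ k → ∃ Q₀ Q₁ : Set X, ∃ L₀ L₁ : Fin k → Option (List (ℕ × ℚ)),
        (¬ sml I Q₀) ∧ (¬ sml I Q₁) ∧ Q₀ ⊆ P ∧ Q₁ ⊆ P ∧
        (∀ j : Fin k, m ≤ (j : ℕ) → L₀ j = L j ∧ L₁ j = L j) ∧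
        (∀ j : Fin k, (j : ℕ) < m → obl (L₀ j) ∩ obl (L₁ j) = ∅) ∧
        (∀ j : Fin k, obl (L₀ j) ⊆ obl (L j) ∧ obl (L₁ j) ⊆ obl (L j)) ∧
        (∀ x ∈ Q₀, F x ⊆ usk L₀) ∧ (∀ x ∈ Q₁, F x ⊆ usk L₁) ∧
        (∀ x ∈ Q₀, ∀ (j : Fin k) (l : List (ℕ × ℚ)), L₀ j = some l →
          (F x ∩ ibl l).Subsingleton) ∧
        (∀ x ∈ Q₁, ∀ (j : Fin k) (l : List (ℕ × ℚ)), L₁ j = some l →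
          (F x ∩ ibl l).Subsingleton) := by
      intro m
      induction m with
      | zero =>
        intro _
        exact ⟨P, P, L, L, h1, h1, subset_rfl, subset_rfl, fun j _ => ⟨rfl, rfl⟩,
          fun j hj => absurd hj (Nat.not_lt_zero _), fun j => ⟨subset_rfl, subset_rfl⟩,
          h8, h8, h9, h9⟩
      | succ m ih =>
        intro hm1
        obtain ⟨Q₀, Q₁, L₀, L₁, g1, g2, g3, g4, g5, g6, g7, g8, g9, g10, g11⟩ :=
          ih (Nat.le_of_succ_le hm1)
        set j₀ : Fin k := ⟨m, hm1⟩ with hj₀D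
        have hut : L₀ j₀ = L j₀ ∧ L₁ j₀ = L j₀ := g5 j₀ (le_refl m)
        -- helper: kill the coordinate j₀ on one side
        have hdie : ∀ (Q : Set X) (LL : Fin k → Option (List (ℕ × ℚ))) (l : List (ℕ × ℚ)),
            (¬ sml I Q) → LL j₀ = some l → (∀ x ∈ Q, F x ⊆ usk LL) →
            sml I {x ∈ Q | (F x ∩ ibl l).Nonempty} →
            (¬ sml I {x ∈ Q | ¬ (F x ∩ ibl l).Nonempty}) ∧
            (∀ x ∈ {x ∈ Q | ¬ (F x ∩ ibl l).Nonempty},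
              F x ⊆ usk (Function.update LL j₀ none)) := by
          intro Q LL l hQ hLL hval hPR
          constructor
          · intro hc
            apply hQ
            refine sml_mono (hI.sml_union hPR hc) ?_
            intro x hx
            by_cases hh : (F x ∩ ibl l).Nonempty
            · exact Or.inl ⟨hx, hh⟩
            · exact Or.inr ⟨hx, hh⟩
          · rintro x ⟨hxQ, hxab⟩ y hy
            obtain ⟨j, hj⟩ := mem_iUnion.1 (hval x hxQ hy)
            by_cases hjj : j = j₀
            · subst hjj
              rw [hLL] at hj
              have hj' : y ∈ ibl l := hj
              exact absurd ⟨hy, hj'⟩ (fun hc => hxab ⟨y, hc⟩)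
            · refine mem_iUnion.2 ⟨j, ?_⟩
              rw [Function.update_of_ne hjj]
              exact hj
        -- helper: shrink the coordinate j₀ on one side
        have hshr : ∀ (Q : Set X) (LL : Fin k → Option (List (ℕ × ℚ))) (l : List (ℕ × ℚ))
            (p : ℕ × ℚ) (z : Y) (ε : ℝ), 0 < ε → Metric.ball z ε ⊆ bll p →
            LL j₀ = some l → (∀ x ∈ Q, F x ⊆ usk LL) →
            (∀ x ∈ Q, ∀ (j : Fin k) (ll : List (ℕ × ℚ)), LL j = some ll →
              (F x ∩ ibl ll).Subsingleton) →
            (¬ sml I {x ∈ {x ∈ Q | (F x ∩ ibl l).Nonempty} |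
              (F x ∩ ibl l ∩ Metric.ball z ε).Nonempty}) →
            (¬ sml I {x ∈ Q | (F x ∩ ibl l ∩ bll p).Nonempty}) ∧
            (∀ x ∈ {x ∈ Q | (F x ∩ ibl l ∩ bll p).Nonempty},
              F x ⊆ usk (Function.update LL j₀ (some (p :: l)))) ∧
            (∀ x ∈ {x ∈ Q | (F x ∩ ibl l ∩ bll p).Nonempty}, ∀ (j : Fin k) (ll : List (ℕ × ℚ)),
              Function.update LL j₀ (some (p :: l)) j = some ll →
              (F x ∩ ibl ll).Subsingleton) := by
          intro Q LL l p z ε hε hzp hLL hval hss htr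
          refine ⟨?_, ?_, ?_⟩
          · intro hc
            apply htr
            refine sml_mono hc ?_
            rintro x ⟨⟨hxQ, -⟩, w, hw1, hw2⟩
            exact ⟨hxQ, w, ⟨hw1.1, hw1.2⟩, hzp hw2⟩
          · rintro x ⟨hxQ, w, hw1, hw2⟩ y hy
            obtain ⟨j, hj⟩ := mem_iUnion.1 (hval x hxQ hy)
            by_cases hjj : j = j₀
            · subst hjj
              rw [hLL] at hj
              have hj' : y ∈ ibl l := hj
              have hyw : y = w := by
                have hssx := hss x hxQ j₀ l hLL
                exact hssx ⟨hy, hj'⟩ ⟨hw1.1, hw1.2⟩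
              refine mem_iUnion.2 ⟨j₀, ?_⟩
              rw [Function.update_self]
              show y ∈ ibl (p :: l)
              rw [ibl_cons]
              exact ⟨hyw ▸ hw2, hj'⟩
            · refine mem_iUnion.2 ⟨j, ?_⟩
              rw [Function.update_of_ne hjj]
              exact hj
          · rintro x ⟨hxQ, -⟩ j ll hll
            by_cases hjj : j = j₀
            · subst hjj
              rw [Function.update_self] at hll
              have hll' : ll = p :: l := (Option.some_injective _ hll).symm
              subst hll'
              have hssx := hss x hxQ j₀ l hLL
              intro a ha b hb
              rw [ibl_cons] at ha hb
              exact hssx ⟨ha.1, ha.2.2⟩ ⟨hb.1, hb.2.2⟩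
            · rw [Function.update_of_ne hjj] at hll
              exact hss x hxQ j ll hll
        cases hLj : L j₀ with
        | none =>
          refine ⟨Q₀, Q₁, L₀, L₁, g1, g2, g3, g4, ?_, ?_, g7, g8, g9, g10, g11⟩
          · intro j hj
            exact g5 j (Nat.le_of_succ_le hj)
          · intro j hj
            rcases Nat.lt_succ_iff_lt_or_eq.1 hj with h | h
            · exact g6 j h
            · have hjj : j = j₀ := Fin.ext h
              subst hjj
              rw [hut.1, hut.2, hLj]
              simp [obl_none]
        | some l =>
          have e₀ : L₀ j₀ = some l := by rw [hut.1, hLj]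
          have e₁ : L₁ j₀ = some l := by rw [hut.2, hLj]
          -- common post-processing facts for updated lists
          have hutS : ∀ (LL LL' : Fin k → Option (List (ℕ × ℚ))) (o o' : Option (List (ℕ × ℚ))),
              (∀ j : Fin k, m ≤ (j : ℕ) → LL j = L j ∧ LL' j = L j) →
              (∀ j : Fin k, m + 1 ≤ (j : ℕ) →
                Function.update LL j₀ o j = L j ∧ Function.update LL' j₀ o' j = L j) := by
            intro LL LL' o o' hg j hj
            have hne : j ≠ j₀ := by
              intro hc
              subst hc
              have hvm : (j₀ : ℕ) = m := rfl
              rw [hvm] at hj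
              omega
            rw [Function.update_of_ne hne, Function.update_of_ne hne]
            exact hg j (Nat.le_of_succ_le hj)
          by_cases hp₀ : sml I {x ∈ Q₀ | (F x ∩ ibl l).Nonempty}
          · by_cases hp₁ : sml I {x ∈ Q₁ | (F x ∩ ibl l).Nonempty}
            · -- both die
              obtain ⟨hA₀, hV₀⟩ := hdie Q₀ L₀ l g1 e₀ g8 hp₀
              obtain ⟨hA₁, hV₁⟩ := hdie Q₁ L₁ l g2 e₁ g9 hp₁
              refine ⟨{x ∈ Q₀ | ¬ (F x ∩ ibl l).Nonempty}, {x ∈ Q₁ | ¬ (F x ∩ ibl l).Nonempty},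
                Function.update L₀ j₀ none, Function.update L₁ j₀ none,
                hA₀, hA₁, (sep_subset _ _).trans g3, (sep_subset _ _).trans g4,
                hutS L₀ L₁ none none g5, ?_, ?_, hV₀, hV₁, ?_, ?_⟩
              · intro j hj
                by_cases hjj : j = j₀
                · subst hjj
                  rw [Function.update_self]
                  simp [obl_none]
                · rw [Function.update_of_ne hjj, Function.update_of_ne hjj]
                  rcases Nat.lt_succ_iff_lt_or_eq.1 hj with h | h
                  · exact g6 j h
                  · exact absurd (Fin.ext h) hjj
              · intro j
                by_cases hjj : j = j₀
                · subst hjj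
                  rw [Function.update_self]
                  exact ⟨by simp [obl_none], by simp [obl_none]⟩
                · rw [Function.update_of_ne hjj, Function.update_of_ne hjj]
                  exact g7 j
              · rintro x ⟨hxQ, -⟩ j ll hll
                by_cases hjj : j = j₀
                · subst hjj
                  rw [Function.update_self] at hll
                  exact absurd hll (by simp)
                · rw [Function.update_of_ne hjj] at hll
                  exact g10 x hxQ j ll hll
              · rintro x ⟨hxQ, -⟩ j ll hll
                by_cases hjj : j = j₀
                · subst hjj
                  rw [Function.update_self] at hll
                  exact absurd hll (by simp)
                · rw [Function.update_of_ne hjj] at hll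
                  exact g11 x hxQ j ll hll
            · -- side 0 dies, side 1 unchanged
              obtain ⟨hA₀, hV₀⟩ := hdie Q₀ L₀ l g1 e₀ g8 hp₀
              refine ⟨{x ∈ Q₀ | ¬ (F x ∩ ibl l).Nonempty}, Q₁,
                Function.update L₀ j₀ none, L₁,
                hA₀, g2, (sep_subset _ _).trans g3, g4, ?_, ?_, ?_, hV₀, g9, ?_, g11⟩
              · intro j hj
                have hne : j ≠ j₀ := by
                  intro hc
                  subst hc
                  have hvm : (j₀ : ℕ) = m := rfl
                  rw [hvm] at hj
                  omega
                rw [Function.update_of_ne hne]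
                exact g5 j (Nat.le_of_succ_le hj)
              · intro j hj
                by_cases hjj : j = j₀
                · subst hjj
                  rw [Function.update_self]
                  simp [obl_none]
                · rw [Function.update_of_ne hjj]
                  rcases Nat.lt_succ_iff_lt_or_eq.1 hj with h | h
                  · exact g6 j h
                  · exact absurd (Fin.ext h) hjj
              · intro j
                by_cases hjj : j = j₀
                · subst hjj
                  rw [Function.update_self]
                  exact ⟨by simp [obl_none], (g7 j₀).2⟩
                · rw [Function.update_of_ne hjj]
                  exact g7 j
              · rintro x ⟨hxQ, -⟩ j ll hll
                by_cases hjj : j = j₀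
                · subst hjj
                  rw [Function.update_self] at hll
                  exact absurd hll (by simp)
                · rw [Function.update_of_ne hjj] at hll
                  exact g10 x hxQ j ll hll
          · by_cases hp₁ : sml I {x ∈ Q₁ | (F x ∩ ibl l).Nonempty}
            · -- side 1 dies, side 0 unchanged
              obtain ⟨hA₁, hV₁⟩ := hdie Q₁ L₁ l g2 e₁ g9 hp₁
              refine ⟨Q₀, {x ∈ Q₁ | ¬ (F x ∩ ibl l).Nonempty},
                L₀, Function.update L₁ j₀ none,
                g1, hA₁, g3, (sep_subset _ _).trans g4, ?_, ?_, ?_, g8, hV₁, g10, ?_⟩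
              · intro j hj
                have hne : j ≠ j₀ := by
                  intro hc
                  subst hc
                  have hvm : (j₀ : ℕ) = m := rfl
                  rw [hvm] at hj
                  omega
                rw [Function.update_of_ne hne]
                exact g5 j (Nat.le_of_succ_le hj)
              · intro j hj
                by_cases hjj : j = j₀
                · subst hjj
                  rw [Function.update_self]
                  simp [obl_none]
                · rw [Function.update_of_ne hjj]
                  rcases Nat.lt_succ_iff_lt_or_eq.1 hj with h | h
                  · exact g6 j h
                  · exact absurd (Fin.ext h) hjj
              · intro j
                by_cases hjj : j = j₀
                · subst hjj
                  rw [Function.update_self]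
                  exact ⟨(g7 j₀).1, by simp [obl_none]⟩
                · rw [Function.update_of_ne hjj]
                  exact g7 j
              · rintro x ⟨hxQ, -⟩ j ll hll
                by_cases hjj : j = j₀
                · subst hjj
                  rw [Function.update_self] at hll
                  exact absurd hll (by simp)
                · rw [Function.update_of_ne hjj] at hll
                  exact g11 x hxQ j ll hll
            · -- both positive: genuine split
              have hpres₀ : ∀ x ∈ {x ∈ Q₀ | (F x ∩ ibl l).Nonempty}, (F x ∩ ibl l).Nonempty :=
                fun x hx => hx.2
              have hpres₁ : ∀ x ∈ {x ∈ Q₁ | (F x ∩ ibl l).Nonempty}, (F x ∩ ibl l).Nonempty :=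
                fun x hx => hx.2
              obtain ⟨z₀, z₁, hz01, hz₀tr, hz₁tr⟩ := supp_two hI F hu hfib hp₀ hpres₀
              obtain ⟨w, hwtr⟩ := supp_one hI F hu hp₁ hpres₁
              obtain ⟨z, hztr, hzw⟩ : ∃ z : Y, (∀ ε : ℝ, 0 < ε → ¬ sml I
                  {x ∈ {x ∈ Q₀ | (F x ∩ ibl l).Nonempty} |
                    (F x ∩ ibl l ∩ Metric.ball z ε).Nonempty}) ∧ z ≠ w := by
                by_cases hc : z₀ = w
                · exact ⟨z₁, hz₁tr, fun hh => hz01 (hc.trans hh.symm)⟩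
                · exact ⟨z₀, hz₀tr, hc⟩
              have hd : (0:ℝ) < dist z w := dist_pos.2 hzw
              obtain ⟨m₀, hm₀⟩ := hu.exists_dist_lt z (show (0:ℝ) < dist z w / 8 by linarith)
              obtain ⟨q₀, hq₀1, hq₀2⟩ := exists_rat_btwn hm₀
              obtain ⟨m₁, hm₁⟩ := hu.exists_dist_lt w (show (0:ℝ) < dist z w / 8 by linarith)
              obtain ⟨q₁, hq₁1, hq₁2⟩ := exists_rat_btwn hm₁
              have hball₀ : Metric.ball z ((q₀ : ℝ) - dist z (u m₀)) ⊆ bll (m₀, q₀) :=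
                Metric.ball_subset_ball' (by simp)
              have hball₁ : Metric.ball w ((q₁ : ℝ) - dist w (u m₁)) ⊆ bll (m₁, q₁) :=
                Metric.ball_subset_ball' (by simp)
              have hdisj : bll (m₀, q₀) ∩ bll (m₁, q₁) = ∅ := by
                rw [eq_empty_iff_forall_notMem]
                rintro y ⟨hy₀, hy₁⟩
                have hy₀' : dist y (u m₀) < (q₀ : ℝ) := Metric.mem_ball.1 hy₀
                have hy₁' : dist y (u m₁) < (q₁ : ℝ) := Metric.mem_ball.1 hy₁
                have ht1 : dist z w ≤ dist z (u m₀) + dist (u m₀) y + dist y (u m₁)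
                    + dist (u m₁) w := by
                  calc dist z w ≤ dist z y + dist y w := dist_triangle _ _ _
                    _ ≤ (dist z (u m₀) + dist (u m₀) y) + (dist y (u m₁) + dist (u m₁) w) :=
                        add_le_add (dist_triangle _ _ _) (dist_triangle _ _ _)
                    _ = _ := by ring
                rw [dist_comm (u m₀) y, dist_comm (u m₁) w] at ht1
                have hq₀3 : (q₀ : ℝ) < dist z w / 8 := hq₀2
                have hq₁3 : (q₁ : ℝ) < dist z w / 8 := hq₁2
                rw [dist_comm w (u m₁)] at hm₁
                linarith
              obtain ⟨hApos₀, hAvt₀, hAss₀⟩ := hshr Q₀ L₀ l (m₀, q₀) z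
                ((q₀ : ℝ) - dist z (u m₀)) (by linarith) hball₀ e₀ g8 g10
                (hztr _ (by linarith))
              obtain ⟨hApos₁, hAvt₁, hAss₁⟩ := hshr Q₁ L₁ l (m₁, q₁) w
                ((q₁ : ℝ) - dist w (u m₁)) (by linarith) hball₁ e₁ g9 g11
                (hwtr _ (by linarith))
              refine ⟨{x ∈ Q₀ | (F x ∩ ibl l ∩ bll (m₀, q₀)).Nonempty},
                {x ∈ Q₁ | (F x ∩ ibl l ∩ bll (m₁, q₁)).Nonempty},
                Function.update L₀ j₀ (some ((m₀, q₀) :: l)),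
                Function.update L₁ j₀ (some ((m₁, q₁) :: l)),
                hApos₀, hApos₁, (sep_subset _ _).trans g3, (sep_subset _ _).trans g4,
                hutS L₀ L₁ _ _ g5, ?_, ?_, hAvt₀, hAvt₁, hAss₀, hAss₁⟩
              · intro j hj
                by_cases hjj : j = j₀
                · subst hjj
                  rw [Function.update_self, Function.update_self]
                  rw [obl_some, obl_some]
                  apply eq_empty_iff_forall_notMem.2
                  rintro y ⟨hy₀, hy₁⟩
                  rw [ibl_cons] at hy₀ hy₁
                  exact eq_empty_iff_forall_notMem.1 hdisj y ⟨hy₀.1, hy₁.1⟩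
                · rw [Function.update_of_ne hjj, Function.update_of_ne hjj]
                  rcases Nat.lt_succ_iff_lt_or_eq.1 hj with h | h
                  · exact g6 j h
                  · exact absurd (Fin.ext h) hjj
              · intro j
                by_cases hjj : j = j₀
                · subst hjj
                  rw [Function.update_self, Function.update_self]
                  rw [hLj]
                  constructor
                  · intro y hy
                    have hy' : y ∈ ibl ((m₀, q₀) :: l) := hy
                    rw [ibl_cons] at hy'
                    exact hy'.2
                  · intro y hy
                    have hy' : y ∈ ibl ((m₁, q₁) :: l) := hy
                    rw [ibl_cons] at hy'
                    exact hy'.2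
                · rw [Function.update_of_ne hjj, Function.update_of_ne hjj]
                  exact g7 j
    -- assemble the two children
    obtain ⟨Q₀, Q₁, L₀, L₁, g1, g2, g3, g4, g5, g6, g7, g8, g9, g10, g11⟩ := loop k (le_refl k)
    have hnet : ∀ Q : Set X, ¬ sml I Q → ∃ i, ¬ sml I (Q ∩ NN (n + 1) i) := by
      intro Q hQ
      exact pos_iUnion hI hQ (by rw [hNcov (n + 1)]; exact subset_univ _)
    obtain ⟨i₀', hi₀'⟩ := hnet Q₀ g1
    obtain ⟨i₁', hi₁'⟩ := hnet Q₁ g2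
    refine ⟨((Q₀ ∩ NN (n + 1) i₀', L₀, K ∩ (Ver L₀ ∩ NN (n + 1) i₀')),
            (Q₁ ∩ NN (n + 1) i₁', L₁, K ∩ (Ver L₁ ∩ NN (n + 1) i₁'))), ?_, ?_, ?_⟩
    · refine ⟨hi₀', ?_, hClint _ _ h3 (hClint _ _ (hClVer L₀) (hClN (n + 1) i₀')),
        fun x hx => h4 hx.1, fun x hx => h5 hx.1, fun x hx => hx.2.1,
        ⟨i₀', fun x hx => hx.2.2⟩, fun x hx => g8 x hx.1, fun x hx => g10 x hx.1⟩
      rintro x ⟨hxQ, hxN⟩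
      exact ⟨h2 (g3 hxQ), (hVerTrue L₀ x (h5 (h2 (g3 hxQ)))).2 (g8 x hxQ), hxN⟩
    · refine ⟨hi₁', ?_, hClint _ _ h3 (hClint _ _ (hClVer L₁) (hClN (n + 1) i₁')),
        fun x hx => h4 hx.1, fun x hx => h5 hx.1, fun x hx => hx.2.1,
        ⟨i₁', fun x hx => hx.2.2⟩, fun x hx => g9 x hx.1, fun x hx => g11 x hx.1⟩
      rintro x ⟨hxQ, hxN⟩
      exact ⟨h2 (g4 hxQ), (hVerTrue L₁ x (h5 (h2 (g4 hxQ)))).2 (g9 x hxQ), hxN⟩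
    · exact ⟨⟨fun x hx => hx.1, fun x hx => hx.1⟩, fun j => g7 j, fun j => g6 j j.2⟩
  obtain ⟨nodef, hrooteq, hInvf, hCf⟩ := tchoice Inv Crel droot hInv0 hstep
  -- branches
  set pth : (ℕ → Bool) → ℕ → List Bool := fun b => Nat.rec [] (fun n s => b n :: s) with hpthD
  have hpth0 : ∀ b, pth b 0 = [] := fun b => rfl
  have hpthS : ∀ b n, pth b (n + 1) = b n :: pth b n := fun b n => rfl
  have hlen : ∀ b n, (pth b n).length = n := by
    intro b n
    induction n with
    | zero => rfl
    | succ n ih => rw [hpthS]; simp [ih]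
  -- chain facts along a branch
  have hchild : ∀ (b : ℕ → Bool) (n : ℕ),
      (nodef (pth b (n + 1))).2.2 ⊆ (nodef (pth b n)).2.2 ∧
      (∀ j, obl ((nodef (pth b (n + 1))).2.1 j) ⊆ obl ((nodef (pth b n)).2.1 j)) := by
    intro b n
    have hc := hCf (pth b n)
    have hps := hpthS b n
    cases hbn : b n with
    | false =>
      rw [hbn] at hps
      rw [hps]
      exact ⟨hc.1.1, fun j => (hc.2.1 j).1⟩
    | true =>
      rw [hbn] at hps
      rw [hps]
      exact ⟨hc.1.2, fun j => (hc.2.1 j).2⟩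
  have hKx : ∀ b : ℕ → Bool, ∃ x, ∀ n, x ∈ (nodef (pth b n)).2.2 := by
    intro b
    have h := hlim (fun n => (nodef (pth b n)).2.2) ?_ ?_ ?_ ?_
    · obtain ⟨x, hx⟩ := h
      exact ⟨x, fun n => mem_iInter.1 hx n⟩
    · intro n
      exact (hInvf (pth b n)).2.2.1
    · intro n
      exact (hchild b n).1
    · intro n
      obtain ⟨x, hx⟩ := hposne _ (hInvf (pth b n)).1
      exact ⟨x, (hInvf (pth b n)).2.1 hx⟩
    · intro n
      have h := (hInvf (pth b n)).2.2.2.2.2.2.1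
      rw [hlen b n] at h
      exact h
  choose xb hxb using hKx
  have hxB : ∀ b, xb b ∈ B := by
    intro b
    have h := hxb b 0
    rw [hpth0, hrooteq] at h
    exact h.1.1.1
  have hvt : ∀ b n, F (xb b) ⊆ usk ((nodef (pth b n)).2.1) := by
    intro b n
    have hx := hxb b n
    have hInvn := hInvf (pth b n)
    exact (hVerTrue _ _ (hInvn.2.2.2.2.1 hx)).1 (hInvn.2.2.2.2.2.1 hx)
  have hmonochain : ∀ (b : ℕ → Bool) (j : Fin k) (n m' : ℕ), n ≤ m' →
      obl ((nodef (pth b m')).2.1 j) ⊆ obl ((nodef (pth b n)).2.1 j) := by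
    intro b j n m' h
    induction h with
    | refl => exact subset_rfl
    | step h ih => exact ((hchild b _).2 j).trans ih
  have hcapt : ∀ b, ∀ y ∈ F (xb b), ∃ j : Fin k, ∀ n,
      y ∈ obl ((nodef (pth b n)).2.1 j) := by
    intro b y hy
    have hsel : ∀ n, ∃ j : Fin k, y ∈ obl ((nodef (pth b n)).2.1 j) := by
      intro n
      exact mem_iUnion.1 (hvt b n hy)
    choose js hjs using hsel
    obtain ⟨j, hjinf⟩ := Finite.exists_infinite_fiber js
    refine ⟨j, fun n => ?_⟩
    obtain ⟨m', hm'1, hm'2⟩ := (Set.infinite_coe_iff.1 hjinf).exists_gt n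
    have hjm : js m' = j := hm'1
    exact hmonochain b j n m' hm'2.le (hjm ▸ hjs m')
  -- suppose no branch works
  by_contra hcon
  push_neg at hcon
  have hbad : ∀ b : ℕ → Bool, ∃ y, y ∈ F (xb b) ∧ y ∈ R := by
    intro b
    obtain ⟨y, hy1, hy2⟩ := hcon (xb b) (hxB b)
    exact ⟨y, hy1, hy2⟩
  choose yb hyb1 hyb2 using hbad
  choose jb hjb using fun b => hcapt b (yb b) (hyb1 b)
  have hΦinj : Function.Injective (fun b : ℕ → Bool => ((⟨yb b, hyb2 b⟩ : ↥R), jb b)) := by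
    intro b b' heq
    by_contra hne
    have hex : ∃ n, b n ≠ b' n := Function.ne_iff.1 hne
    have hyeq : yb b = yb b' :=
      congrArg (fun z : ↥R × Fin k => (z.1 : Y)) heq
    have hjeq : jb b = jb b' := congrArg Prod.snd heq
    set n₀ := Nat.find hex with hn₀
    have hfind : b n₀ ≠ b' n₀ := Nat.find_spec hex
    have hbelow : ∀ m', m' < n₀ → b m' = b' m' := by
      intro m' hm'
      have := Nat.find_min hex hm'
      exact not_ne_iff.1 this
    have hpeq : pth b n₀ = pth b' n₀ := by
      have key : ∀ nn, (∀ m' < nn, b m' = b' m') → pth b nn = pth b' nn := by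
        intro nn
        induction nn with
        | zero => intro _; rfl
        | succ nn ih =>
          intro h
          rw [hpthS, hpthS, h nn (Nat.lt_succ_self _),
            ih (fun m' hm' => h m' (Nat.lt_succ_of_lt hm'))]
      exact key n₀ hbelow
    have hdisj := (hCf (pth b n₀)).2.2 (jb b)
    have hm0 := hjb b (n₀ + 1)
    have hm1 := hjb b' (n₀ + 1)
    rw [hpthS] at hm0
    rw [hpthS, ← hpeq, ← hyeq, ← hjeq] at hm1
    cases hb : b n₀ with
    | false =>
      cases hb' : b' n₀ with
      | false => exact hfind (hb.trans hb'.symm)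
      | true =>
        rw [hb] at hm0
        rw [hb'] at hm1
        exact eq_empty_iff_forall_notMem.1 hdisj (yb b) ⟨hm0, hm1⟩
    | true =>
      cases hb' : b' n₀ with
      | false =>
        rw [hb] at hm0
        rw [hb'] at hm1
        exact eq_empty_iff_forall_notMem.1 hdisj (yb b) ⟨hm1, hm0⟩
      | true => exact hfind (hb.trans hb'.symm)
  have hle := Cardinal.mk_le_of_injective hΦinj
  have h1 : #(ℕ → Bool) = 𝔠 := by
    rw [Cardinal.mk_arrow]
    simp only [Cardinal.mk_bool, Cardinal.mk_nat, Cardinal.lift_id]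
    rfl
  have h2 : #(↥R × Fin k) < 𝔠 := by
    rw [Cardinal.mk_prod]
    simp only [Cardinal.lift_id, Cardinal.mk_fin]
    exact Cardinal.mul_lt_of_lt Cardinal.aleph0_le_continuum hR
      (lt_of_lt_of_le (Cardinal.nat_lt_aleph0 k) Cardinal.aleph0_le_continuum)
  rw [h1] at hle
  exact absurd (lt_of_le_of_lt hle h2) (lt_irrefl _)



end Stmt9

open Stmt9 in
theorem stmt_9 {X : Type} [TopologicalSpace X] [PolishSpace X] [Uncountable X]
    [MeasurableSpace X] [BorelSpace X]
    {Y : Type} [TopologicalSpace Y] [PolishSpace Y] [MeasurableSpace Y] [BorelSpace Y]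
    (𝓘 : Set (Set X))
    (hDown : ∀ A B : Set X, A ⊆ B → B ∈ 𝓘 → A ∈ 𝓘)
    (hUnion : ∀ f : ℕ → Set X, (∀ n, f n ∈ 𝓘) → (⋃ n, f n) ∈ 𝓘)
    (hProper : (univ : Set X) ∉ 𝓘)
    (hSing : ∀ x : X, ({x} : Set X) ∈ 𝓘)
    (hBase : ∀ A ∈ 𝓘, ∃ B : Set X, A ⊆ B ∧ MeasurableSet B ∧ B ∈ 𝓘)
    (hccc : ∀ 𝒟 : Set (Set X), (∀ D ∈ 𝒟, MeasurableSet D ∧ D ∉ 𝓘) →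
      𝒟.PairwiseDisjoint id → 𝒟.Countable)
    (F : X → Set Y)
    (hmeas : ∀ U : Set Y, IsOpen U →
      MeasurableSet[MeasurableSpace.generateFrom ({s : Set X | MeasurableSet s} ∪ 𝓘)] {x : X | (F x ∩ U).Nonempty})
    (hfin : ∀ x : X, (F x).Finite ∧ (F x).Nonempty)
    (hfib : ∀ y : Y, {x : X | y ∈ F x} ∈ 𝓘) :
    ∃ T : Set Y, ∀ B : Set X, MeasurableSet B → B ∉ 𝓘 →
      ({x : X | (F x ∩ T).Nonempty} ∩ B).Nonempty ∧
        (B \ {x : X | (F x ∩ T).Nonempty}).Nonempty := by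
  classical
  have hI : Idl 𝓘 := ⟨hDown, hUnion, hSing, hBase⟩
  have hneX : Nonempty X := inferInstance
  obtain ⟨x₀⟩ := hneX
  have hneY : Nonempty Y := ⟨(hfin x₀).2.choose⟩
  -- restate FL
  have hFL : ∀ (B : Set X), MeasurableSet B → B ∉ 𝓘 → ∀ R : Set Y, #R < 𝔠 →
      ∃ x ∈ B, ∀ y ∈ F x, y ∉ R := by
    intro B hBm hBI R hR
    have hB : ¬ sml 𝓘 B := by
      rintro ⟨N, h1, h2, h3⟩
      exact hBI (hDown _ _ h3 h2)
    exact FL hI F hmeas hfin hfib hBm hB hR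
  -- index type
  let ℬ := {p : Set X // MeasurableSet p ∧ p ∉ 𝓘}
  have hcard : #ℬ ≤ 𝔠 := by
    have hinj : Function.Injective (fun p : ℬ => (⟨p.1, p.2.1⟩ : {s : Set X | MeasurableSet s})) := by
      intro p q h
      have h' : (⟨p.1, p.2.1⟩ : {s : Set X | MeasurableSet s}) = ⟨q.1, q.2.1⟩ := h
      exact Subtype.ext (congrArg (fun z : {s : Set X | MeasurableSet s} => z.1) h')
    exact le_trans (Cardinal.mk_le_of_injective hinj) card_meas_le
  obtain ⟨r, hwf, htri, hpred⟩ := exists_good_wo hcard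
  -- the inductive step: given choices for predecessors, choose a triple for b
  have hstep : ∀ (b : ℬ) (ih : ∀ b' : ℬ, r b' b → X × X × Y), ∃ d : X × X × Y,
      (d.1 ∈ b.1 ∧ ∀ y ∈ F d.1, ¬ ∃ (p : {b' : ℬ // r b' b}), (ih p.1 p.2).2.2 = y) ∧
      (d.2.1 ∈ b.1 ∧ (∀ y ∈ F d.2.1, y ∉ F d.1 ∧ ∀ (p : {b' : ℬ // r b' b}), y ∉ F (ih p.1 p.2).1)
        ∧ d.2.2 ∈ F d.2.1) := by
    intro b ih
    set R₁ : Set Y := Set.range (fun p : {b' : ℬ // r b' b} => (ih p.1 p.2).2.2) with hR₁def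
    have hR₁ : #R₁ < 𝔠 := lt_of_le_of_lt (Cardinal.mk_range_le) (hpred b)
    obtain ⟨x', hx'B, hx'⟩ := hFL b.1 b.2.1 b.2.2 R₁ hR₁
    set R₂ : Set Y := F x' ∪ ⋃ (p : {b' : ℬ // r b' b}), F (ih p.1 p.2).1 with hR₂def
    have hR₂ : #R₂ < 𝔠 := by
      apply lt_of_le_of_lt (Cardinal.mk_union_le _ _)
      apply Cardinal.add_lt_of_lt Cardinal.aleph0_le_continuum
      · exact lt_of_le_of_lt (Cardinal.mk_le_aleph0_iff.2 (hfin x').1.countable)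
          Cardinal.aleph0_lt_continuum
      · apply lt_of_le_of_lt (Cardinal.mk_iUnion_le _)
        apply Cardinal.mul_lt_of_lt Cardinal.aleph0_le_continuum (hpred b)
        apply lt_of_le_of_lt _ Cardinal.aleph0_lt_continuum
        exact ciSup_le' fun p => Cardinal.mk_le_aleph0_iff.2 (hfin _).1.countable
    obtain ⟨x, hxB, hx⟩ := hFL b.1 b.2.1 b.2.2 R₂ hR₂
    refine ⟨(x', x, (hfin x).2.choose), ⟨hx'B, ?_⟩, hxB, ?_, (hfin x).2.choose_spec⟩
    · intro y hy hex
      exact hx' y hy hex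
    · intro y hy
      constructor
      · intro hf
        exact hx y hy (Or.inl hf)
      · intro p hf
        exact hx y hy (Or.inr (mem_iUnion.2 ⟨p, hf⟩))
  choose g hg1 hg2 using hstep
  let f : ℬ → X × X × Y := hwf.fix (fun b ih => g b ih)
  have hfeq : ∀ b, f b = g b (fun b' _ => f b') := fun b => hwf.fix_eq _ b
  -- notation
  let A : ℬ → X := fun b => (f b).1
  let W : ℬ → X := fun b => (f b).2.1
  let t : ℬ → Y := fun b => (f b).2.2
  have hA : ∀ b : ℬ, A b ∈ b.1 ∧ ∀ y ∈ F (A b), ¬ ∃ (p : {b' : ℬ // r b' b}), t p.1 = y := by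
    intro b
    have h := hg1 b (fun b' _ => f b')
    rw [← hfeq b] at h
    exact h
  have hW : ∀ b : ℬ, W b ∈ b.1 ∧ (∀ y ∈ F (W b), y ∉ F (A b) ∧ ∀ (p : {b' : ℬ // r b' b}),
      y ∉ F (A p.1)) ∧ t b ∈ F (W b) := by
    intro b
    have h := hg2 b (fun b' _ => f b')
    rw [← hfeq b] at h
    exact h
  refine ⟨Set.range t, ?_⟩
  intro B hBm hBI
  set b : ℬ := ⟨B, hBm, hBI⟩ with hbdef
  constructor
  · exact ⟨W b, ⟨t b, (hW b).2.2, ⟨b, rfl⟩⟩, (hW b).1⟩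
  · refine ⟨A b, (hA b).1, ?_⟩
    rintro ⟨y, hyF, b', rfl⟩
    rcases htri b' b with h | h | h
    · exact (hA b).2 _ hyF ⟨⟨b', h⟩, rfl⟩
    · subst h
      exact ((hW b).2.1 _ (hW b).2.2).1 hyF
    · exact ((hW b').2.1 _ (hW b').2.2).2 ⟨b, h⟩ hyF
end

section
/- Let (X, 𝓘) be a Polish ideal space with 𝓘 c.c.c. and Y a Polish space. Suppose F is an analytic subset of X × Y satisfying: (1) for every y ∈ Y, the vertical section F^y = {x ∈ X : (x, y) ∈ F} belongs to 𝓘; (2) X ∖ π_X(F) ∈ 𝓘, where π_X is the projection onto X; (3) for every x ∈ X, the horizontal section F_x = {y ∈ Y : (x, y) ∈ F} is finite. Then there exists a set T ⊆ Y such that F⁻¹(T) = {x ∈ X : F_x ∩ T ≠ ∅} is completely 𝓘-nonmeasurable. -/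
open Set

namespace StmtAux
open MeasureTheory Cardinal Filter Topology
set_option linter.unusedSectionVars false
set_option maxHeartbeats 1000000


/-! ### Cylinders in `ℕ → ℕ` -/

/-- Cylinder determined by a finite stem. -/
def Lcyl (t : List ℕ) : Set (ℕ → ℕ) := {w | ∀ k : Fin t.length, w k = t.get k}

/-- prefix of length `n` of a point. -/
def pref (u : ℕ → ℕ) (n : ℕ) : List ℕ := List.ofFn (fun i : Fin n => u i)

@[simp] lemma pref_length (u : ℕ → ℕ) (n : ℕ) : (pref u n).length = n := by
  simp [pref]

lemma mem_Lcyl_pref {u w : ℕ → ℕ} {n : ℕ} :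
    w ∈ Lcyl (pref u n) ↔ ∀ k < n, w k = u k := by
  constructor
  · intro h k hk
    have := h ⟨k, by simpa using hk⟩
    simpa [pref, List.get_ofFn] using this
  · intro h k
    have hk : (k : ℕ) < n := by simpa using k.2
    exact (h k hk).trans (List.get_ofFn _ k).symm

lemma self_mem_Lcyl_pref (u : ℕ → ℕ) (n : ℕ) : u ∈ Lcyl (pref u n) :=
  mem_Lcyl_pref.2 fun _ _ => rfl

lemma Lcyl_pref_mono {u : ℕ → ℕ} {n n' : ℕ} (h : n' ≤ n) :
    Lcyl (pref u n) ⊆ Lcyl (pref u n') := by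
  intro w hw
  rw [mem_Lcyl_pref] at hw ⊢
  exact fun k hk => hw k (lt_of_lt_of_le hk h)

lemma Lcyl_nil : Lcyl ([] : List ℕ) = Set.univ := by
  ext w
  simp only [Lcyl, mem_setOf_eq, mem_univ, iff_true]
  intro k; exact absurd k.2 (by simp)

lemma isOpen_Lcyl (t : List ℕ) : IsOpen (Lcyl t) := by
  have : Lcyl t = ⋂ k : Fin t.length, (fun w : ℕ → ℕ => w k) ⁻¹' {t.get k} := by
    ext w; simp [Lcyl]
  rw [this]
  exact isOpen_iInter_of_finite fun k =>
    (continuous_apply (k : ℕ)).isOpen_preimage _ (isOpen_discrete _)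

/-- every open neighbourhood of `u` contains a cylinder around `u`. -/
lemma exists_pref_subset {O : Set (ℕ → ℕ)} (hO : IsOpen O) {u : ℕ → ℕ} (hu : u ∈ O) :
    ∃ n : ℕ, Lcyl (pref u n) ⊆ O := by
  rcases (isOpen_pi_iff.1 hO) u hu with ⟨I, V, hV, hsub⟩
  rcases I.bddAbove with ⟨n, hn⟩
  refine ⟨n + 1, fun w hw => hsub ?_⟩
  intro a ha
  have haI : a ≤ n := hn ha
  have : w a = u a := (mem_Lcyl_pref.1 hw) a (Nat.lt_succ_of_le haI)
  rw [this]
  exact (hV a ha).2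

/-- A cylinder is the union of its one-step extensions. -/
lemma Lcyl_eq_iUnion (t : List ℕ) : Lcyl t = ⋃ k : ℕ, Lcyl (t ++ [k]) := by
  ext w
  simp only [mem_iUnion]
  constructor
  · intro hw
    refine ⟨w t.length, ?_⟩
    intro j
    have hj : (j : ℕ) < t.length + 1 := by simpa using j.2
    rcases Nat.lt_or_ge (j : ℕ) t.length with h | h
    · have h1 := hw ⟨j, h⟩
      have h2 : (t ++ [w t.length]).get j = t.get ⟨j, h⟩ := by
        simp only [List.get_eq_getElem]
        exact List.getElem_append_left h
      rw [h2]
      exact h1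
    · have hje : (j : ℕ) = t.length := le_antisymm (Nat.lt_succ_iff.1 hj) h
      have h2 : (t ++ [w t.length]).get j = w t.length := by
        simp only [List.get_eq_getElem]
        have : (t ++ [w t.length])[(j:ℕ)] = (t ++ [w t.length])[t.length] := by
          congr 1
        rw [this]
        simp
      rw [h2, hje]
  · rintro ⟨k, hw⟩
    intro j
    have hj : (j : ℕ) < t.length := j.2
    have h1 := hw ⟨j, by simp only [List.length_append, List.length_cons, List.length_nil]; omega⟩
    have h2 : (t ++ [k]).get ⟨j, by simp only [List.length_append, List.length_cons, List.length_nil]; omega⟩ = t.get ⟨j, hj⟩ := by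
      simp only [List.get_eq_getElem]
      exact List.getElem_append_left hj
    rw [h2] at h1
    exact h1




variable {X : Type} [TopologicalSpace X] [PolishSpace X]
  [MeasurableSpace X] [BorelSpace X]

/-- Bundled hypotheses on the σ-ideal. -/
structure Setup (X : Type) [MeasurableSpace X] where
  I : Set (Set X)
  down : ∀ A B : Set X, A ⊆ B → B ∈ I → A ∈ I
  union : ∀ f : ℕ → Set X, (∀ n, f n ∈ I) → (⋃ n, f n) ∈ I
  base : ∀ A ∈ I, ∃ B : Set X, A ⊆ B ∧ MeasurableSet B ∧ B ∈ I
  ccc : ∀ 𝒟 : Set (Set X), (∀ D ∈ 𝒟, MeasurableSet D ∧ D ∉ I) →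
      𝒟.PairwiseDisjoint id → 𝒟.Countable
  emptyMem : ∅ ∈ I

namespace Setup

variable (S : Setup X)

/-- `A` is contained in a measurable set of the ideal. -/
def Small (A : Set X) : Prop := ∃ N, A ⊆ N ∧ MeasurableSet N ∧ N ∈ S.I

lemma Small.mono {A B : Set X} (h : S.Small B) (hAB : A ⊆ B) : S.Small A := by
  rcases h with ⟨N, h1, h2, h3⟩; exact ⟨N, hAB.trans h1, h2, h3⟩

lemma small_of_mem {A : Set X} (h : A ∈ S.I) : S.Small A := S.base A h

lemma small_empty : S.Small ∅ := S.small_of_mem S.emptyMem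

lemma Small.mem {A : Set X} (h : S.Small A) : A ∈ S.I := by
  rcases h with ⟨N, h1, h2, h3⟩; exact S.down _ _ h1 h3

lemma small_iUnion_nat {s : ℕ → Set X} (h : ∀ n, S.Small (s n)) :
    S.Small (⋃ n, s n) := by
  choose N hN hNm hNi using h
  exact ⟨⋃ n, N n, iUnion_mono hN, MeasurableSet.iUnion hNm, S.union N hNi⟩

lemma small_iUnion {ι : Type*} [Countable ι] {s : ι → Set X} (h : ∀ i, S.Small (s i)) :
    S.Small (⋃ i, s i) := by
  rcases isEmpty_or_nonempty ι with hι | hι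
  · simpa [iUnion_of_empty] using S.small_empty
  · rcases exists_surjective_nat ι with ⟨e, he⟩
    have : (⋃ i, s i) = ⋃ n, s (e n) := by
      apply subset_antisymm
      · refine iUnion_subset fun i => ?_
        rcases he i with ⟨n, rfl⟩
        exact subset_iUnion (fun n => s (e n)) n
      · exact iUnion_subset fun n => subset_iUnion s (e n)
    rw [this]
    exact S.small_iUnion_nat fun n => h (e n)

lemma small_union {A B : Set X} (hA : S.Small A) (hB : S.Small B) : S.Small (A ∪ B) := by
  rw [Set.union_eq_iUnion]
  exact S.small_iUnion fun b => by cases b <;> simpa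

/-- existence of minimal Borel hulls (uses ccc). -/
lemma exists_hull (A : Set X) :
    ∃ H : Set X, A ⊆ H ∧ MeasurableSet H ∧
      ∀ B : Set X, A ⊆ B → MeasurableSet B → H \ B ∈ S.I := by
  classical
  -- maximal pairwise disjoint family of positive measurable sets disjoint from A
  set P : Set (Set (Set X)) :=
    {D | (∀ E ∈ D, MeasurableSet E ∧ E ∉ S.I ∧ E ∩ A = ∅) ∧ D.PairwiseDisjoint id} with hP
  obtain ⟨𝒟, h𝒟, hmax⟩ : ∃ 𝒟 ∈ P, ∀ D ∈ P, 𝒟 ⊆ D → D ⊆ 𝒟 := by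
    have hchains : ∀ c ⊆ P, IsChain (· ⊆ ·) c → ∃ ub ∈ P, ∀ s ∈ c, s ⊆ ub := by
      intro c hc hchain
      refine ⟨⋃₀ c, ⟨?_, ?_⟩, fun s hs => subset_sUnion_of_mem hs⟩
      · rintro E ⟨D, hD, hE⟩
        exact (hc hD).1 E hE
      · intro E₁ hE₁ E₂ hE₂ hne
        rcases hE₁ with ⟨D₁, hD₁, hE₁⟩
        rcases hE₂ with ⟨D₂, hD₂, hE₂⟩
        rcases hchain.total hD₁ hD₂ with h | h
        · exact (hc hD₂).2 (h hE₁) hE₂ hne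
        · exact (hc hD₁).2 hE₁ (h hE₂) hne
    obtain ⟨m, hm⟩ := zorn_subset P hchains
    exact ⟨m, hm.1, fun D hD hsub => hm.2 hD hsub⟩
  have hcnt : 𝒟.Countable := S.ccc 𝒟 (fun D hD => ⟨(h𝒟.1 D hD).1, (h𝒟.1 D hD).2.1⟩) h𝒟.2
  refine ⟨(⋃₀ 𝒟)ᶜ, ?_, ?_, ?_⟩
  · intro a ha hmem
    rcases mem_sUnion.1 hmem with ⟨E, hE, haE⟩
    have hEA := (h𝒟.1 E hE).2.2
    have : a ∈ E ∩ A := ⟨haE, ha⟩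
    rw [hEA] at this
    exact this
  · exact (MeasurableSet.sUnion hcnt fun E hE => (h𝒟.1 E hE).1).compl
  · intro B hAB hB
    by_contra hpos
    set E := (⋃₀ 𝒟)ᶜ \ B with hE
    have hEP : insert E 𝒟 ∈ P := by
      constructor
      · rintro E' hE'
        rcases hE' with rfl | hE'
        · refine ⟨((MeasurableSet.sUnion hcnt fun E hE => (h𝒟.1 E hE).1).compl).diff hB,
            hpos, ?_⟩
          apply eq_empty_of_subset_empty
          rintro a ⟨⟨_, haB⟩, haA⟩
          exact haB (hAB haA)
        · exact h𝒟.1 E' hE'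
      · apply h𝒟.2.insert
        intro E' hE' _
        apply Set.disjoint_left.2
        rintro a haE haE'
        exact haE.1 (mem_sUnion.2 ⟨E', hE', haE'⟩)
    have hsub := hmax _ hEP (subset_insert _ _)
    have hEmem : E ∈ 𝒟 := hsub (mem_insert _ _)
    have : E ⊆ (⋃₀ 𝒟)ᶜ := diff_subset
    have hEne : E = ∅ := by
      apply eq_empty_of_subset_empty
      intro a ha
      exact absurd (mem_sUnion.2 ⟨E, hEmem, ha⟩) (this ha)
    exact hpos (hEne ▸ S.emptyMem)

/-- Marczewski-style approximation: an analytic set has a measurable hull whose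
difference is small. -/
lemma analytic_approx {A : Set X} (hA : AnalyticSet A) :
    ∃ H N : Set X, A ⊆ H ∧ MeasurableSet H ∧ MeasurableSet N ∧ N ∈ S.I ∧ H \ N ⊆ A := by
  classical
  rw [AnalyticSet] at hA
  rcases hA with rfl | ⟨g, gcont, grange⟩
  · exact ⟨∅, ∅, by simp, MeasurableSet.empty, MeasurableSet.empty, S.emptyMem, by simp⟩
  letI := TopologicalSpace.upgradeIsCompletelyMetrizable X
  set D : List ℕ → Set X := fun t => g '' Lcyl t with hD
  have hHall : ∀ t : List ℕ, ∃ H, D t ⊆ H ∧ MeasurableSet H ∧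
      ∀ B, D t ⊆ B → MeasurableSet B → H \ B ∈ S.I := fun t => S.exists_hull (D t)
  choose H0 hH1 hH2 hH3 using hHall
  set Hs : List ℕ → Set X := fun t => H0 t ∩ closure (D t) with hHs
  have hDH : ∀ t, D t ⊆ Hs t := fun t => subset_inter (hH1 t) subset_closure
  have hHsm : ∀ t, MeasurableSet (Hs t) := fun t =>
    (hH2 t).inter isClosed_closure.measurableSet
  have hmin : ∀ t (B : Set X), D t ⊆ B → MeasurableSet B → Hs t \ B ∈ S.I := by
    intro t B h1 h2
    exact S.down _ _ (diff_subset_diff_left inter_subset_left) (hH3 t B h1 h2)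
  set N : Set X := ⋃ t : List ℕ, (Hs t \ ⋃ k : ℕ, Hs (t ++ [k])) with hN
  have hNsmall : S.Small N := by
    apply S.small_iUnion
    intro t
    apply S.small_of_mem
    apply hmin
    · show g '' Lcyl t ⊆ ⋃ k, Hs (t ++ [k])
      rw [Lcyl_eq_iUnion t, image_iUnion]
      exact iUnion_mono fun k => hDH (t ++ [k])
    · exact MeasurableSet.iUnion fun k => hHsm (t ++ [k])
  obtain ⟨NN, hNsub, hNNm, hNNi⟩ := hNsmall
  refine ⟨Hs [], NN, ?_, hHsm [], hNNm, hNNi, ?_⟩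
  · intro a ha
    apply hDH []
    show a ∈ g '' Lcyl []
    rw [Lcyl_nil, image_univ, grange]
    exact ha
  · -- main containment
    intro x hx
    have hxH : x ∈ Hs [] := hx.1
    have hxN : x ∉ N := fun h => hx.2 (hNsub h)
    have step : ∀ t : List ℕ, x ∈ Hs t → ∃ k : ℕ, x ∈ Hs (t ++ [k]) := by
      intro t hxt
      by_contra hk
      push_neg at hk
      have hxmem : x ∈ Hs t \ ⋃ k, Hs (t ++ [k]) := ⟨hxt, by simpa using hk⟩
      exact hxN (mem_iUnion.2 ⟨t, hxmem⟩)
    -- build the branch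
    let seq : ∀ n : ℕ, {t : List ℕ // x ∈ Hs t ∧ t.length = n} := fun n =>
      Nat.rec ⟨[], ⟨hxH, rfl⟩⟩
        (fun _ p => ⟨p.1 ++ [Classical.choose (step p.1 p.2.1)],
          ⟨Classical.choose_spec (step p.1 p.2.1), by
            have hp := p.2.2
            simp only [List.length_append, List.length_cons, List.length_nil]
            omega⟩⟩) n
    have seq_succ : ∀ n, (seq (n + 1)).1 =
        (seq n).1 ++ [Classical.choose (step (seq n).1 (seq n).2.1)] := fun n => rfl
    have seq_pref : ∀ n m, n ≤ m → (seq n).1 <+: (seq m).1 := by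
      intro n m hnm
      induction m with
      | zero => cases Nat.le_zero.1 hnm; exact List.prefix_refl _
      | succ m ih =>
        rcases Nat.lt_or_ge n (m + 1) with h | h
        · have := ih (Nat.lt_succ_iff.1 h)
          rw [seq_succ m]
          exact this.trans (List.prefix_append _ _)
        · have : n = m + 1 := le_antisymm hnm h
          subst this; exact List.prefix_refl _
    have hlen : ∀ n, ((seq n).1).length = n := fun n => (seq n).2.2
    let σ : ℕ → ℕ := fun n =>
      ((seq (n + 1)).1).get ⟨n, lt_of_lt_of_eq (Nat.lt_succ_self n) (hlen (n + 1)).symm⟩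
    have hgetσ : ∀ n k (hk : k < n),
        ((seq n).1).get ⟨k, lt_of_lt_of_eq hk (hlen n).symm⟩ = σ k := by
      intro n k hk
      show _ = ((seq (k + 1)).1).get ⟨k, _⟩
      have hpre : (seq (k + 1)).1 <+: (seq n).1 := seq_pref _ _ hk
      simp only [List.get_eq_getElem]
      exact (hpre.getElem (lt_of_lt_of_eq (Nat.lt_succ_self k) (hlen (k + 1)).symm)).symm
    -- approximating points
    have hwex : ∀ n : ℕ, ∃ w : ℕ → ℕ, w ∈ Lcyl (seq n).1 ∧ dist (g w) x < 1 / (n + 1) := by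
      intro n
      have hxcl : x ∈ closure (D (seq n).1) := ((seq n).2.1).2
      have hpos : (0 : ℝ) < 1 / (n + 1) := by positivity
      rcases Metric.mem_closure_iff.1 hxcl _ hpos with ⟨b, hb, hdist⟩
      rcases hb with ⟨w, hw, rfl⟩
      exact ⟨w, hw, by rwa [dist_comm]⟩
    choose w hw hdistw using hwex
    -- w n → σ
    have hwt : Tendsto w atTop (𝓝 σ) := by
      rw [tendsto_pi_nhds]
      intro k
      apply tendsto_atTop_of_eventually_const (i₀ := k + 1)
      intro n hn
      have hk : k < n := by omega
      have hwk := (hw n) ⟨k, lt_of_lt_of_eq hk (hlen n).symm⟩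
      rw [hwk]
      exact hgetσ n k hk
    have hgw : Tendsto (fun n => g (w n)) atTop (𝓝 (g σ)) := (gcont.tendsto σ).comp hwt
    have hgx : Tendsto (fun n => g (w n)) atTop (𝓝 x) := by
      rw [tendsto_iff_dist_tendsto_zero]
      apply squeeze_zero (fun n => dist_nonneg) (fun n => le_of_lt (hdistw n))
      exact tendsto_one_div_add_atTop_nhds_zero_nat
    have : x = g σ := tendsto_nhds_unique hgx hgw
    rw [← grange]
    exact ⟨σ, this.symm⟩


end Setup

section Rainbow

variable {Y : Type} [TopologicalSpace Y] [PolishSpace Y]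

/-- Key dichotomy: if an analytic subset of `Y^m` is covered coordinatewise by a set
of size `< 𝔠`, then it is covered coordinatewise by a countable set. -/
lemma rainbow {m : ℕ} {K : Set (Fin m → Y)} (hK : AnalyticSet K)
    {R : Set Y} (hR : #↥R < 𝔠) (hcov : ∀ g ∈ K, ∃ i, g i ∈ R) :
    ∃ C : Set Y, C.Countable ∧ ∀ g ∈ K, ∃ i, g i ∈ C := by
  classical
  letI := TopologicalSpace.upgradeIsCompletelyMetrizable Y
  rw [AnalyticSet] at hK
  rcases hK with rfl | ⟨f, fcont, frange⟩
  · exact ⟨∅, countable_empty, by simp⟩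
  by_contra hno
  push_neg at hno
  -- small stems
  set Smallt : List ℕ → Prop :=
    fun t => ∃ C : Set Y, C.Countable ∧ ∀ w ∈ Lcyl t, ∃ i, f w i ∈ C with hSmallt
  have hroot : ¬ Smallt [] := by
    rintro ⟨C, hC, hcover⟩
    rcases hno C hC with ⟨g, hgK, hgi⟩
    rcases (frange ▸ hgK : g ∈ range f) with ⟨w, rfl⟩
    rcases hcover w (by rw [Lcyl_nil]; trivial) with ⟨i, hi⟩
    exact hgi i hi
  set NStar : Set (ℕ → ℕ) := {u | ∀ t : List ℕ, u ∈ Lcyl t → ¬ Smallt t} with hNStar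
  -- the union of all small-stem witnesses
  set CU : Set Y := ⋃ t : List ℕ, (if h : Smallt t then Classical.choose h else ∅) with hCU
  have hCUcnt : CU.Countable := by
    apply countable_iUnion
    intro t
    by_cases h : Smallt t
    · simp only [dif_pos h]
      exact (Classical.choose_spec h).1
    · simp only [dif_neg h]
      exact countable_empty
  have hCUcov : ∀ w : ℕ → ℕ, w ∉ NStar → ∃ i, f w i ∈ CU := by
    intro w hw
    simp only [hNStar, mem_setOf_eq, not_forall] at hw
    rcases hw with ⟨t, hwt, hS⟩
    rw [not_not] at hS
    rcases (Classical.choose_spec hS).2 w hwt with ⟨i, hi⟩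
    refine ⟨i, mem_iUnion.2 ⟨t, ?_⟩⟩
    simp only [dif_pos hS]
    exact hi
  have hNS : ∀ t : List ℕ, ¬ Smallt t → ∃ u, u ∈ Lcyl t ∧ u ∈ NStar := by
    intro t ht
    by_contra hc
    push_neg at hc
    apply ht
    exact ⟨CU, hCUcnt, fun w hw => hCUcov w (hc w hw)⟩
  -- pair extraction
  have pair : ∀ t : List ℕ, ¬ Smallt t →
      ∃ u v, (u ∈ Lcyl t ∧ u ∈ NStar) ∧ (v ∈ Lcyl t ∧ v ∈ NStar) ∧
        ∀ i, f u i ≠ f v i := by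
    intro t ht
    rcases hNS t ht with ⟨u, hut, huN⟩
    by_contra hc
    push_neg at hc
    apply ht
    refine ⟨CU ∪ range (fun i : Fin m => f u i), hCUcnt.union (finite_range _).countable, ?_⟩
    intro w hw
    by_cases hwN : w ∈ NStar
    · rcases hc u w ⟨hut, huN⟩ ⟨hw, hwN⟩ with ⟨i, hi⟩
      refine ⟨i, Or.inr ?_⟩
      simp only [Set.mem_range]
      exact ⟨i, hi⟩
    · rcases hCUcov w hwN with ⟨i, hi⟩
      exact ⟨i, Or.inl hi⟩
  -- nodes
  set Node := (ℕ → ℕ) × ℕ × (Fin m → Set Y) with hNode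
  set Good : Node → Prop := fun d =>
    d.1 ∈ NStar ∧ (∀ i, IsOpen (d.2.2 i)) ∧
      (∀ w ∈ Lcyl (pref d.1 d.2.1), ∀ i, f w i ∈ d.2.2 i) with hGood
  set Ext : Node → Node → Prop := fun c d =>
    d.2.1 < c.2.1 ∧ c.1 ∈ Lcyl (pref d.1 d.2.1) ∧ ∀ i, c.2.2 i ⊆ d.2.2 i with hExt
  have splitex : ∀ d : Node, Good d → ∃ c : Node × Node,
      Good c.1 ∧ Good c.2 ∧ Ext c.1 d ∧ Ext c.2 d ∧
        ∀ i, Disjoint (c.1.2.2 i) (c.2.2.2 i) := by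
    rintro ⟨u0, n0, V⟩ ⟨hu0, hVopen, hVinv⟩
    have hsm : ¬ Smallt (pref u0 n0) := hu0 _ (self_mem_Lcyl_pref u0 n0)
    rcases pair _ hsm with ⟨u, v, ⟨hut, huN⟩, ⟨hvt, hvN⟩, hfuv⟩
    have hfu : ∀ i, f u i ∈ V i := fun i => hVinv u hut i
    have hfv : ∀ i, f v i ∈ V i := fun i => hVinv v hvt i
    have hsep : ∀ i, ∃ AB : Set Y × Set Y, IsOpen AB.1 ∧ IsOpen AB.2 ∧
        f u i ∈ AB.1 ∧ f v i ∈ AB.2 ∧ Disjoint AB.1 AB.2 := by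
      intro i
      rcases t2_separation (hfuv i) with ⟨A, B, hA, hB, hfA, hfB, hAB⟩
      exact ⟨(A, B), hA, hB, hfA, hfB, hAB⟩
    choose AB hA hB hfA hfB hABdisj using hsep
    set V0 : Fin m → Set Y := fun i => (AB i).1 ∩ V i with hV0
    set V1 : Fin m → Set Y := fun i => (AB i).2 ∩ V i with hV1
    -- find cylinders mapping into the new boxes
    have hO0 : IsOpen (⋂ i, (fun w => f w i) ⁻¹' (V0 i)) :=
      isOpen_iInter_of_finite fun i =>
        (((hA i).inter (hVopen i)).preimage ((continuous_apply i).comp fcont))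
    have hO1 : IsOpen (⋂ i, (fun w => f w i) ⁻¹' (V1 i)) :=
      isOpen_iInter_of_finite fun i =>
        (((hB i).inter (hVopen i)).preimage ((continuous_apply i).comp fcont))
    have huO : u ∈ ⋂ i, (fun w => f w i) ⁻¹' (V0 i) :=
      mem_iInter.2 fun i => ⟨hfA i, hfu i⟩
    have hvO : v ∈ ⋂ i, (fun w => f w i) ⁻¹' (V1 i) :=
      mem_iInter.2 fun i => ⟨hfB i, hfv i⟩
    rcases exists_pref_subset hO0 huO with ⟨na, hna⟩
    rcases exists_pref_subset hO1 hvO with ⟨nb, hnb⟩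
    refine ⟨⟨(u, max na (n0 + 1), V0), (v, max nb (n0 + 1), V1)⟩, ?_, ?_, ?_, ?_, ?_⟩
    · refine ⟨huN, fun i => (hA i).inter (hVopen i), ?_⟩
      intro w hw i
      have := (Lcyl_pref_mono (le_max_left _ _)).trans hna hw
      exact mem_iInter.1 this i
    · refine ⟨hvN, fun i => (hB i).inter (hVopen i), ?_⟩
      intro w hw i
      have := (Lcyl_pref_mono (le_max_left _ _)).trans hnb hw
      exact mem_iInter.1 this i
    · exact ⟨lt_of_lt_of_le (Nat.lt_succ_self n0) (le_max_right _ _), hut,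
        fun i => inter_subset_right⟩
    · exact ⟨lt_of_lt_of_le (Nat.lt_succ_self n0) (le_max_right _ _), hvt,
        fun i => inter_subset_right⟩
    · intro i
      exact ((hABdisj i).mono inter_subset_left inter_subset_left)
  -- the root node
  rcases hNS [] hroot with ⟨u0, _, hu0N⟩
  have hrootGood : Good (u0, 0, fun _ => univ) :=
    ⟨hu0N, fun _ => isOpen_univ, fun w _ i => trivial⟩
  -- children function
  let children : {d : Node // Good d} → Node × Node :=
    fun d => Classical.choose (splitex d.1 d.2)
  have hchild : ∀ d : {d : Node // Good d},
      Good (children d).1 ∧ Good (children d).2 ∧ Ext (children d).1 d.1 ∧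
        Ext (children d).2 d.1 ∧
        ∀ i, Disjoint ((children d).1.2.2 i) ((children d).2.2.2 i) :=
    fun d => Classical.choose_spec (splitex d.1 d.2)
  -- the tree of nodes
  let node : List Bool → {d : Node // Good d} := fun s =>
    List.rec (motive := fun _ => {d : Node // Good d}) ⟨(u0, 0, fun _ => univ), hrootGood⟩
      (fun b _ ih => if b then ⟨(children ih).2, (hchild ih).2.1⟩
        else ⟨(children ih).1, (hchild ih).1⟩) s
  have node_ext : ∀ (b : Bool) (s : List Bool), Ext (node (b :: s)).1 (node s).1 := by
    intro b s
    cases b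
    · exact (hchild (node s)).2.2.1
    · exact (hchild (node s)).2.2.2.1
  have node_disj : ∀ (s : List Bool) (i : Fin m),
      Disjoint ((node (false :: s)).1.2.2 i) ((node (true :: s)).1.2.2 i) := by
    intro s i
    exact (hchild (node s)).2.2.2.2 i
  -- paths
  let path : (ℕ → Bool) → ℕ → List Bool := fun σ k =>
    Nat.rec (motive := fun _ => List Bool) [] (fun j ih => σ j :: ih) k
  have path_succ : ∀ σ k, path σ (k + 1) = σ k :: path σ k := fun σ k => rfl
  have path_congr : ∀ σ σ' k, (∀ j < k, σ j = σ' j) → path σ k = path σ' k := by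
    intro σ σ' k
    induction k with
    | zero => intro _; rfl
    | succ k ih =>
      intro h
      rw [path_succ, path_succ, h k (Nat.lt_succ_self k),
        ih (fun j hj => h j (Nat.lt_succ_of_lt hj))]
  -- basic data along a branch
  let nv : (ℕ → Bool) → ℕ → ℕ := fun σ k => (node (path σ k)).1.2.1
  let uu : (ℕ → Bool) → ℕ → (ℕ → ℕ) := fun σ k => (node (path σ k)).1.1
  have nv_mono : ∀ σ k, nv σ k < nv σ (k + 1) := by
    intro σ k
    have := (node_ext (σ k) (path σ k)).1
    simpa [nv, path_succ] using this
  have nv_ge : ∀ σ k, k ≤ nv σ k := by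
    intro σ k
    induction k with
    | zero => exact Nat.zero_le _
    | succ k ih => exact Nat.lt_of_le_of_lt ih (nv_mono σ k)
  have nv_le : ∀ σ k l, k ≤ l → nv σ k ≤ nv σ l := by
    intro σ k l hkl
    induction l with
    | zero => cases Nat.le_zero.1 hkl; exact le_refl _
    | succ l ih =>
      rcases Nat.lt_or_ge k (l + 1) with h | h
      · exact le_trans (ih (Nat.lt_succ_iff.1 h)) (le_of_lt (nv_mono σ l))
      · have : k = l + 1 := le_antisymm hkl h
        subst this; exact le_refl _
  have ucoh : ∀ σ k l, k ≤ l → uu σ l ∈ Lcyl (pref (uu σ k) (nv σ k)) := by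
    intro σ k l hkl
    induction l with
    | zero =>
      cases Nat.le_zero.1 hkl
      exact self_mem_Lcyl_pref _ _
    | succ l ih =>
      rcases Nat.lt_or_ge k (l + 1) with h | h
      · have h1 : uu σ (l + 1) ∈ Lcyl (pref (uu σ l) (nv σ l)) := by
          have := (node_ext (σ l) (path σ l)).2.1
          simpa [uu, nv, path_succ] using this
        have h2 := ih (Nat.lt_succ_iff.1 h)
        rw [mem_Lcyl_pref] at h1 h2 ⊢
        intro j hj
        have hnn : nv σ k ≤ nv σ l := nv_le σ k l (Nat.lt_succ_iff.1 h)
        rw [h1 j (lt_of_lt_of_le hj hnn), h2 j hj]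
      · have : k = l + 1 := le_antisymm hkl h
        subst this
        exact self_mem_Lcyl_pref _ _
  -- the limit branch point
  let ub : (ℕ → Bool) → (ℕ → ℕ) := fun σ j => uu σ (j + 1) j
  have hub : ∀ σ k, ub σ ∈ Lcyl (pref (uu σ k) (nv σ k)) := by
    intro σ k
    rw [mem_Lcyl_pref]
    intro j hj
    show uu σ (j + 1) j = uu σ k j
    rcases le_total (j + 1) k with h | h
    · have := ucoh σ (j + 1) k h
      rw [mem_Lcyl_pref] at this
      exact (this j (lt_of_lt_of_le (Nat.lt_succ_self j) (nv_ge σ (j + 1)))).symm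
    · have := ucoh σ k (j + 1) h
      rw [mem_Lcyl_pref] at this
      exact this j hj
  -- the values
  let zz : (ℕ → Bool) → (Fin m → Y) := fun σ => f (ub σ)
  have hzK : ∀ σ, zz σ ∈ K := fun σ => frange ▸ mem_range_self _
  have hzV : ∀ σ k i, zz σ i ∈ (node (path σ k)).1.2.2 i := by
    intro σ k i
    exact (node (path σ k)).2.2.2 (ub σ) (hub σ k) i
  -- coordinatewise injectivity
  have hinj : ∀ σ σ', σ ≠ σ' → ∀ i, zz σ i ≠ zz σ' i := by
    intro σ σ' hne i
    have hex : ∃ k, σ k ≠ σ' k := by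
      by_contra hc
      push_neg at hc
      exact hne (funext hc)
    classical
    set k := Nat.find hex with hk
    have hkneq : σ k ≠ σ' k := Nat.find_spec hex
    have hagree : ∀ j < k, σ j = σ' j := fun j hj => by
      by_contra hc
      exact Nat.find_min hex hj hc
    have hpath : path σ k = path σ' k := path_congr _ _ _ hagree
    -- one of σ k, σ' k is false and the other true
    have hz1 := hzV σ (k + 1) i
    have hz2 := hzV σ' (k + 1) i
    rw [path_succ] at hz1 hz2
    rw [hpath] at hz1
    cases hbk : σ k
    · have hbk' : σ' k = true := by
        cases hbk' : σ' k
        · rw [hbk, hbk'] at hkneq; exact absurd rfl hkneq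
        · rfl
      rw [hbk] at hz1; rw [hbk'] at hz2
      intro heq
      exact (node_disj (path σ' k) i).ne_of_mem hz1 hz2 heq
    · have hbk' : σ' k = false := by
        cases hbk' : σ' k
        · rfl
        · rw [hbk, hbk'] at hkneq; exact absurd rfl hkneq
      rw [hbk] at hz1; rw [hbk'] at hz2
      intro heq
      exact (node_disj (path σ' k) i).ne_of_mem hz2 hz1 heq.symm
  -- conclusion: an injection from the Cantor set into `Fin m × R`
  have hΦ : ∀ σ : ℕ → Bool, ∃ p : Fin m × ↥R, zz σ p.1 = ↑p.2 := by
    intro σ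
    rcases hcov (zz σ) (hzK σ) with ⟨i, hi⟩
    exact ⟨(i, ⟨zz σ i, hi⟩), rfl⟩
  choose Φ hΦspec using hΦ
  have hΦinj : Function.Injective Φ := by
    intro σ σ' heq
    by_contra hne
    have h1 := hΦspec σ
    have h2 := hΦspec σ'
    rw [heq] at h1
    exact hinj σ σ' hne (Φ σ').1 (h1.trans h2.symm)
  have hcard : 𝔠 ≤ #(Fin m × ↥R) := by
    have h1 : #(ℕ → Bool) ≤ #(Fin m × ↥R) := Cardinal.mk_le_of_injective hΦinj
    have h2 : #(ℕ → Bool) = 𝔠 := by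
      rw [← Cardinal.power_def, Cardinal.mk_bool, Cardinal.mk_nat,
        Cardinal.two_power_aleph0]
    rwa [h2] at h1
  have hlt : #(Fin m × ↥R) < 𝔠 := by
    rw [Cardinal.mk_prod, Cardinal.lift_id, Cardinal.lift_id, Cardinal.mk_fin]
    exact Cardinal.mul_lt_of_lt Cardinal.aleph0_le_continuum
      (lt_of_lt_of_le (Cardinal.nat_lt_aleph0 m) Cardinal.aleph0_le_continuum) hR
  exact absurd hcard (not_le.2 hlt)

end Rainbow
/-! ### Analytic set toolkit -/

section AnalyticTools

lemma analytic_preimage {α β : Type} [TopologicalSpace α] [PolishSpace α]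
    [TopologicalSpace β] [PolishSpace β]
    {s : Set β} (hs : AnalyticSet s) {f : α → β} (hf : Continuous f) :
    AnalyticSet (f ⁻¹' s) := by
  letI := TopologicalSpace.upgradeIsCompletelyMetrizable β
  rw [AnalyticSet] at hs
  rcases hs with rfl | ⟨g, gcont, grange⟩
  · simpa using analyticSet_empty
  · have heq : f ⁻¹' (range g) = Prod.fst '' {p : α × (ℕ → ℕ) | f p.1 = g p.2} := by
      ext a
      constructor
      · rintro ⟨u, hu⟩
        exact ⟨(a, u), hu.symm, rfl⟩
      · rintro ⟨⟨a', u⟩, hp, rfl⟩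
        exact ⟨u, hp.symm⟩
    rw [← grange, heq]
    have hclosed : IsClosed {p : α × (ℕ → ℕ) | f p.1 = g p.2} :=
      isClosed_eq (hf.comp continuous_fst) (gcont.comp continuous_snd)
    exact hclosed.analyticSet.image_of_continuous continuous_fst

lemma analytic_inter {α : Type} [TopologicalSpace α] [PolishSpace α]
    {s t : Set α} (hs : AnalyticSet s) (ht : AnalyticSet t) : AnalyticSet (s ∩ t) := by
  letI := TopologicalSpace.upgradeIsCompletelyMetrizable α
  have heq : s ∩ t = ⋂ b : Bool, (if b then s else t) := by
    ext x
    simp only [mem_inter_iff, mem_iInter]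
    constructor
    · rintro ⟨h1, h2⟩ b; cases b <;> simpa
    · intro h; exact ⟨by simpa using h true, by simpa using h false⟩
  rw [heq]
  exact AnalyticSet.iInter fun b => by cases b <;> simpa

lemma analytic_of_isOpen {α : Type} [TopologicalSpace α] [PolishSpace α]
    {s : Set α} (hs : IsOpen s) : AnalyticSet s := by
  have := hs.analyticSet_image (continuous_id : Continuous (id : α → α))
  simpa using this

end AnalyticTools

/-! ### The main context -/

section Main

variable {X : Type} [TopologicalSpace X] [PolishSpace X]
  [MeasurableSpace X] [BorelSpace X]
  {Y : Type} [TopologicalSpace Y] [PolishSpace Y]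
  [MeasurableSpace Y] [BorelSpace Y]
  (S : Setup X) (F : Set (X × Y))

/-- `x` admits at least `k` distinct section elements. -/
def Xge (k : ℕ) : Set X :=
  {x | ∃ g : Fin k → Y, Function.Injective g ∧ ∀ i, (x, g i) ∈ F}

lemma injOpen (k : ℕ) :
    IsOpen {p : X × (Fin (k + 1) → Y) | Function.Injective p.2} := by
  letI := TopologicalSpace.upgradeIsCompletelyMetrizable X
  letI := TopologicalSpace.upgradeIsCompletelyMetrizable Y
  have hTineq : ∀ (i j : Fin (k + 1)),
      IsOpen {p : X × (Fin (k + 1) → Y) | i ≠ j → p.2 i ≠ p.2 j} := by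
    intro i j
    by_cases hij : i = j
    · subst hij
      have : {p : X × (Fin (k + 1) → Y) | i ≠ i → p.2 i ≠ p.2 i} = Set.univ := by
        ext p; simp
      rw [this]; exact isOpen_univ
    · have : {p : X × (Fin (k + 1) → Y) | i ≠ j → p.2 i ≠ p.2 j}
          = {p : X × (Fin (k + 1) → Y) | p.2 i = p.2 j}ᶜ := by
        ext p
        simp only [mem_setOf_eq, mem_compl_iff]
        constructor
        · intro h; exact h hij
        · intro h _; exact h
      rw [this]
      exact (isClosed_eq (((continuous_apply i).comp continuous_snd))
        (((continuous_apply j).comp continuous_snd))).isOpen_compl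
  have hInjOpen : IsOpen {p : X × (Fin (k + 1) → Y) | Function.Injective p.2} := by
    have heq : {p : X × (Fin (k + 1) → Y) | Function.Injective p.2}
        = ⋂ i, ⋂ j, {p : X × (Fin (k + 1) → Y) | i ≠ j → p.2 i ≠ p.2 j} := by
      ext p
      simp only [mem_setOf_eq, mem_iInter]
      constructor
      · intro hinj i j hij heq
        exact hij (hinj heq)
      · intro h a b hab
        by_contra hne
        exact h a b hne hab
    rw [heq]
    exact isOpen_iInter_of_finite fun i => isOpen_iInter_of_finite fun j => hTineq i j
  exact hInjOpen

lemma Xge_analytic (hF : AnalyticSet F) (k : ℕ) : AnalyticSet (Xge F (k + 1)) := by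
  letI := TopologicalSpace.upgradeIsCompletelyMetrizable X
  letI := TopologicalSpace.upgradeIsCompletelyMetrizable Y
  have hInjOpen : IsOpen {p : X × (Fin (k + 1) → Y) | Function.Injective p.2} :=
    injOpen (X := X) (Y := Y) k
  have hT : AnalyticSet ((⋂ i : Fin (k + 1),
      (fun p : X × (Fin (k + 1) → Y) => (p.1, p.2 i)) ⁻¹' F) ∩
      {p : X × (Fin (k + 1) → Y) | Function.Injective p.2}) := by
    apply analytic_inter
    · exact AnalyticSet.iInter fun i =>
        analytic_preimage hF (continuous_fst.prodMk ((continuous_apply i).comp continuous_snd))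
    · exact analytic_of_isOpen hInjOpen
  have himg : Xge F (k + 1) = Prod.fst '' ((⋂ i : Fin (k + 1),
      (fun p : X × (Fin (k + 1) → Y) => (p.1, p.2 i)) ⁻¹' F) ∩
      {p : X × (Fin (k + 1) → Y) | Function.Injective p.2}) := by
    ext x
    constructor
    · rintro ⟨g, hginj, hgF⟩
      exact ⟨(x, g), ⟨mem_iInter.2 fun i => hgF i, hginj⟩, rfl⟩
    · rintro ⟨⟨x', g⟩, ⟨hmem, hginj⟩, rfl⟩
      exact ⟨g, hginj, fun i => mem_iInter.1 hmem i⟩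
  rw [himg]
  exact hT.image_of_continuous continuous_fst

lemma K_analytic (hF : AnalyticSet F) (k : ℕ) {B : Set X} (hB : MeasurableSet B) :
    AnalyticSet {g : Fin (k + 1) → Y |
      Function.Injective g ∧ ∃ x ∈ B, ∀ i, (x, g i) ∈ F} := by
  letI := TopologicalSpace.upgradeIsCompletelyMetrizable X
  letI := TopologicalSpace.upgradeIsCompletelyMetrizable Y
  have hInjOpen : IsOpen {p : X × (Fin (k + 1) → Y) | Function.Injective p.2} :=
    injOpen (X := X) (Y := Y) k
  have hT : AnalyticSet ((⋂ i : Fin (k + 1),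
      (fun p : X × (Fin (k + 1) → Y) => (p.1, p.2 i)) ⁻¹' F) ∩
      ({p : X × (Fin (k + 1) → Y) | Function.Injective p.2} ∩
        (Prod.fst ⁻¹' B))) := by
    apply analytic_inter
    · exact AnalyticSet.iInter fun i =>
        analytic_preimage hF (continuous_fst.prodMk ((continuous_apply i).comp continuous_snd))
    · exact analytic_inter (analytic_of_isOpen hInjOpen)
        (analytic_preimage hB.analyticSet continuous_fst)
  have himg : {g : Fin (k + 1) → Y | Function.Injective g ∧ ∃ x ∈ B, ∀ i, (x, g i) ∈ F}
      = Prod.snd '' ((⋂ i : Fin (k + 1),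
      (fun p : X × (Fin (k + 1) → Y) => (p.1, p.2 i)) ⁻¹' F) ∩
      ({p : X × (Fin (k + 1) → Y) | Function.Injective p.2} ∩
        (Prod.fst ⁻¹' B))) := by
    ext g
    constructor
    · rintro ⟨hginj, x, hxB, hgF⟩
      exact ⟨(x, g), ⟨mem_iInter.2 fun i => hgF i, hginj, hxB⟩, rfl⟩
    · rintro ⟨⟨x, g'⟩, ⟨hmem, hginj, hxB⟩, rfl⟩
      exact ⟨hginj, x, hxB, fun i => mem_iInter.1 hmem i⟩
  rw [himg]
  exact hT.image_of_continuous continuous_snd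

lemma IC_analytic (hF : AnalyticSet F) {C : Set X} (hC : MeasurableSet C) :
    AnalyticSet {y : Y | ∃ x ∈ C, (x, y) ∈ F} := by
  have heq : {y : Y | ∃ x ∈ C, (x, y) ∈ F} = Prod.snd '' (F ∩ (Prod.fst ⁻¹' C)) := by
    ext y
    constructor
    · rintro ⟨x, hxC, hxy⟩
      exact ⟨(x, y), ⟨hxy, hxC⟩, rfl⟩
    · rintro ⟨⟨x, y'⟩, ⟨hxy, hxC⟩, rfl⟩
      exact ⟨x, hxC, hxy⟩
  rw [heq]
  exact (analytic_inter hF (analytic_preimage hC.analyticSet continuous_fst)).image_of_continuous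
    continuous_snd

section Supply

variable (hsec : ∀ y : Y, {x : X | (x, y) ∈ F} ∈ S.I)
  (hproj : Set.univ \ Prod.fst '' F ∈ S.I)
  (hfin : ∀ x : X, {y : Y | (x, y) ∈ F}.Finite)

include hsec in
lemma ARsmall {R : Set Y} (hR : R.Countable) :
    S.Small {x | ∃ y ∈ R, (x, y) ∈ F} := by
  have : Countable ↥R := hR.to_subtype
  have heq : {x | ∃ y ∈ R, (x, y) ∈ F} = ⋃ y : ↥R, {x | (x, (y : Y)) ∈ F} := by
    ext x
    simp only [mem_setOf_eq, mem_iUnion]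
    constructor
    · rintro ⟨y, hyR, hxy⟩; exact ⟨⟨y, hyR⟩, hxy⟩
    · rintro ⟨⟨y, hyR⟩, hxy⟩; exact ⟨y, hyR, hxy⟩
  rw [heq]
  exact S.small_iUnion fun y => S.small_of_mem (hsec y)

include hsec hproj in
lemma in_supply (hF : AnalyticSet F) {C : Set X} (hCm : MeasurableSet C) (hCp : C ∉ S.I)
    {R : Set Y} (hR : #↥R < 𝔠) :
    ∃ x y, x ∈ C ∧ (x, y) ∈ F ∧ y ∉ R := by
  by_contra h
  push_neg at h
  set IC := {y : Y | ∃ x ∈ C, (x, y) ∈ F} with hIC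
  have hICa : AnalyticSet IC := IC_analytic F hF hCm
  set K1 : Set (Fin 1 → Y) := (fun y => fun _ : Fin 1 => y) '' IC with hK1
  have hK1a : AnalyticSet K1 := hICa.image_of_continuous (continuous_pi fun _ => continuous_id)
  have hcov : ∀ g ∈ K1, ∃ i, g i ∈ R := by
    rintro g ⟨y, ⟨x, hxC, hxy⟩, rfl⟩
    exact ⟨0, h x y hxC hxy⟩
  obtain ⟨C0, hC0c, hC0⟩ := rainbow hK1a hR hcov
  have hIC0 : IC ⊆ C0 := by
    intro y hy
    rcases hC0 _ ⟨y, hy, rfl⟩ with ⟨i, hi⟩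
    exact hi
  have hCsmall : S.Small C := by
    apply Setup.Small.mono S (S.small_union (ARsmall S F hsec hC0c) (S.small_of_mem hproj))
    intro x hxC
    by_cases hx : x ∈ Prod.fst '' F
    · left
      obtain ⟨⟨x', y⟩, hpF, rfl⟩ := hx
      exact ⟨y, hIC0 ⟨x', hxC, hpF⟩, hpF⟩
    · right
      exact ⟨trivial, hx⟩
  exact hCp (Setup.Small.mem S hCsmall)

include hfin in
lemma exists_not_Xge (x : X) : ∃ k : ℕ, x ∉ Xge F (k + 1) := by
  classical
  have hfx := hfin x
  refine ⟨hfx.toFinset.card, ?_⟩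
  rintro ⟨g, hginj, hgF⟩
  have hmap : ∀ i : Fin (hfx.toFinset.card + 1), g i ∈ hfx.toFinset := by
    intro i
    rw [Set.Finite.mem_toFinset]
    exact hgF i
  have hinj2 : Function.Injective (fun i : Fin (hfx.toFinset.card + 1) =>
      (⟨g i, hmap i⟩ : {y // y ∈ hfx.toFinset})) := by
    intro a b hab
    exact hginj (congrArg Subtype.val hab)
  have hcard := Fintype.card_le_of_injective _ hinj2
  simp only [Fintype.card_fin, Fintype.card_coe] at hcard
  omega

lemma snoc_mem_Xge {x : X} {k : ℕ} {g : Fin (k + 1) → Y} (hginj : Function.Injective g)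
    (hgF : ∀ i, (x, g i) ∈ F) {y : Y} (hxy : (x, y) ∈ F) (hy : ∀ i, g i ≠ y) :
    x ∈ Xge F (k + 2) := by
  refine ⟨Fin.snoc g y, ?_, ?_⟩
  · intro a b hab
    by_cases ha : a = Fin.last (k + 1) <;> by_cases hb : b = Fin.last (k + 1)
    · rw [ha, hb]
    · exfalso
      obtain ⟨b', rfl⟩ := Fin.exists_castSucc_eq.2 hb
      rw [ha, Fin.snoc_last, Fin.snoc_castSucc] at hab
      exact hy b' hab.symm
    · exfalso
      obtain ⟨a', rfl⟩ := Fin.exists_castSucc_eq.2 ha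
      rw [hb, Fin.snoc_last, Fin.snoc_castSucc] at hab
      exact hy a' hab
    · obtain ⟨a', rfl⟩ := Fin.exists_castSucc_eq.2 ha
      obtain ⟨b', rfl⟩ := Fin.exists_castSucc_eq.2 hb
      rw [Fin.snoc_castSucc, Fin.snoc_castSucc] at hab
      rw [hginj hab]
  · intro i
    by_cases hi : i = Fin.last (k + 1)
    · rw [hi, Fin.snoc_last]; exact hxy
    · obtain ⟨j, rfl⟩ := Fin.exists_castSucc_eq.2 hi
      rw [Fin.snoc_castSucc]; exact hgF j

include hsec hfin in
lemma descent (hF : AnalyticSet F) {R : Set Y} (hR : #↥R < 𝔠) :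
    ∀ (k : ℕ) (B : Set X), MeasurableSet B → B ∉ S.I →
      (∀ x ∈ B, ∃ y ∈ R, (x, y) ∈ F) → (∀ x ∈ B, x ∉ Xge F (k + 1)) → False := by
  intro k
  induction k with
  | zero =>
    intro B hBm hBp hcover hbound
    apply hBp
    have hBempty : B = ∅ := by
      rw [eq_empty_iff_forall_notMem]
      intro x hx
      rcases hcover x hx with ⟨y, _, hxy⟩
      apply hbound x hx
      refine ⟨fun _ => y, fun a b _ => ?_, fun _ => hxy⟩
      have ha := a.2
      have hb := b.2
      exact Fin.ext (by omega)
    rw [hBempty]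
    exact S.emptyMem
  | succ k ih =>
    intro B hBm hBp hcover hbound
    by_cases hsm : S.Small (B ∩ Xge F (k + 1))
    · rcases hsm with ⟨N', hsub', hN'm, hN'i⟩
      apply ih (B \ N') (hBm.diff hN'm) ?_ ?_ ?_
      · intro hmem
        apply hBp
        have : B ⊆ (B \ N') ∪ N' := by
          intro x hx
          by_cases hxN : x ∈ N'
          · exact Or.inr hxN
          · exact Or.inl ⟨hx, hxN⟩
        exact Setup.Small.mem S (Setup.Small.mono S (S.small_union (S.small_of_mem hmem) ⟨N', subset_rfl, hN'm, hN'i⟩) this)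
      · exact fun x hx => hcover x hx.1
      · intro x hx hXge
        exact hx.2 (hsub' ⟨hx.1, hXge⟩)
    · -- extract an exactly-(k+1)-fold positive Borel set
      have hXa : AnalyticSet (B ∩ Xge F (k + 1)) :=
        analytic_inter hBm.analyticSet (Xge_analytic F hF k)
      obtain ⟨H', N'', hsub'', hH'm, hN''m, hN''i, hHN''⟩ := S.analytic_approx hXa
      set B2 := H' \ N'' with hB2
      have hB2m : MeasurableSet B2 := hH'm.diff hN''m
      have hB2sub : B2 ⊆ B ∩ Xge F (k + 1) := hHN''
      have hB2p : B2 ∉ S.I := by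
        intro hmem
        apply hsm
        have : B ∩ Xge F (k + 1) ⊆ B2 ∪ N'' := by
          intro x hx
          by_cases hxN : x ∈ N''
          · exact Or.inr hxN
          · exact Or.inl ⟨hsub'' hx, hxN⟩
        exact Setup.Small.mono S (S.small_union (S.small_of_mem hmem) ⟨N'', subset_rfl, hN''m, hN''i⟩) this
      set K := {g : Fin (k + 1) → Y | Function.Injective g ∧ ∃ x ∈ B2, ∀ i, (x, g i) ∈ F}
        with hK
      have hKa : AnalyticSet K := K_analytic F hF k hB2m
      have hcovK : ∀ g ∈ K, ∃ i, g i ∈ R := by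
        rintro g ⟨hginj, x, hxB2, hgF⟩
        have hxB : x ∈ B := (hB2sub hxB2).1
        obtain ⟨y, hyR, hxy⟩ := hcover x hxB
        by_cases hy : ∃ i, g i = y
        · rcases hy with ⟨i, rfl⟩
          exact ⟨i, hyR⟩
        · exfalso
          push_neg at hy
          exact hbound x hxB (snoc_mem_Xge F hginj hgF hxy hy)
      obtain ⟨C0, hC0c, hC0cov⟩ := rainbow hKa hR hcovK
      apply hB2p
      have hsubC0 : B2 ⊆ {x | ∃ y ∈ C0, (x, y) ∈ F} := by
        intro x hx
        obtain ⟨g, hginj, hgF⟩ := (hB2sub hx).2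
        obtain ⟨i, hi⟩ := hC0cov g ⟨hginj, x, hx, hgF⟩
        exact ⟨g i, hi, hgF i⟩
      exact Setup.Small.mem S (Setup.Small.mono S (ARsmall S F hsec hC0c) hsubC0)

include hsec hfin in
lemma out_crux (hF : AnalyticSet F) {C : Set X} (hCm : MeasurableSet C) (hCp : C ∉ S.I)
    {R : Set Y} (hR : #↥R < 𝔠) :
    ∃ x ∈ C, ∀ y ∈ R, (x, y) ∉ F := by
  by_contra h
  push_neg at h
  -- every point of `C` is covered
  have hcover : ∀ x ∈ C, ∃ y ∈ R, (x, y) ∈ F := h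
  -- step 1: a level where the complement is not small
  have hstep1 : ∃ k, ¬ S.Small (C \ Xge F (k + 1)) := by
    by_contra hk
    push_neg at hk
    apply hCp
    have hCsub : C ⊆ ⋃ k : ℕ, (C \ Xge F (k + 1)) := by
      intro x hx
      obtain ⟨k, hknot⟩ := exists_not_Xge F hfin x
      exact mem_iUnion.2 ⟨k, hx, hknot⟩
    exact Setup.Small.mem S (Setup.Small.mono S (S.small_iUnion hk) hCsub)
  obtain ⟨k0, hk0⟩ := hstep1
  obtain ⟨H, N, hsub, hHm, hNm, hNi, hHN⟩ := S.analytic_approx (Xge_analytic F hF k0)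
  set B1 := C \ H with hB1
  have hB1m : MeasurableSet B1 := hCm.diff hHm
  have hB1p : B1 ∉ S.I := by
    intro hmem
    apply hk0
    have hss : C \ Xge F (k0 + 1) ⊆ B1 ∪ N := by
      rintro x ⟨hxC, hxn⟩
      by_cases hxH : x ∈ H
      · right
        by_contra hxN
        exact hxn (hHN ⟨hxH, hxN⟩)
      · left; exact ⟨hxC, hxH⟩
    exact Setup.Small.mono S (S.small_union (S.small_of_mem hmem) ⟨N, subset_rfl, hNm, hNi⟩) hss
  exact descent S F hsec hfin hF hR k0 B1 hB1m hB1p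
    (fun x hx => hcover x hx.1)
    (fun x hx hXge => hx.2 (hsub hXge))

end Supply
end Main

lemma card_measurable_le (X : Type) [TopologicalSpace X] [PolishSpace X]
    [MeasurableSpace X] [BorelSpace X] :
    #{S : Set X | MeasurableSet S} ≤ 𝔠 := by
  obtain ⟨b, hbc, -, hbasis⟩ := TopologicalSpace.exists_countable_basis X
  haveI : Countable ↥b := hbc.to_subtype
  have hopens : #{s : Set X | IsOpen s} ≤ 𝔠 := by
    have hinj : Function.Injective
        (fun u : {s : Set X | IsOpen s} => {v : ↥b | (v : Set X) ⊆ ↑u}) := by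
      intro u u' he
      replace he : {v : ↥b | (v : Set X) ⊆ ↑u} = {v : ↥b | (v : Set X) ⊆ ↑u'} := he
      apply Subtype.ext
      have hfam : {s : Set X | s ∈ b ∧ s ⊆ ↑u} = {s : Set X | s ∈ b ∧ s ⊆ ↑u'} := by
        ext s
        simp only [mem_setOf_eq]
        constructor
        · rintro ⟨hsb, hsu⟩
          have hmem : (⟨s, hsb⟩ : ↥b) ∈ {v : ↥b | (v : Set X) ⊆ ↑u} := hsu
          rw [he] at hmem
          exact ⟨hsb, hmem⟩
        · rintro ⟨hsb, hsu⟩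
          have hmem : (⟨s, hsb⟩ : ↥b) ∈ {v : ↥b | (v : Set X) ⊆ ↑u'} := hsu
          rw [← he] at hmem
          exact ⟨hsb, hmem⟩
      rw [hbasis.open_eq_sUnion' u.2, hbasis.open_eq_sUnion' u'.2, hfam]
    calc #{s : Set X | IsOpen s} ≤ #(Set ↥b) := Cardinal.mk_le_of_injective hinj
      _ = 2 ^ #↥b := Cardinal.mk_set
      _ ≤ 2 ^ ℵ₀ := by
          apply Cardinal.power_le_power_left two_ne_zero
          exact Cardinal.mk_le_aleph0
      _ = 𝔠 := Cardinal.two_power_aleph0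
  have hgen : (‹MeasurableSpace X› : MeasurableSpace X)
      = MeasurableSpace.generateFrom {s : Set X | IsOpen s} := by
    rw [BorelSpace.measurable_eq (α := X)]
    rfl
  have hcont := MeasurableSpace.cardinal_measurableSet_le_continuum
    (α := X) (s := {s : Set X | IsOpen s}) hopens
  rw [← hgen] at hcont
  exact hcont




end StmtAux

open StmtAux in
theorem stmt_10 {X : Type} [TopologicalSpace X] [PolishSpace X] [Uncountable X]
    [MeasurableSpace X] [BorelSpace X]
    {Y : Type} [TopologicalSpace Y] [PolishSpace Y] [MeasurableSpace Y] [BorelSpace Y]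
    (𝓘 : Set (Set X))
    (hDown : ∀ A B : Set X, A ⊆ B → B ∈ 𝓘 → A ∈ 𝓘)
    (hUnion : ∀ f : ℕ → Set X, (∀ n, f n ∈ 𝓘) → (⋃ n, f n) ∈ 𝓘)
    (hProper : (univ : Set X) ∉ 𝓘)
    (hSing : ∀ x : X, ({x} : Set X) ∈ 𝓘)
    (hBase : ∀ A ∈ 𝓘, ∃ B : Set X, A ⊆ B ∧ MeasurableSet B ∧ B ∈ 𝓘)
    (hccc : ∀ 𝒟 : Set (Set X), (∀ D ∈ 𝒟, MeasurableSet D ∧ D ∉ 𝓘) →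
      𝒟.PairwiseDisjoint id → 𝒟.Countable)
    (F : Set (X × Y)) (hF : MeasureTheory.AnalyticSet F)
    (h1 : ∀ y : Y, {x : X | (x, y) ∈ F} ∈ 𝓘)
    (h2 : univ \ Prod.fst '' F ∈ 𝓘)
    (h3 : ∀ x : X, {y : Y | (x, y) ∈ F}.Finite) :
    ∃ T : Set Y, ∀ B : Set X, MeasurableSet B → B ∉ 𝓘 →
      ({x : X | ({y : Y | (x, y) ∈ F} ∩ T).Nonempty} ∩ B).Nonempty ∧
        (B \ {x : X | ({y : Y | (x, y) ∈ F} ∩ T).Nonempty}).Nonempty := by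
  classical
  obtain ⟨x0⟩ : Nonempty X := inferInstance
  set S : Setup X := ⟨𝓘, hDown, hUnion, hBase, hccc,
    hDown ∅ {x0} (empty_subset _) (hSing x0)⟩ with hS
  -- the index type of all positive Borel sets
  set ι := {C : Set X // MeasurableSet C ∧ C ∉ 𝓘} with hι
  obtain ⟨r, wo, hr⟩ := Cardinal.ord_eq ι
  haveI : IsWellOrder ι r := wo
  have hcard_ι : Cardinal.mk ι ≤ Cardinal.continuum := by
    refine le_trans (Cardinal.mk_le_of_injective (f := fun C : ι =>
      (⟨C.1, C.2.1⟩ : {S : Set X | MeasurableSet S})) ?_) (card_measurable_le X)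
    intro a b hab
    apply Subtype.ext
    exact congrArg (fun z : {S : Set X | MeasurableSet S} => z.1) hab
  have hseg : ∀ i : ι, Cardinal.mk {j : ι // r j i} < Cardinal.continuum := by
    intro i
    have h1' := Cardinal.card_typein_lt (r := r) i hr
    change Cardinal.mk {j : ι // r j i} < Cardinal.mk ι at h1'
    exact lt_of_lt_of_le h1' hcard_ι
  -- the per-stage choice
  have stage : ∀ i : ι, ∀ prior : {j : ι // r j i} → X × X × Y,
      ∃ v : X × X × Y,
        v.1 ∈ i.1 ∧ (∀ j : {j : ι // r j i}, (v.1, (prior j).2.2) ∉ F) ∧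
        v.2.1 ∈ i.1 ∧ (v.2.1, v.2.2) ∈ F ∧ (v.1, v.2.2) ∉ F ∧
          (∀ j : {j : ι // r j i}, ((prior j).1, v.2.2) ∉ F) := by
    intro i prior
    have hR1 : Cardinal.mk ↥(Set.range (fun j : {j : ι // r j i} => (prior j).2.2)) < Cardinal.continuum :=
      lt_of_le_of_lt Cardinal.mk_range_le (hseg i)
    obtain ⟨xo, hxoC, hxoav⟩ := out_crux S F h1 h3 hF i.2.1 i.2.2 hR1
    set Φ : Set Y := {y | (xo, y) ∈ F} ∪
      ⋃ j : {j : ι // r j i}, {y | ((prior j).1, y) ∈ F} with hΦ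
    have hΦcard : Cardinal.mk ↥Φ < Cardinal.continuum := by
      apply lt_of_le_of_lt (Cardinal.mk_union_le _ _)
      apply Cardinal.add_lt_of_lt Cardinal.aleph0_le_continuum
      · exact lt_of_lt_of_le (Cardinal.lt_aleph0_iff_set_finite.2 (h3 xo))
          Cardinal.aleph0_le_continuum
      · apply lt_of_le_of_lt Cardinal.mk_iUnion_le_sum_mk
        apply lt_of_le_of_lt (Cardinal.sum_le_sum _ (fun _ => Cardinal.aleph0) ?_)
        · rw [Cardinal.sum_const']
          exact Cardinal.mul_lt_of_lt Cardinal.aleph0_le_continuum (hseg i)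
            Cardinal.aleph0_lt_continuum
        · intro j
          exact le_of_lt (Cardinal.lt_aleph0_iff_set_finite.2 (h3 _))
    obtain ⟨xi, yi, hxiC, hxiyF, hyiΦ⟩ := in_supply S F h1 h2 hF i.2.1 i.2.2 hΦcard
    refine ⟨(xo, xi, yi), hxoC, ?_, hxiC, hxiyF, ?_, ?_⟩
    · intro j
      exact hxoav _ (Set.mem_range_self j)
    · intro hmem
      exact hyiΦ (Or.inl hmem)
    · intro j hmem
      exact hyiΦ (Or.inr (Set.mem_iUnion.2 ⟨j, hmem⟩))
  -- the transfinite recursion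
  let val : ι → X × X × Y :=
    fun i => wo.wf.fix (fun i ih => Classical.choose (stage i (fun j => ih j.1 j.2))) i
  have hval : ∀ i : ι, val i = Classical.choose (stage i (fun j => val j.1)) := by
    intro i
    exact WellFounded.fix_eq wo.wf _ i
  have hspec : ∀ i : ι,
      (val i).1 ∈ i.1 ∧ (∀ j : {j : ι // r j i}, ((val i).1, (val j.1).2.2) ∉ F) ∧
      (val i).2.1 ∈ i.1 ∧ ((val i).2.1, (val i).2.2) ∈ F ∧ ((val i).1, (val i).2.2) ∉ F ∧
        (∀ j : {j : ι // r j i}, ((val j.1).1, (val i).2.2) ∉ F) := by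
    intro i
    have h := Classical.choose_spec (stage i (fun j : {j : ι // r j i} => val j.1))
    rw [← hval i] at h
    exact h
  -- the final transversal
  refine ⟨range (fun i : ι => (val i).2.2), ?_⟩
  intro B hBm hBp
  set i : ι := ⟨B, hBm, hBp⟩ with hi
  obtain ⟨hxo, hout, hxi, hin, hself, hback⟩ := hspec i
  constructor
  · exact ⟨(val i).2.1, ⟨(val i).2.2, hin, Set.mem_range_self i⟩, hxi⟩
  · refine ⟨(val i).1, hxo, ?_⟩
    rintro ⟨y, hyF, ⟨j, rfl⟩⟩
    rcases trichotomous_of r j i with hji | hji | hji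
    · exact hout ⟨j, hji⟩ hyF
    · subst hji
      exact hself hyF
    · exact (hspec j).2.2.2.2.2 ⟨i, hji⟩ hyF
end

section
/- Let (X, 𝓘) be a Polish ideal space with 𝓘 c.c.c. Assume a family 𝓕 ⊆ 𝓘 satisfies: (1) 𝓕 is point-finite (for every x ∈ X, the set {F ∈ 𝓕 : x ∈ F} is finite); (2) for every 𝓘-positive Borel set B with B ⊆ [⋃𝓕]_𝓘, the family {F ∈ 𝓕 : F ∩ B ≠ ∅} has cardinality 2^ℵ₀. Then there exists a subfamily 𝓕' ⊆ 𝓕 such that ⋃𝓕' is completely 𝓘-nonmeasurable in [⋃𝓕]_𝓘. -/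
open Set

private lemma ideal_union2 {X : Type} (𝓘 : Set (Set X))
    (hUnion : ∀ f : ℕ → Set X, (∀ n, f n ∈ 𝓘) → (⋃ n, f n) ∈ 𝓘)
    {A B : Set X} (hA : A ∈ 𝓘) (hB : B ∈ 𝓘) : A ∪ B ∈ 𝓘 := by
  have h : A ∪ B = ⋃ n : ℕ, (if n = 0 then A else B) := by
    ext x
    simp only [Set.mem_union, Set.mem_iUnion]
    constructor
    · rintro (hx | hx)
      · exact ⟨0, by simpa⟩
      · exact ⟨1, by simpa⟩
    · rintro ⟨n, hn⟩
      by_cases h0 : n = 0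
      · left; simpa [h0] using hn
      · right; simpa [h0] using hn
  rw [h]
  exact hUnion _ (fun n => by by_cases h0 : n = 0 <;> simp [h0, hA, hB])

private lemma ideal_sUnion {X : Type} (𝓘 : Set (Set X))
    (hUnion : ∀ f : ℕ → Set X, (∀ n, f n ∈ 𝓘) → (⋃ n, f n) ∈ 𝓘)
    (hempty : ∅ ∈ 𝓘)
    {S : Set (Set X)} (hS : S.Countable) (h : ∀ s ∈ S, s ∈ 𝓘) : ⋃₀ S ∈ 𝓘 := by
  rcases S.eq_empty_or_nonempty with rfl | hne
  · simpa using hempty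
  · obtain ⟨f, rfl⟩ := Set.Countable.exists_eq_range hS hne
    rw [Set.sUnion_range]
    exact hUnion f (fun n => h _ (Set.mem_range_self n))

/-- Key lemma: for a ccc ideal, any point-finite family of positive Borel sets
has a countable index type. -/
private lemma lemC {X : Type} [MeasurableSpace X] (𝓘 : Set (Set X))
    (hDown : ∀ A B : Set X, A ⊆ B → B ∈ 𝓘 → A ∈ 𝓘)
    (hUnion : ∀ f : ℕ → Set X, (∀ n, f n ∈ 𝓘) → (⋃ n, f n) ∈ 𝓘)
    (hempty : (∅ : Set X) ∈ 𝓘)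
    (hccc : ∀ 𝒟 : Set (Set X), (∀ D ∈ 𝒟, MeasurableSet D ∧ D ∉ 𝓘) →
      𝒟.PairwiseDisjoint id → 𝒟.Countable)
    {ι : Type} (B : ι → Set X)
    (hmeas : ∀ i, MeasurableSet (B i)) (hpos : ∀ i, B i ∉ 𝓘)
    (hpf : ∀ x : X, {i | x ∈ B i}.Finite) : Countable ι := by
  classical
  rcases isEmpty_or_nonempty ι with hι | hι
  · infer_instance
  -- the "trace index" sets
  set S : Set X → Set ι := fun d => {i | d ∩ B i ∉ 𝓘} with hS
  -- Zorn: maximal pairwise disjoint family of positive Borel sets with countable trace index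
  have hzorn : ∀ P : Set X → Prop,
      ∃ 𝒟, Maximal (· ∈ {𝒟 : Set (Set X) |
        (∀ d ∈ 𝒟, MeasurableSet d ∧ d ∉ 𝓘 ∧ P d) ∧ 𝒟.PairwiseDisjoint id}) 𝒟 := by
    intro P
    apply zorn_subset
    intro c hc hchain
    refine ⟨⋃₀ c, ⟨?_, ?_⟩, fun s hs => subset_sUnion_of_mem hs⟩
    · rintro d ⟨t, htc, hdt⟩
      exact (hc htc).1 d hdt
    · rintro a ⟨t1, ht1, ha⟩ b ⟨t2, ht2, hb⟩ hne
      rcases hchain.total ht1 ht2 with h12 | h21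
      · exact (hc ht2).2 (h12 ha) hb hne
      · exact (hc ht1).2 ha (h21 hb) hne
  obtain ⟨𝒟₀, h𝒟₀⟩ := hzorn (fun d => (S d).Countable)
  have hcnt₀ : 𝒟₀.Countable :=
    hccc 𝒟₀ (fun d hd => ⟨(h𝒟₀.1.1 d hd).1, (h𝒟₀.1.1 d hd).2.1⟩) h𝒟₀.1.2
  set p₀ : Set X := univ \ ⋃₀ 𝒟₀ with hp₀def
  have hp₀meas : MeasurableSet p₀ :=
    MeasurableSet.univ.diff (MeasurableSet.sUnion hcnt₀ (fun t ht => (h𝒟₀.1.1 t ht).1))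
  by_cases hp₀ : p₀ ∈ 𝓘
  · -- every index is in some countable trace set
    have hcov : ∀ i : ι, ∃ d ∈ 𝒟₀, i ∈ S d := by
      intro i
      by_contra hcon
      push_neg at hcon
      have hBi : B i ⊆ (⋃₀ ((fun d => d ∩ B i) '' 𝒟₀)) ∪ p₀ := by
        intro x hx
        by_cases hxd : ∃ d ∈ 𝒟₀, x ∈ d
        · obtain ⟨d, hd, hxd⟩ := hxd
          exact Or.inl ⟨d ∩ B i, ⟨d, hd, rfl⟩, hxd, hx⟩
        · push_neg at hxd
          exact Or.inr ⟨trivial, fun hm => by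
            obtain ⟨d, hd, hxd2⟩ := hm; exact hxd d hd hxd2⟩
      have hU : (⋃₀ ((fun d => d ∩ B i) '' 𝒟₀)) ∈ 𝓘 := by
        refine ideal_sUnion 𝓘 hUnion hempty (hcnt₀.image _) ?_
        rintro s ⟨d, hd, rfl⟩
        have hi : i ∉ S d := hcon d hd
        simpa [hS] using hi
      exact hpos i (hDown _ _ hBi (ideal_union2 𝓘 hUnion hU hp₀))
    have : (univ : Set ι).Countable := by
      have hsub : (univ : Set ι) ⊆ ⋃ d ∈ 𝒟₀, S d := by
        intro i _
        obtain ⟨d, hd, hid⟩ := hcov i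
        exact Set.mem_biUnion hd hid
      exact Set.Countable.mono hsub (Set.Countable.biUnion hcnt₀
        (fun d hd => (h𝒟₀.1.1 d hd).2.2))
    exact Set.countable_univ_iff.1 this
  · exfalso
    -- key: every positive Borel subset of p₀ has uncountable trace index
    have key : ∀ r : Set X, MeasurableSet r → r ∉ 𝓘 → r ⊆ p₀ → ¬ (S r).Countable := by
      intro r hm hrpos hsub hcont
      have hdisj : ∀ d ∈ 𝒟₀, Disjoint r d := by
        intro d hd
        rw [Set.disjoint_left]
        intro x hxr hxd
        exact (hsub hxr).2 ⟨d, hd, hxd⟩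
      have hins : insert r 𝒟₀ ∈ {𝒟 : Set (Set X) |
          (∀ d ∈ 𝒟, MeasurableSet d ∧ d ∉ 𝓘 ∧ (S d).Countable) ∧ 𝒟.PairwiseDisjoint id} := by
        constructor
        · rintro d (rfl | hd)
          · exact ⟨hm, hrpos, hcont⟩
          · exact h𝒟₀.1.1 d hd
        · exact h𝒟₀.1.2.insert (fun d hd _ => hdisj d hd)
      have hmem : r ∈ 𝒟₀ := h𝒟₀.2 hins (Set.subset_insert _ _) (Set.mem_insert _ _)
      have : r ⊆ ∅ := by
        intro x hxr
        exact absurd ⟨r, hmem, hxr⟩ (hsub hxr).2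
      exact hrpos (hDown _ _ this hempty)
    -- the "at least n witnesses from T" sets
    set L : ℕ → Set ι → Set X :=
      fun n T => {x | ∃ s : Finset ι, ↑s ⊆ T ∧ n ≤ s.card ∧ ∀ i ∈ s, x ∈ B i} with hL
    have step : ∀ T : Set ι, T.Countable → ∀ n : ℕ, (p₀ \ L n T) ∈ 𝓘 →
        ∃ T' : Set ι, T'.Countable ∧ (p₀ \ L (n + 1) T') ∈ 𝓘 := by
      intro T hT n hsmall
      obtain ⟨𝒟, h𝒟⟩ := hzorn (fun d => ∃ i, i ∉ T ∧ d ⊆ p₀ ∩ B i)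
      have hcnt : 𝒟.Countable :=
        hccc 𝒟 (fun d hd => ⟨(h𝒟.1.1 d hd).1, (h𝒟.1.1 d hd).2.1⟩) h𝒟.1.2
      have hUmeas : MeasurableSet (⋃₀ 𝒟) :=
        MeasurableSet.sUnion hcnt (fun t ht => (h𝒟.1.1 t ht).1)
      -- the choice of witness index for each member of 𝒟
      have hpick : ∀ d ∈ 𝒟, ∃ i, i ∉ T ∧ d ⊆ p₀ ∩ B i := fun d hd => (h𝒟.1.1 d hd).2.2
      set f : Set X → ι := fun d =>
        if h : ∃ i, i ∉ T ∧ d ⊆ p₀ ∩ B i then h.choose else Classical.arbitrary ι with hf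
      have hfspec : ∀ d ∈ 𝒟, f d ∉ T ∧ d ⊆ p₀ ∩ B (f d) := by
        intro d hd
        have h := hpick d hd
        simp only [hf, dif_pos h]
        exact h.choose_spec
      set T' : Set ι := T ∪ (f '' 𝒟) with hT'
      have hT'c : T'.Countable := hT.union (hcnt.image f)
      -- remainder is small
      have hr : p₀ \ ⋃₀ 𝒟 ∈ 𝓘 := by
        by_contra hrpos
        have hSr : ¬ (S (p₀ \ ⋃₀ 𝒟)).Countable :=
          key _ (hp₀meas.diff hUmeas) hrpos Set.diff_subset
        have : ∃ i ∈ S (p₀ \ ⋃₀ 𝒟), i ∉ T := by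
          by_contra hcon
          push_neg at hcon
          exact hSr (hT.mono hcon)
        obtain ⟨i, hiS, hiT⟩ := this
        set d' : Set X := (p₀ \ ⋃₀ 𝒟) ∩ B i with hd'
        have hd'pos : d' ∉ 𝓘 := hiS
        have hd'disj : ∀ d ∈ 𝒟, Disjoint d' d := by
          intro d hd
          rw [Set.disjoint_left]
          intro x hxd' hxd
          exact hxd'.1.2 ⟨d, hd, hxd⟩
        have hins : insert d' 𝒟 ∈ {𝒟 : Set (Set X) |
            (∀ d ∈ 𝒟, MeasurableSet d ∧ d ∉ 𝓘 ∧ ∃ i, i ∉ T ∧ d ⊆ p₀ ∩ B i) ∧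
              𝒟.PairwiseDisjoint id} := by
          constructor
          · rintro d (rfl | hd)
            · exact ⟨(hp₀meas.diff hUmeas).inter (hmeas i), hd'pos,
                ⟨i, hiT, fun x hx => ⟨hx.1.1, hx.2⟩⟩⟩
            · exact h𝒟.1.1 d hd
          · exact h𝒟.1.2.insert (fun d hd _ => hd'disj d hd)
        have hmem : d' ∈ 𝒟 := h𝒟.2 hins (Set.subset_insert _ _) (Set.mem_insert _ _)
        have : d' ⊆ ∅ := fun x hx => absurd ⟨d', hmem, hx⟩ hx.1.2
        exact hd'pos (hDown _ _ this hempty)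
      refine ⟨T', hT'c, ?_⟩
      have hsub : p₀ \ L (n + 1) T' ⊆ (p₀ \ L n T) ∪ (p₀ \ ⋃₀ 𝒟) := by
        intro x hx
        by_cases hxL : x ∈ L n T
        · by_cases hxU : x ∈ ⋃₀ 𝒟
          · exfalso
            obtain ⟨d, hd, hxd⟩ := hxU
            obtain ⟨s, hsT, hscard, hsmem⟩ := hxL
            have hfd := hfspec d hd
            have hfds : f d ∉ s := fun hin => hfd.1 (hsT hin)
            refine hx.2 ⟨insert (f d) s, ?_, ?_, ?_⟩
            · intro j hj
              rcases Finset.mem_insert.1 hj with rfl | hj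
              · exact Or.inr ⟨d, hd, rfl⟩
              · exact Or.inl (hsT hj)
            · rw [Finset.card_insert_of_notMem hfds]
              omega
            · intro j hj
              rcases Finset.mem_insert.1 hj with rfl | hj
              · exact (hfd.2 hxd).2
              · exact hsmem j hj
          · exact Or.inr ⟨hx.1, hxU⟩
        · exact Or.inl ⟨hx.1, hxL⟩
      exact hDown _ _ hsub (ideal_union2 𝓘 hUnion hsmall hr)
    -- iterate
    have seq : ∀ n : ℕ, ∃ T : Set ι, T.Countable ∧ (p₀ \ L n T) ∈ 𝓘 := by
      intro n
      induction n with
      | zero =>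
        refine ⟨∅, Set.countable_empty, ?_⟩
        have : p₀ \ L 0 ∅ = ∅ := by
          ext x
          simp only [Set.mem_diff, Set.mem_empty_iff_false, iff_false, not_and, not_not]
          intro _
          exact ⟨∅, by simp⟩
        rw [this]; exact hempty
      | succ n ih =>
        obtain ⟨T, hTc, hTs⟩ := ih
        exact step T hTc n hTs
    choose T hTc hTs using seq
    have hcover : p₀ ⊆ ⋃ n, (p₀ \ L n (T n)) := by
      intro x hx
      have hfin := hpf x
      set m : ℕ := hfin.toFinset.card with hm
      refine Set.mem_iUnion.2 ⟨m + 1, hx, ?_⟩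
      rintro ⟨s, hsT, hscard, hsmem⟩
      have hsub : s ⊆ hfin.toFinset := by
        intro i hi
        simp only [Set.Finite.mem_toFinset, Set.mem_setOf_eq]
        exact hsmem i hi
      have := Finset.card_le_card hsub
      omega
    exact hp₀ (hDown _ _ hcover (hUnion _ (fun n => hTs n)))


private lemma mainAux {X : Type} [MeasurableSpace X]
    (𝓘 : Set (Set X))
    (hDown : ∀ A B : Set X, A ⊆ B → B ∈ 𝓘 → A ∈ 𝓘)
    (hUnion : ∀ f : ℕ → Set X, (∀ n, f n ∈ 𝓘) → (⋃ n, f n) ∈ 𝓘)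
    (hempty : (∅ : Set X) ∈ 𝓘)
    (hccc : ∀ 𝒟 : Set (Set X), (∀ D ∈ 𝒟, MeasurableSet D ∧ D ∉ 𝓘) →
      𝒟.PairwiseDisjoint id → 𝒟.Countable)
    (𝓕 : Set (Set X))
    (hpf : ∀ x : X, {F | F ∈ 𝓕 ∧ x ∈ F}.Finite)
    (E : Set X)
    (h2 : ∀ B : Set X, MeasurableSet B → B ∉ 𝓘 → B ⊆ E →
      Cardinal.mk ↥{F | F ∈ 𝓕 ∧ (F ∩ B).Nonempty} = Cardinal.continuum)
    {ι : Type} [LinearOrder ι] [WellFoundedLT ι]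
    (hmkι : Cardinal.mk ι = Cardinal.continuum)
    (hsmall : ∀ j : ι, Cardinal.mk {j' : ι // j' < j} < Cardinal.continuum)
    (hP : {B : Set X | MeasurableSet B ∧ B ∉ 𝓘 ∧ B ⊆ E}.Nonempty)
    (hPcard : Cardinal.mk ↥{B : Set X | MeasurableSet B ∧ B ∉ 𝓘 ∧ B ⊆ E}
      ≤ Cardinal.continuum) :
    ∃ 𝓕' ⊆ 𝓕, ∀ B : Set X, MeasurableSet B → B ∉ 𝓘 → B ⊆ E →
      (⋃₀ 𝓕' ∩ B).Nonempty ∧ (B \ ⋃₀ 𝓕').Nonempty := by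
  classical
  set PosB : Set (Set X) := {B | MeasurableSet B ∧ B ∉ 𝓘 ∧ B ⊆ E} with hPosB
  haveI : Nonempty ↥PosB := hP.to_subtype
  obtain ⟨emb⟩ : Nonempty (↥PosB ↪ ι) := by
    rw [← Cardinal.le_def, hmkι]; exact hPcard
  set g : ι → ↥PosB := Function.invFun emb with hg
  have hgsurj : Function.Surjective g := Function.invFun_surjective emb.injective
  obtain ⟨e0⟩ : Nonempty (ι × ι ≃ ι) := by
    rw [← Cardinal.eq, Cardinal.mk_prod, Cardinal.lift_id, hmkι,
      Cardinal.mul_eq_self Cardinal.aleph0_le_continuum]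
  set e : ι ≃ ι × ι := e0.symm with he
  set Bof : ι → Set X := fun j => ((g (e j).2 : Set X)) with hBof
  have hBofP : ∀ j, Bof j ∈ PosB := fun j => (g (e j).2).2
  have hstep : ∀ (j : ι) (prev : ∀ j', j' < j → Set X),
      ∃ F : Set X, (F ∈ 𝓕 ∧ (F ∩ Bof j).Nonempty) ∧
        ∀ (j' : ι) (h : j' < j), F ≠ prev j' h := by
    intro j prev
    by_contra hcon
    push_neg at hcon
    have hsub : {F : Set X | F ∈ 𝓕 ∧ (F ∩ Bof j).Nonempty} ⊆
        Set.range (fun p : {j' : ι // j' < j} => prev p.1 p.2) := by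
      rintro F ⟨hF1, hF2⟩
      obtain ⟨j', h, hh⟩ := hcon F ⟨hF1, hF2⟩
      exact ⟨⟨j', h⟩, hh.symm⟩
    have hle : Cardinal.mk ↥{F : Set X | F ∈ 𝓕 ∧ (F ∩ Bof j).Nonempty}
        ≤ Cardinal.mk {j' : ι // j' < j} :=
      (Cardinal.mk_le_mk_of_subset hsub).trans (Cardinal.mk_range_le)
    have hlt : Cardinal.mk {j' : ι // j' < j} < Cardinal.continuum := hsmall j
    rw [h2 (Bof j) (hBofP j).1 (hBofP j).2.1 (hBofP j).2.2] at hle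
    exact absurd (hle.trans_lt hlt) (lt_irrefl _)
  have wf : WellFounded ((· < ·) : ι → ι → Prop) := wellFounded_lt
  set u : ι → Set X := wf.fix (fun j rec => (hstep j rec).choose) with hu
  have huspec : ∀ j : ι, (u j ∈ 𝓕 ∧ (u j ∩ Bof j).Nonempty) ∧
      ∀ (j' : ι) (h : j' < j), u j ≠ u j' := by
    intro j
    have hfix : u j = (hstep j (fun y _ => u y)).choose := by
      rw [hu]; exact wf.fix_eq _ j
    rw [hfix]
    exact (hstep j (fun y _ => u y)).choose_spec
  have huinj : Function.Injective u := by
    intro a b hab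
    rcases lt_trichotomy a b with h | h | h
    · exact absurd hab.symm ((huspec b).2 a h)
    · exact h
    · exact absurd hab ((huspec a).2 b h)
  -- there is a good piece
  have hgood : ∃ ξ : ι, ∀ Bs : Set X, MeasurableSet Bs → Bs ∉ 𝓘 → Bs ⊆ E →
      ¬ Bs ⊆ ⋃₀ (u '' {j | (e j).1 = ξ}) := by
    by_contra hcon
    push_neg at hcon
    choose W hWm hWp hWs hWsub using hcon
    have hptfin : ∀ x : X, {ξ : ι | x ∈ W ξ}.Finite := by
      intro x
      have hj : ∀ ξ : ι, x ∈ W ξ → ∃ j : ι, (e j).1 = ξ ∧ x ∈ u j := by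
        intro ξ hx
        obtain ⟨G, hG, hxG⟩ := hWsub ξ hx
        obtain ⟨j, hj1, rfl⟩ := hG
        exact ⟨j, hj1, hxG⟩
      haveI : Finite ↥{F : Set X | F ∈ 𝓕 ∧ x ∈ F} := (hpf x).to_subtype
      rw [← Set.finite_coe_iff]
      have hmap : ∀ p : ↥{ξ : ι | x ∈ W ξ},
          u (hj p.1 p.2).choose ∈ {F : Set X | F ∈ 𝓕 ∧ x ∈ F} := by
        intro p
        exact ⟨(huspec _).1.1, (hj p.1 p.2).choose_spec.2⟩
      refine Finite.of_injective
        (fun p : ↥{ξ : ι | x ∈ W ξ} =>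
          (⟨u (hj p.1 p.2).choose, hmap p⟩ : ↥{F : Set X | F ∈ 𝓕 ∧ x ∈ F})) ?_
      intro p q hpq
      have : (hj p.1 p.2).choose = (hj q.1 q.2).choose :=
        huinj (congrArg Subtype.val hpq)
      have hp1 : (e (hj p.1 p.2).choose).1 = p.1 := (hj p.1 p.2).choose_spec.1
      have hq1 : (e (hj q.1 q.2).choose).1 = q.1 := (hj q.1 q.2).choose_spec.1
      apply Subtype.ext
      rw [← hp1, ← hq1, this]
    have hcnt : Countable ι := lemC 𝓘 hDown hUnion hempty hccc W hWm hWp hptfin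
    have : Cardinal.mk ι ≤ Cardinal.aleph0 := Cardinal.mk_le_aleph0
    rw [hmkι] at this
    exact absurd this (not_le.2 Cardinal.aleph0_lt_continuum)
  obtain ⟨ξ, hξ⟩ := hgood
  refine ⟨u '' {j | (e j).1 = ξ}, ?_, ?_⟩
  · rintro G ⟨j, _, rfl⟩
    exact (huspec j).1.1
  intro B hm hp hs
  constructor
  · obtain ⟨α, hα⟩ := hgsurj ⟨B, hm, hp, hs⟩
    set j : ι := e0 (ξ, α) with hj
    have h1 : (e j).1 = ξ := by rw [hj, he, Equiv.symm_apply_apply]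
    have h2' : (e j).2 = α := by rw [hj, he, Equiv.symm_apply_apply]
    have hne : (u j ∩ B).Nonempty := by
      have := (huspec j).1.2
      rw [hBof] at this
      simpa [h2', hα] using this
    obtain ⟨x, hx1, hx2⟩ := hne
    exact ⟨x, ⟨u j, ⟨j, h1, rfl⟩, hx1⟩, hx2⟩
  · rw [Set.diff_nonempty]
    exact hξ B hm hp hs

theorem stmt_12 {X : Type} [TopologicalSpace X] [PolishSpace X] [Uncountable X]
    [MeasurableSpace X] [BorelSpace X]
    (𝓘 : Set (Set X))
    (hDown : ∀ A B : Set X, A ⊆ B → B ∈ 𝓘 → A ∈ 𝓘)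
    (hUnion : ∀ f : ℕ → Set X, (∀ n, f n ∈ 𝓘) → (⋃ n, f n) ∈ 𝓘)
    (hProper : (univ : Set X) ∉ 𝓘)
    (hSing : ∀ x : X, ({x} : Set X) ∈ 𝓘)
    (hBase : ∀ A ∈ 𝓘, ∃ B : Set X, A ⊆ B ∧ MeasurableSet B ∧ B ∈ 𝓘)
    (hccc : ∀ 𝒟 : Set (Set X), (∀ D ∈ 𝒟, MeasurableSet D ∧ D ∉ 𝓘) →
      𝒟.PairwiseDisjoint id → 𝒟.Countable)
    (𝓕 : Set (Set X)) (h𝓕 : 𝓕 ⊆ 𝓘)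
    (hpf : ∀ x : X, {F | F ∈ 𝓕 ∧ x ∈ F}.Finite)
    (E : Set X) (hEmeas : MeasurableSet E) (hEsub : ⋃₀ 𝓕 ⊆ E)
    (hEmin : ∀ C : Set X, MeasurableSet C → ⋃₀ 𝓕 ⊆ C → E \ C ∈ 𝓘)
    (h2 : ∀ B : Set X, MeasurableSet B → B ∉ 𝓘 → B ⊆ E →
      Cardinal.mk ↥{F | F ∈ 𝓕 ∧ (F ∩ B).Nonempty} = Cardinal.continuum) :
    ∃ 𝓕' ⊆ 𝓕, ∀ B : Set X, MeasurableSet B → B ∉ 𝓘 → B ⊆ E →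
      (⋃₀ 𝓕' ∩ B).Nonempty ∧ (B \ ⋃₀ 𝓕').Nonempty := by
  classical
  have hempty : (∅ : Set X) ∈ 𝓘 :=
    hDown ∅ {Classical.arbitrary X} (empty_subset _) (hSing _)
  by_cases hP : {B : Set X | MeasurableSet B ∧ B ∉ 𝓘 ∧ B ⊆ E}.Nonempty
  swap
  · refine ⟨∅, empty_subset _, fun B hm hp hs => absurd ⟨B, hm, hp, hs⟩ hP⟩
  have hPcard : Cardinal.mk ↥{B : Set X | MeasurableSet B ∧ B ∉ 𝓘 ∧ B ⊆ E}
      ≤ Cardinal.continuum := by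
    obtain ⟨b, hbc, hbgen⟩ :=
      (inferInstance : MeasurableSpace.CountablyGenerated X).isCountablyGenerated
    have h1 : Cardinal.mk ↥{t : Set X | @MeasurableSet X (MeasurableSpace.generateFrom b) t}
        ≤ Cardinal.continuum :=
      MeasurableSpace.cardinal_measurableSet_le_continuum
        (hbc.le_aleph0.trans Cardinal.aleph0_le_continuum)
    rw [← hbgen] at h1
    exact (Cardinal.mk_le_mk_of_subset (fun B hB => hB.1)).trans h1
  have hmkι : Cardinal.mk (Cardinal.continuum.ord.ToType) = Cardinal.continuum := by
    rw [Cardinal.mk_toType, Cardinal.card_ord]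
  have hsmall : ∀ j : Cardinal.continuum.ord.ToType,
      Cardinal.mk {j' : Cardinal.continuum.ord.ToType // j' < j} < Cardinal.continuum := by
    intro j
    have h1 := @Ordinal.card_typein Cardinal.continuum.ord.ToType (· < ·) isWellOrder_lt j
    have h2' := @Ordinal.typein_lt_type Cardinal.continuum.ord.ToType (· < ·) isWellOrder_lt j
    rw [Ordinal.type_toType] at h2'
    rw [← h1]
    exact Cardinal.lt_ord.1 h2'
  exact mainAux 𝓘 hDown hUnion hempty hccc 𝓕 hpf E h2 hmkι hsmall hP hPcard
end

section
/- Let (X, 𝓘) be a Polish ideal space with 𝓘 c.c.c. Assume a family 𝓕 ⊆ 𝓘 is point-finite (for every x ∈ X, the set {F ∈ 𝓕 : x ∈ F} is finite) and that for every 𝓘-positive Borel set B with B ⊆ [⋃𝓕]_𝓘, the family {F ∈ 𝓕 : F ∩ B ≠ ∅} has cardinality 2^ℵ₀. Then there exists a subfamily 𝓕₀ ⊆ 𝓕 such that: (1) [⋃𝓕₀]_𝓘 coincides with [⋃𝓕]_𝓘 modulo 𝓘; (2) for every 𝓘-positive Borel set B with B ⊆ ⋃𝓕₀, every subfamily 𝓐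 ⊆ 𝓕₀ with B ⊆ ⋃𝓐 has cardinality 2^ℵ₀. -/
open Set

namespace Stmt13

set_option linter.unusedSectionVars false

lemma sum_lt_continuum (κ : ℕ → Cardinal.{0}) (h : ∀ n, κ n < Cardinal.continuum) :
    Cardinal.sum κ < Cardinal.continuum := by
  have h2 := Cardinal.sum_lt_prod κ (fun _ => Cardinal.continuum) h
  rwa [Cardinal.prod_const', Cardinal.mk_nat, Cardinal.continuum_power_aleph0] at h2

lemma mk_iUnion_lt_continuum {α : Type} (s : ℕ → Set α)
    (h : ∀ n, Cardinal.mk ↥(s n) < Cardinal.continuum) :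
    Cardinal.mk ↥(⋃ n, s n) < Cardinal.continuum :=
  lt_of_le_of_lt Cardinal.mk_iUnion_le_sum_mk (sum_lt_continuum _ h)

variable {X : Type} [MeasurableSpace X] {𝓘 : Set (Set X)}

section Ideal

variable (hDown : ∀ A B : Set X, A ⊆ B → B ∈ 𝓘 → A ∈ 𝓘)
variable (hUnion : ∀ f : ℕ → Set X, (∀ n, f n ∈ 𝓘) → (⋃ n, f n) ∈ 𝓘)

include hDown hUnion in
lemma union_small {A B : Set X} (hA : A ∈ 𝓘) (hB : B ∈ 𝓘) : A ∪ B ∈ 𝓘 := by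
  have h : A ∪ B ⊆ ⋃ n : ℕ, (if n = 0 then A else B) := by
    intro x hx
    rcases hx with hx | hx
    · exact mem_iUnion.2 ⟨0, by simpa using hx⟩
    · exact mem_iUnion.2 ⟨1, by simpa using hx⟩
  exact hDown _ _ h (hUnion _ (fun n => by by_cases hn : n = 0 <;> simp [hn, hA, hB]))

end Ideal

section MDF

variable (hccc : ∀ 𝒟 : Set (Set X), (∀ D ∈ 𝒟, MeasurableSet D ∧ D ∉ 𝓘) →
      𝒟.PairwiseDisjoint id → 𝒟.Countable)

include hccc in
lemma exists_mdf (hemp : (∅ : Set X) ∈ 𝓘) (P : Set X → Prop)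
    (hPm : ∀ A, P A → MeasurableSet A) (hPp : ∀ A, P A → A ∉ 𝓘) :
    ∃ 𝒜 : Set (Set X), 𝒜.Countable ∧ (∀ A ∈ 𝒜, P A) ∧
      ∀ B, P B → ∃ A ∈ 𝒜, (B ∩ A).Nonempty := by
  classical
  set S : Set (Set (Set X)) := {𝒜 | (∀ A ∈ 𝒜, P A) ∧ 𝒜.PairwiseDisjoint id} with hS
  have hzorn : ∀ c ⊆ S, IsChain (· ⊆ ·) c → ∃ ub ∈ S, ∀ s ∈ c, s ⊆ ub := by
    intro c hcS hchain
    refine ⟨⋃₀ c, ⟨?_, ?_⟩, fun s hs => subset_sUnion_of_mem hs⟩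
    · rintro A ⟨𝒜, h𝒜c, hA𝒜⟩
      exact (hcS h𝒜c).1 A hA𝒜
    · rintro A ⟨𝒜₁, h1c, h1⟩ B ⟨𝒜₂, h2c, h2⟩ hAB
      rcases hchain.total h1c h2c with h | h
      · exact (hcS h2c).2 (h h1) h2 hAB
      · exact (hcS h1c).2 h1 (h h2) hAB
  obtain ⟨m, hm⟩ := zorn_subset S hzorn
  have hmS : m ∈ S := hm.1
  refine ⟨m, hccc m (fun D hD => ⟨hPm D (hmS.1 D hD), hPp D (hmS.1 D hD)⟩) hmS.2,
    hmS.1, ?_⟩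
  intro B hB
  by_contra hmeet
  push_neg at hmeet
  have hdisj : ∀ A ∈ m, Disjoint B A := by
    intro A hA
    exact Set.disjoint_iff_inter_eq_empty.mpr (hmeet A hA)
  have hins : insert B m ∈ S := by
    constructor
    · intro A hA
      rcases hA with rfl | hA
      · exact hB
      · exact hmS.1 A hA
    · exact hmS.2.insert (fun b hb _ => hdisj b hb)
  have hsub : insert B m ⊆ m := hm.2 hins (subset_insert _ _)
  have hBm : B ∈ m := hsub (mem_insert _ _)
  have : B = ∅ := by
    have := hdisj B hBm
    simpa [Set.disjoint_iff_inter_eq_empty, Set.inter_self] using this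
  exact hPp B hB (this ▸ hemp)

end MDF

section Package

variable (hDown : ∀ A B : Set X, A ⊆ B → B ∈ 𝓘 → A ∈ 𝓘)
variable (hccc : ∀ 𝒟 : Set (Set X), (∀ D ∈ 𝒟, MeasurableSet D ∧ D ∉ 𝓘) →
      𝒟.PairwiseDisjoint id → 𝒟.Countable)

include hDown hccc in
lemma exists_package (hemp : (∅ : Set X) ∈ 𝓘) (𝓖 : Set (Set X)) :
    ∃ T 𝓒, MeasurableSet T ∧ 𝓒 ⊆ 𝓖 ∧ Cardinal.mk ↥𝓒 < Cardinal.continuum ∧ T ⊆ ⋃₀ 𝓒 ∧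
      ∀ B : Set X, MeasurableSet B →
        (∃ 𝓓 ⊆ 𝓖, Cardinal.mk ↥𝓓 < Cardinal.continuum ∧ B ⊆ ⋃₀ 𝓓) → B \ T ∈ 𝓘 := by
  classical
  obtain ⟨𝒜, h𝒜c, h𝒜P, h𝒜max⟩ := exists_mdf hccc hemp
    (fun B => MeasurableSet B ∧ B ∉ 𝓘 ∧
      ∃ 𝓓 ⊆ 𝓖, Cardinal.mk ↥𝓓 < Cardinal.continuum ∧ B ⊆ ⋃₀ 𝓓)
    (fun A hA => hA.1) (fun A hA => hA.2.1)
  rcases 𝒜.eq_empty_or_nonempty with hE | hNE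
  · refine ⟨∅, ∅, MeasurableSet.empty, empty_subset _, ?_, by simp, ?_⟩
    · simpa using Cardinal.continuum_pos
    · intro B hBm hcov
      by_cases hB : B ∈ 𝓘
      · exact hDown _ _ diff_subset hB
      · obtain ⟨A, hA, _⟩ := h𝒜max B ⟨hBm, hB, hcov⟩
        rw [hE] at hA
        exact absurd hA (notMem_empty _)
  · obtain ⟨f, hf⟩ := h𝒜c.exists_eq_range hNE
    have hfP : ∀ n, MeasurableSet (f n) ∧ f n ∉ 𝓘 ∧
        ∃ 𝓓 ⊆ 𝓖, Cardinal.mk ↥𝓓 < Cardinal.continuum ∧ f n ⊆ ⋃₀ 𝓓 :=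
      fun n => h𝒜P (f n) (by rw [hf]; exact mem_range_self n)
    choose 𝓓 h𝓓sub h𝓓card h𝓓cov using fun n => (hfP n).2.2
    refine ⟨⋃ n, f n, ⋃ n, 𝓓 n, MeasurableSet.iUnion (fun n => (hfP n).1),
      iUnion_subset (fun n => h𝓓sub n), mk_iUnion_lt_continuum _ h𝓓card, ?_, ?_⟩
    · intro x hx
      obtain ⟨n, hn⟩ := mem_iUnion.mp hx
      obtain ⟨D, hD, hxD⟩ := h𝓓cov n hn
      exact ⟨D, mem_iUnion.mpr ⟨n, hD⟩, hxD⟩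
    · intro B hBm hcov
      by_contra hpos
      obtain ⟨A, hA, hne⟩ := h𝒜max (B \ ⋃ n, f n)
        ⟨hBm.diff (MeasurableSet.iUnion (fun n => (hfP n).1)), hpos, by
          obtain ⟨𝓓', h1, h2, h3⟩ := hcov
          exact ⟨𝓓', h1, h2, diff_subset.trans h3⟩⟩
      rw [hf] at hA
      obtain ⟨n, rfl⟩ := hA
      obtain ⟨y, hy1, hy2⟩ := hne
      exact hy1.2 (mem_iUnion.mpr ⟨n, hy2⟩)

end Package

section Main

variable (hDown : ∀ A B : Set X, A ⊆ B → B ∈ 𝓘 → A ∈ 𝓘)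
variable (hUnion : ∀ f : ℕ → Set X, (∀ n, f n ∈ 𝓘) → (⋃ n, f n) ∈ 𝓘)
variable (hccc : ∀ 𝒟 : Set (Set X), (∀ D ∈ 𝒟, MeasurableSet D ∧ D ∉ 𝓘) →
      𝒟.PairwiseDisjoint id → 𝒟.Countable)

include hDown hUnion hccc in
lemma main_removal
    (hBase : ∀ A ∈ 𝓘, ∃ B : Set X, A ⊆ B ∧ MeasurableSet B ∧ B ∈ 𝓘)
    (hemp : (∅ : Set X) ∈ 𝓘)
    (𝓕 : Set (Set X))
    (hpf : ∀ x : X, {F | F ∈ 𝓕 ∧ x ∈ F}.Finite) :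
    ∃ 𝓡, 𝓡 ⊆ 𝓕 ∧ Cardinal.mk ↥𝓡 < Cardinal.continuum ∧
      ∀ B : Set X, MeasurableSet B → B ∉ 𝓘 →
        ∀ 𝓒, 𝓒 ⊆ 𝓕 \ 𝓡 → Cardinal.mk ↥𝓒 < Cardinal.continuum → ¬ B ⊆ ⋃₀ 𝓒 := by
  classical
  -- the "territory" packages
  choose TT CC hTm hCsub hCcard hTcov habs using
    fun 𝓡 : Set (Set X) => exists_package hDown hccc hemp (𝓕 \ 𝓡)
  -- monotonicity of territories
  have hmono : ∀ 𝓡 𝓡' : Set (Set X), 𝓡 ⊆ 𝓡' → TT 𝓡' \ TT 𝓡 ∈ 𝓘 := by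
    intro 𝓡 𝓡' h
    exact habs 𝓡 (TT 𝓡') (hTm 𝓡')
      ⟨CC 𝓡', (hCsub 𝓡').trans (diff_subset_diff_right h), hCcard 𝓡', hTcov 𝓡'⟩
  -- maximal disjoint family of "drops"
  obtain ⟨𝔇, h𝔇c, h𝔇P, h𝔇max⟩ := exists_mdf hccc hemp
    (fun G => MeasurableSet G ∧ G ∉ 𝓘 ∧
      ∃ 𝓡, 𝓡 ⊆ 𝓕 ∧ Cardinal.mk ↥𝓡 < Cardinal.continuum ∧ G ∩ TT 𝓡 ∈ 𝓘)
    (fun A hA => hA.1) (fun A hA => hA.2.1)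
  -- witness function for drops
  have wex : ∀ G : Set X, ∃ 𝓡, 𝓡 ⊆ 𝓕 ∧ Cardinal.mk ↥𝓡 < Cardinal.continuum ∧
      ((MeasurableSet G ∧ G ∉ 𝓘 ∧
        ∃ 𝓡', 𝓡' ⊆ 𝓕 ∧ Cardinal.mk ↥𝓡' < Cardinal.continuum ∧ G ∩ TT 𝓡' ∈ 𝓘) →
        G ∩ TT 𝓡 ∈ 𝓘) := by
    intro G
    by_cases h : MeasurableSet G ∧ G ∉ 𝓘 ∧
        ∃ 𝓡', 𝓡' ⊆ 𝓕 ∧ Cardinal.mk ↥𝓡' < Cardinal.continuum ∧ G ∩ TT 𝓡' ∈ 𝓘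
    · obtain ⟨𝓡, h1, h2, h3⟩ := h.2.2
      exact ⟨𝓡, h1, h2, fun _ => h3⟩
    · exact ⟨∅, empty_subset _, by simpa using Cardinal.continuum_pos, fun hh => absurd hh h⟩
  choose w hw1 hw2 hw3 using wex
  -- enumeration of 𝔇
  have hgex : ∃ g : ℕ → Set X, (∀ D ∈ 𝔇, ∃ n, g n = D) ∧ ∀ n, g n ∈ 𝔇 ∨ g n = ∅ := by
    rcases 𝔇.eq_empty_or_nonempty with hE | hNE
    · exact ⟨fun _ => ∅, fun D hD => by rw [hE] at hD; exact absurd hD (notMem_empty _),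
        fun n => Or.inr rfl⟩
    · obtain ⟨f, hf⟩ := h𝔇c.exists_eq_range hNE
      exact ⟨f, fun D hD => by rw [hf] at hD; exact hD,
        fun n => Or.inl (by rw [hf]; exact mem_range_self n)⟩
  obtain ⟨g, hg1, hg2⟩ := hgex
  set 𝓡inf : Set (Set X) := ⋃ n, w (g n) with h𝓡inf
  have h𝓡infsub : 𝓡inf ⊆ 𝓕 := iUnion_subset fun n => hw1 _
  have h𝓡infcard : Cardinal.mk ↥𝓡inf < Cardinal.continuum :=
    mk_iUnion_lt_continuum _ (fun n => hw2 _)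
  -- stabilization of the territory
  have hstab : ∀ 𝓡' : Set (Set X), 𝓡inf ⊆ 𝓡' → 𝓡' ⊆ 𝓕 →
      Cardinal.mk ↥𝓡' < Cardinal.continuum → TT 𝓡inf \ TT 𝓡' ∈ 𝓘 := by
    intro 𝓡' hsub hsubF hcard
    by_contra hGpos
    set G := TT 𝓡inf \ TT 𝓡' with hGdef
    have hGmeas : MeasurableSet G := (hTm _).diff (hTm _)
    have hGD : ∀ D ∈ 𝔇, G ∩ D ∈ 𝓘 := by
      intro D hD
      have hwD : w D ⊆ 𝓡inf := by
        obtain ⟨n, hn⟩ := hg1 D hD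
        rw [← hn]
        exact subset_iUnion (fun m => w (g m)) n
      have h1 : TT 𝓡inf \ TT (w D) ∈ 𝓘 := hmono (w D) 𝓡inf hwD
      have h2 : D ∩ TT (w D) ∈ 𝓘 := hw3 D (h𝔇P D hD)
      refine hDown _ ((TT 𝓡inf \ TT (w D)) ∪ (D ∩ TT (w D))) ?_
        (union_small hDown hUnion h1 h2)
      intro x hx
      by_cases hxT : x ∈ TT (w D)
      · exact Or.inr ⟨hx.2, hxT⟩
      · exact Or.inl ⟨hx.1.1, hxT⟩
    have hNex : ∀ n : ℕ, ∃ N : Set X, (G ∩ g n) ⊆ N ∧ MeasurableSet N ∧ N ∈ 𝓘 := by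
      intro n
      rcases hg2 n with h | h
      · exact hBase _ (hGD _ h)
      · exact ⟨∅, by simp [h], MeasurableSet.empty, hemp⟩
    choose N hN1 hN2 hN3 using hNex
    set G' := G \ ⋃ n, N n with hG'def
    have hG'pos : G' ∉ 𝓘 := by
      intro h
      apply hGpos
      refine hDown _ (G' ∪ ⋃ n, N n) ?_ (union_small hDown hUnion h (hUnion _ hN3))
      intro x hx
      by_cases hxN : x ∈ ⋃ n, N n
      · exact Or.inr hxN
      · exact Or.inl ⟨hx, hxN⟩
    obtain ⟨D, hD, hne⟩ := h𝔇max G'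
      ⟨hGmeas.diff (MeasurableSet.iUnion hN2), hG'pos, 𝓡', hsubF, hcard, by
        refine hDown _ ∅ ?_ hemp
        rintro x ⟨hx1, hx2⟩
        exact absurd hx2 hx1.1.2⟩
    obtain ⟨n, hgn⟩ := hg1 D hD
    obtain ⟨y, hy1, hy2⟩ := hne
    have hyG : y ∈ G ∩ g n := ⟨hy1.1, by rw [hgn]; exact hy2⟩
    exact hy1.2 (mem_iUnion.mpr ⟨n, hN1 n hyG⟩)
  -- main contradiction
  by_contra hcon
  push_neg at hcon
  obtain ⟨B₀, hB₀m, hB₀p, 𝓒₀, hC01, hC02, hC03⟩ := hcon 𝓡inf h𝓡infsub h𝓡infcard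
  have hTpos : TT 𝓡inf ∉ 𝓘 := by
    intro h
    have habs0 : B₀ \ TT 𝓡inf ∈ 𝓘 := habs 𝓡inf B₀ hB₀m ⟨𝓒₀, hC01, hC02, hC03⟩
    apply hB₀p
    refine hDown _ ((B₀ \ TT 𝓡inf) ∪ TT 𝓡inf) ?_ (union_small hDown hUnion habs0 h)
    intro x hx
    by_cases hxT : x ∈ TT 𝓡inf
    · exact Or.inr hxT
    · exact Or.inl ⟨hx, hxT⟩
  let S : ℕ → Set (Set X) := fun k => Nat.rec 𝓡inf (fun _ Sk => Sk ∪ CC Sk) k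
  have hS0 : S 0 = 𝓡inf := rfl
  have hSsucc : ∀ k, S (k+1) = S k ∪ CC (S k) := fun k => rfl
  have hSsub : ∀ k, S k ⊆ 𝓕 := by
    intro k
    induction k with
    | zero => exact h𝓡infsub
    | succ k ih =>
      rw [hSsucc]
      exact union_subset ih ((hCsub (S k)).trans diff_subset)
  have hScard : ∀ k, Cardinal.mk ↥(S k) < Cardinal.continuum := by
    intro k
    induction k with
    | zero => exact h𝓡infcard
    | succ k ih =>
      rw [hSsucc]
      exact lt_of_le_of_lt (Cardinal.mk_union_le _ _)
        (Cardinal.add_lt_of_lt Cardinal.aleph0_le_continuum ih (hCcard _))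
  have hSmono : ∀ j k, j ≤ k → S j ⊆ S k := by
    intro j k hjk
    induction hjk with
    | refl => exact subset_rfl
    | step _ ih =>
      rename_i m _
      exact ih.trans (by rw [hSsucc m]; exact subset_union_left)
  have hsmallk : ∀ k, TT 𝓡inf \ TT (S k) ∈ 𝓘 := fun k =>
    hstab (S k) (hS0 ▸ hSmono 0 k (Nat.zero_le k)) (hSsub k) (hScard k)
  set Z := TT 𝓡inf \ ⋃ k, (TT 𝓡inf \ TT (S k)) with hZdef
  have hZpos : Z ∉ 𝓘 := by
    intro h
    apply hTpos
    refine hDown _ (Z ∪ ⋃ k, (TT 𝓡inf \ TT (S k))) ?_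
      (union_small hDown hUnion h (hUnion _ hsmallk))
    intro x hx
    by_cases hxU : x ∈ ⋃ k, (TT 𝓡inf \ TT (S k))
    · exact Or.inr hxU
    · exact Or.inl ⟨hx, hxU⟩
  have hZne : Z.Nonempty := nonempty_iff_ne_empty.mpr (fun h => hZpos (h ▸ hemp))
  obtain ⟨z, hz⟩ := hZne
  have hzT : ∀ k, z ∈ TT (S k) := by
    intro k
    by_contra hzk
    exact hz.2 (mem_iUnion.mpr ⟨k, hz.1, hzk⟩)
  have hzC : ∀ k, ∃ F, F ∈ CC (S k) ∧ z ∈ F := by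
    intro k
    obtain ⟨F, hF1, hF2⟩ := mem_sUnion.mp ((hTcov (S k)) (hzT k))
    exact ⟨F, hF1, hF2⟩
  choose Fz hFz1 hFz2 using hzC
  have hFzmem : ∀ k, Fz k ∈ {F | F ∈ 𝓕 ∧ z ∈ F} := fun k =>
    ⟨(hCsub (S k) (hFz1 k)).1, hFz2 k⟩
  have hkey : ∀ j k, j < k → Fz j ≠ Fz k := by
    intro j k hjk heq
    have h1 : Fz j ∈ S k := hSmono (j+1) k hjk (by
      rw [hSsucc j]
      exact Or.inr (hFz1 j))
    have h2 : Fz k ∉ S k := (hCsub (S k) (hFz1 k)).2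
    rw [heq] at h1
    exact h2 h1
  have hinj : Function.Injective Fz := by
    intro a b hab
    by_contra hne'
    rcases lt_or_gt_of_ne hne' with h | h
    · exact hkey a b h hab
    · exact hkey b a h hab.symm
  exact (hpf z).not_infinite (Set.infinite_of_injective_forall_mem hinj hFzmem)

end Main

end Stmt13

theorem stmt_13 {X : Type} [TopologicalSpace X] [PolishSpace X] [Uncountable X]
    [MeasurableSpace X] [BorelSpace X]
    (𝓘 : Set (Set X))
    (hDown : ∀ A B : Set X, A ⊆ B → B ∈ 𝓘 → A ∈ 𝓘)
    (hUnion : ∀ f : ℕ → Set X, (∀ n, f n ∈ 𝓘) → (⋃ n, f n) ∈ 𝓘)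
    (hProper : (univ : Set X) ∉ 𝓘)
    (hSing : ∀ x : X, ({x} : Set X) ∈ 𝓘)
    (hBase : ∀ A ∈ 𝓘, ∃ B : Set X, A ⊆ B ∧ MeasurableSet B ∧ B ∈ 𝓘)
    (hccc : ∀ 𝒟 : Set (Set X), (∀ D ∈ 𝒟, MeasurableSet D ∧ D ∉ 𝓘) →
      𝒟.PairwiseDisjoint id → 𝒟.Countable)
    (𝓕 : Set (Set X)) (h𝓕 : 𝓕 ⊆ 𝓘)
    (hpf : ∀ x : X, {F | F ∈ 𝓕 ∧ x ∈ F}.Finite)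
    (E : Set X) (hEmeas : MeasurableSet E) (hEsub : ⋃₀ 𝓕 ⊆ E)
    (hEmin : ∀ C : Set X, MeasurableSet C → ⋃₀ 𝓕 ⊆ C → E \ C ∈ 𝓘)
    (h2 : ∀ B : Set X, MeasurableSet B → B ∉ 𝓘 → B ⊆ E →
      Cardinal.mk ↥{F | F ∈ 𝓕 ∧ (F ∩ B).Nonempty} = Cardinal.continuum) :
    ∃ 𝓕₀ ⊆ 𝓕,
      (∃ E₀ : Set X, MeasurableSet E₀ ∧ ⋃₀ 𝓕₀ ⊆ E₀ ∧
        (∀ C : Set X, MeasurableSet C → ⋃₀ 𝓕₀ ⊆ C → E₀ \ C ∈ 𝓘) ∧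
        symmDiff E₀ E ∈ 𝓘) ∧
      (∀ B : Set X, MeasurableSet B → B ∉ 𝓘 → B ⊆ ⋃₀ 𝓕₀ →
        ∀ 𝓐 ⊆ 𝓕₀, B ⊆ ⋃₀ 𝓐 → Cardinal.mk ↥𝓐 = Cardinal.continuum) := by
  classical
  have hemp : (∅ : Set X) ∈ 𝓘 := by
    obtain ⟨x₀⟩ := (inferInstance : Nonempty X)
    exact hDown ∅ {x₀} (empty_subset _) (hSing x₀)
  obtain ⟨𝓡, h𝓡sub, h𝓡card, h𝓡main⟩ :=
    Stmt13.main_removal hDown hUnion hccc hBase hemp 𝓕 hpf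
  refine ⟨𝓕 \ 𝓡, diff_subset, ⟨E, hEmeas, ?_, ?_, ?_⟩, ?_⟩
  · intro x hx
    obtain ⟨F, hF, hxF⟩ := hx
    exact hEsub ⟨F, hF.1, hxF⟩
  · intro C hC hCsub
    by_contra hD
    have h2D := h2 (E \ C) (hEmeas.diff hC) hD diff_subset
    have hsubR : {F | F ∈ 𝓕 ∧ (F ∩ (E \ C)).Nonempty} ⊆ 𝓡 := by
      intro F hF
      by_contra hFR
      obtain ⟨y, hyF, hyD⟩ := hF.2
      exact hyD.2 (hCsub ⟨F, ⟨hF.1, hFR⟩, hyF⟩)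
    have hlt := (Cardinal.mk_le_mk_of_subset hsubR).trans_lt h𝓡card
    rw [h2D] at hlt
    exact lt_irrefl _ hlt
  · rw [symmDiff_self]
    simpa using hemp
  · intro B hBm hBp hBsub 𝓐 h𝓐 hcov
    have hge : ¬ Cardinal.mk ↥𝓐 < Cardinal.continuum := fun hlt =>
      h𝓡main B hBm hBp 𝓐 h𝓐 hlt hcov
    have hXle : Cardinal.mk X ≤ Cardinal.continuum := by
      obtain ⟨f, hf⟩ := MeasureTheory.exists_measurableEmbedding_real X
      calc Cardinal.mk X ≤ Cardinal.mk ℝ := Cardinal.mk_le_of_injective hf.injective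
        _ = Cardinal.continuum := Cardinal.mk_real
    have hsub2 : 𝓐 ⊆ insert ∅ (⋃ x : X, {F | F ∈ 𝓕 ∧ x ∈ F}) := by
      intro F hF
      rcases F.eq_empty_or_nonempty with rfl | ⟨x, hx⟩
      · exact mem_insert _ _
      · exact mem_insert_of_mem _ (mem_iUnion.mpr ⟨x, (h𝓐 hF).1, hx⟩)
    have hle : Cardinal.mk ↥𝓐 ≤ Cardinal.continuum := by
      calc Cardinal.mk ↥𝓐
          ≤ Cardinal.mk ↥(insert (∅ : Set X) (⋃ x : X, {F | F ∈ 𝓕 ∧ x ∈ F})) :=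
            Cardinal.mk_le_mk_of_subset hsub2
        _ ≤ Cardinal.mk ↥(⋃ x : X, {F | F ∈ 𝓕 ∧ x ∈ F}) + 1 := Cardinal.mk_insert_le
        _ ≤ Cardinal.sum (fun x : X => Cardinal.mk ↥{F | F ∈ 𝓕 ∧ x ∈ F}) + 1 :=
            add_le_add_left Cardinal.mk_iUnion_le_sum_mk 1
        _ ≤ Cardinal.sum (fun _ : X => Cardinal.aleph0) + 1 := by
            refine add_le_add_left (Cardinal.sum_le_sum _ _ (fun x => ?_)) 1
            have : Countable ↥{F | F ∈ 𝓕 ∧ x ∈ F} := (hpf x).countable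
            exact Cardinal.mk_le_aleph0
        _ = Cardinal.mk X * Cardinal.aleph0 + 1 := by rw [Cardinal.sum_const']
        _ ≤ Cardinal.continuum * Cardinal.aleph0 + 1 :=
            add_le_add_left (mul_le_mul_left hXle _) 1
        _ = Cardinal.continuum + 1 := by rw [Cardinal.continuum_mul_aleph0]
        _ = Cardinal.continuum := by
            exact Cardinal.add_one_eq Cardinal.aleph0_le_continuum
    exact le_antisymm hle (not_lt.mp hge)
end
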